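/- arXiv:2107.08809 — 9 statements merged into one kernel-verified Lean document; each statement's English description precedes it below -/
import Mathlib

section
/- Let f : ℝ^d → ℝ be differentiable such that for all x, y ∈ ℝ^d: f(y) ≤ f(x) + ∇f(x)ᵀ(y−x) + (L/2)‖x−y‖², f(y) ≥ f(x) + ∇f(x)ᵀ(y−x) + (1/(2L))‖∇f(x) − ∇f(y)‖², and f(y) ≥ f(x) + ∇f(x)ᵀ(y−x) + (μ/2)‖x−y‖², where L ≥ μ ≥ 0 and L > 0. Let η > 0 with 1/η ≥ L, let ρ > 0, fix x_s, λ, x⁰ ∈ ℝ^d, and set x¹ = x⁰ − (1/(1/η + ρ))·[∇f(x⁰) + ρ(x⁰ − x_s) + λ]. Then for every x ∈ ℝ^d and every θ ∈ [0,1]: f(x) − f(x¹) ≥ (x − x¹)ᵀ[ρ(x_s − x¹) − λ] + (1/(2η))‖x − x¹‖² − ((1/η − θμ)/2)‖x⁰ − x‖² + ((1/η − L)/2)‖x¹ − x⁰‖² + ((1−θ)/(2L))‖∇f(x⁰) − ∇f(x)‖². -/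
open scoped RealInnerProductSpace

/-- Lemma 1 of the paper: one-step inequality for one GPDMM inner gradient step. -/
theorem gpdmm_one_step_inequality {d : ℕ}
    (f : EuclideanSpace ℝ (Fin d) → ℝ)
    (f' : EuclideanSpace ℝ (Fin d) → EuclideanSpace ℝ (Fin d))
    (L μ : ℝ) (hL : 0 < L) (hμ : 0 ≤ μ) (hμL : μ ≤ L)
    (hdiff : ∀ x, HasGradientAt f (f' x) x)
    (hdescent : ∀ x y, f y ≤ f x + ⟪f' x, y - x⟫ + L / 2 * ‖x - y‖ ^ 2)
    (hcoco : ∀ x y, f y ≥ f x + ⟪f' x, y - x⟫ + 1 / (2 * L) * ‖f' x - f' y‖ ^ 2)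
    (hstrong : ∀ x y, f y ≥ f x + ⟪f' x, y - x⟫ + μ / 2 * ‖x - y‖ ^ 2)
    (η ρ : ℝ) (hη : 0 < η) (hηL : 1 / η ≥ L) (hρ : 0 < ρ)
    (xs lam x0 x1 : EuclideanSpace ℝ (Fin d))
    (hx1 : x1 = x0 - (1 / (1 / η + ρ)) • (f' x0 + ρ • (x0 - xs) + lam)) :
    ∀ x : EuclideanSpace ℝ (Fin d), ∀ θ ∈ Set.Icc (0 : ℝ) 1,
      f x - f x1 ≥
        ⟪x - x1, ρ • (xs - x1) - lam⟫ + 1 / (2 * η) * ‖x - x1‖ ^ 2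
          - (1 / η - θ * μ) / 2 * ‖x0 - x‖ ^ 2
          + (1 / η - L) / 2 * ‖x1 - x0‖ ^ 2
          + (1 - θ) / (2 * L) * ‖f' x0 - f' x‖ ^ 2 := by
  intro x θ hθ
  obtain ⟨hθ0, hθ1⟩ := hθ
  have hsum : (0:ℝ) < 1/η + ρ := by positivity
  -- the update rule, cleared of the denominator
  have h0 : (1/η + ρ) • (x0 - x1) = f' x0 + ρ • (x0 - xs) + lam := by
    rw [hx1, show x0 - (x0 - (1 / (1 / η + ρ)) • (f' x0 + ρ • (x0 - xs) + lam))
        = (1 / (1 / η + ρ)) • (f' x0 + ρ • (x0 - xs) + lam) from by abel,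
      smul_smul, mul_one_div, div_self hsum.ne', one_smul]
  have hg : f' x0 = (1/η) • (x0 - x1) + ρ • (xs - x1) - lam := by
    have h1 : f' x0 = (1/η + ρ) • (x0 - x1) - ρ • (x0 - xs) - lam := by
      rw [h0]; abel
    rw [h1]; module
  -- inner product expansions
  have e1 : ⟪f' x0, x - x1⟫
      = (1/η) * ⟪x0 - x1, x - x1⟫ + ⟪x - x1, ρ • (xs - x1) - lam⟫ := by
    have eP : ⟪x - x1, ρ • (xs - x1) - lam⟫ = ⟪ρ • (xs - x1) - lam, x - x1⟫ :=
      real_inner_comm _ _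
    rw [hg, eP, inner_sub_left, inner_add_left, real_inner_smul_left, inner_sub_left,
      inner_sub_left]
    ring
  have e2 : ‖x0 - x‖^2 = ‖x0 - x1‖^2 - 2 * ⟪x0 - x1, x - x1⟫ + ‖x - x1‖^2 := by
    have h := norm_sub_sq_real (x0 - x1) (x - x1)
    rw [show (x0 - x1) - (x - x1) = x0 - x from by abel] at h
    exact h
  have e3 : ⟪f' x0, x - x0⟫ = ⟪f' x0, x - x1⟫ + ⟪f' x0, x1 - x0⟫ := by
    rw [← inner_add_right, show (x - x1) + (x1 - x0) = x - x0 from by abel]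
  have e4 : ‖x1 - x0‖ = ‖x0 - x1‖ := norm_sub_rev _ _
  have e5 : 1/(2*η) = (1/η)/2 := by
    rw [div_div, mul_comm]
  have hd := hdescent x0 x1
  have hs := hstrong x0 x
  have hc := hcoco x0 x
  have hint1 : θ * ((f x - f x0 - ⟪f' x0, x - x0⟫) - μ / 2 * ‖x0 - x‖^2) ≥ 0 :=
    mul_nonneg hθ0 (by linarith)
  have hint2 : (1 - θ) * ((f x - f x0 - ⟪f' x0, x - x0⟫)
      - 1 / (2 * L) * ‖f' x0 - f' x‖^2) ≥ 0 :=
    mul_nonneg (by linarith) (by linarith)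
  have e2η : 1/η * ‖x0 - x‖^2
      = 1/η * ‖x0 - x1‖^2 - 1/η * (2 * ⟪x0 - x1, x - x1⟫) + 1/η * ‖x - x1‖^2 := by
    rw [e2]; ring
  rw [e4, e5, div_eq_mul_one_div (1-θ) (2*L)]
  generalize 1/(2*L) = K at hint2 ⊢
  linarith [hint1, hint2, hd, e1, e2η, e3]
end

section
/- Suppose that, at outer iteration r, the GPDMM iterates x_i^{r,k} (k = 0,…,K), x̄_i^{r,K}, λ_{i|s}^{r+1}, x_s^{r+1}, λ_{s|i}^{r+1}, and at outer iteration r+1 the iterates x_i^{r+1,k}, x̄_i^{r+1,K}, λ_{i|s}^{r+2} are generated by the GPDMM update equations, with 1/η ≥ L. Let (x*, {λ*_{i|s}}) be a KKT point. Then for every θ ∈ [0,1]: ∑_{i=1}^m (1/K)∑_{k=0}^{K−1} ((1/η − θμ)/2)‖x_i^{r,k} − x*‖² + ∑_{i=1}^m (1/(4ρ))‖ρ(x̄_i^{r,K} − x*) + (λ_{i|s}^{r+1} − λ*_{i|s})‖² ≥ ∑_{i=1}^m [ f_i(x̄_i^{r,K}) − (x̄_i^{r,K})ᵀλ*_{i|s}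 − f_i(x*) + (1/K)∑_{k=0}^{K−1} ( (1/(2η))‖x* − x_i^{r,k+1}‖² + ((1/η − L)/2)‖x_i^{r,k+1} − x_i^{r,k}‖² + ((1−θ)/(2L))‖ρ(x_s^r − x_i^{r,k+1}) − λ_{s|i}^r − λ*_{i|s} − (1/η)(x_i^{r,k+1} − x_i^{r,k})‖² ) + (1/(4ρ))‖ρ(x̄_i^{r+1,K} − x*) + (λ_{i|s}^{r+2} − λ*_{i|s})‖² ]. -/
open scoped RealInnerProductSpace

section Aux
variable {E : Type*} [NormedAddCommGroup E] [InnerProductSpace ℝ E]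

private lemma gpdmm_step_ineq (L μ η ρ θ : ℝ) (hη : 0 < η)
    (hθ0 : 0 ≤ θ) (hθ1 : θ ≤ 1)
    (fa fb fs : ℝ) (g gs a b s xs lam : E)
    (hupd : g = ρ • (xs - b) - lam - (1/η) • (b - a))
    (h1 : fs ≥ fa + ⟪g, s - a⟫ + μ/2 * ‖a - s‖^2)
    (h2 : fs ≥ fa + ⟪g, s - a⟫ + 1/(2*L) * ‖g - gs‖^2)
    (h3 : fb ≤ fa + ⟪g, b - a⟫ + L/2 * ‖a - b‖^2) :
    (1/η - θ*μ)/2 * ‖a - s‖^2 ≥ fb - fs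
      + (1/(2*η) * ‖s - b‖^2 + (1/η - L)/2 * ‖b - a‖^2
         + (1-θ)/(2*L) * ‖ρ • (xs - b) - lam - gs - (1/η) • (b - a)‖^2)
      + ⟪ρ • (b - xs) + lam, b - s⟫ := by
  have hW : ρ • (xs - b) - lam - gs - (1/η) • (b - a) = g - gs := by rw [hupd]; abel
  rw [hW]
  have hexp : ‖a - s‖^2 = ‖a - b‖^2 + 2*⟪a - b, b - s⟫ + ‖b - s‖^2 := by
    rw [← norm_add_sq_real]; congr 1; abel
  have hid : ⟪g, b - s⟫ + ⟪ρ • (b - xs) + lam, b - s⟫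
      = -(1/η) * ⟪b - a, b - s⟫ := by
    rw [hupd]
    simp only [inner_sub_left, inner_add_left, real_inner_smul_left]
    ring
  have hab : ⟪a - b, b - s⟫ = -⟪b - a, b - s⟫ := by
    rw [← inner_neg_left]; congr 1; abel
  have hid2 : ⟪g, b - s⟫ + ⟪ρ • (b - xs) + lam, b - s⟫
      = 1/(2*η) * ‖a - s‖^2 - 1/(2*η) * ‖b - s‖^2 - 1/(2*η) * ‖a - b‖^2 := by
    rw [hid]
    have h5 : ⟪b - a, b - s⟫ = (‖a - b‖^2 + ‖b - s‖^2 - ‖a - s‖^2)/2 := by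
      linarith [hexp, hab]
    rw [h5]; field_simp; ring
  rw [norm_sub_rev s b, norm_sub_rev b a]
  have hlin : ⟪g, b - s⟫ = ⟪g, b - a⟫ - ⟪g, s - a⟫ := by
    rw [← inner_sub_right]; congr 1; abel
  have hA : 0 ≤ θ * (fs - fa - ⟪g, s - a⟫ - μ/2 * ‖a - s‖^2) :=
    mul_nonneg hθ0 (by linarith)
  have hB : 0 ≤ (1-θ) * (fs - fa - ⟪g, s - a⟫ - 1/(2*L) * ‖g - gs‖^2) :=
    mul_nonneg (by linarith) (by linarith)
  ring_nf at hA hB h3 hid2 hlin ⊢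
  linarith [hA, hB, h3, hid2, hlin]

private lemma gpdmm_jensen_aux (K : ℕ) (c : E) (x : ℕ → E) (xb : E)
    (hS : ∑ k ∈ Finset.range K, x k = (K : ℝ) • xb) :
    ∑ k ∈ Finset.range K, ⟪c, x k - xb⟫ = 0 := by
  rw [← inner_sum]
  have h0 : ∑ k ∈ Finset.range K, (x k - xb) = 0 := by
    rw [Finset.sum_sub_distrib, hS, Finset.sum_const, Finset.card_range,
      Nat.cast_smul_eq_nsmul, sub_self]
  rw [h0, inner_zero_right]

private lemma gpdmm_fjensen (K : ℕ) (x : ℕ → E) (xb g : E) (F : E → ℝ)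
    (h : ∀ y, F xb + ⟪g, y - xb⟫ ≤ F y)
    (hS : ∑ k ∈ Finset.range K, x k = (K : ℝ) • xb) :
    (K : ℝ) * F xb ≤ ∑ k ∈ Finset.range K, F (x k) := by
  calc (K : ℝ) * F xb
      = ∑ k ∈ Finset.range K, (F xb + ⟪g, x k - xb⟫) := by
        rw [Finset.sum_add_distrib, gpdmm_jensen_aux K g x xb hS, Finset.sum_const,
          Finset.card_range, add_zero, nsmul_eq_mul]
    _ ≤ ∑ k ∈ Finset.range K, F (x k) := Finset.sum_le_sum fun k _ => h (x k)

private lemma gpdmm_pjensen (ρ : ℝ) (hρ : 0 ≤ ρ) (K : ℕ) (x : ℕ → E) (xb xs s lam : E)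
    (hS : ∑ k ∈ Finset.range K, x k = (K : ℝ) • xb) :
    (K : ℝ) * ⟪ρ • (xb - xs) + lam, xb - s⟫
      ≤ ∑ k ∈ Finset.range K, ⟪ρ • (x k - xs) + lam, x k - s⟫ := by
  refine gpdmm_fjensen K x xb (ρ • (xb - xs) + lam + ρ • (xb - s))
    (fun y => ⟪ρ • (y - xs) + lam, y - s⟫) (fun y => ?_) hS
  have hident : ⟪ρ • (y - xs) + lam, y - s⟫ - ⟪ρ • (xb - xs) + lam, xb - s⟫
      - ⟪ρ • (xb - xs) + lam + ρ • (xb - s), y - xb⟫ = ρ * ‖y - xb‖ ^ 2 := by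
    simp only [← real_inner_self_eq_norm_sq, inner_add_left, inner_sub_left, inner_sub_right,
      inner_add_right, real_inner_smul_left, real_inner_smul_right]
    simp only [real_inner_comm]
    ring
  nlinarith [mul_nonneg hρ (sq_nonneg ‖y - xb‖), hident]

end Aux
set_option maxHeartbeats 1000000

/-- Lemma 2 of the paper: the key inequality for the GPDMM iterates at two consecutive
outer iterations `r` and `r+1`. -/
theorem gpdmm_lemma2 {d m K : ℕ} (hm : 0 < m) (hK : 1 ≤ K)
    (f : Fin m → EuclideanSpace ℝ (Fin d) → ℝ)
    (f' : Fin m → EuclideanSpace ℝ (Fin d) → EuclideanSpace ℝ (Fin d))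
    (L μ : ℝ) (hL : 0 < L) (hμ : 0 ≤ μ) (hμL : μ ≤ L)
    (hdiff : ∀ i x, HasGradientAt (f i) (f' i x) x)
    (hdescent : ∀ i x y, f i y ≤ f i x + ⟪f' i x, y - x⟫ + L / 2 * ‖x - y‖ ^ 2)
    (hcoco : ∀ i x y, f i y ≥ f i x + ⟪f' i x, y - x⟫ + 1 / (2 * L) * ‖f' i x - f' i y‖ ^ 2)
    (hstrong : ∀ i x y, f i y ≥ f i x + ⟪f' i x, y - x⟫ + μ / 2 * ‖x - y‖ ^ 2)
    (η ρ : ℝ) (hη : 0 < η) (hηL : 1 / η ≥ L) (hρ : 0 < ρ)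
    -- iterates at outer iterations r and r+1
    (xsr xsr1 : EuclideanSpace ℝ (Fin d))
    (xiR xiR1 : Fin m → ℕ → EuclideanSpace ℝ (Fin d))
    (xbarR xbarR1 : Fin m → EuclideanSpace ℝ (Fin d))
    (lamsiR lamsiR1 lamisR1 lamisR2 : Fin m → EuclideanSpace ℝ (Fin d))
    (hinnerR : ∀ i, ∀ k < K, xiR i (k + 1) =
      xiR i k - (1 / (1 / η + ρ)) • (f' i (xiR i k) + ρ • (xiR i k - xsr) + lamsiR i))
    (hxbarR : ∀ i, xbarR i = (1 / (K : ℝ)) • ∑ k ∈ Finset.range K, xiR i (k + 1))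
    (hlamisR1 : ∀ i, lamisR1 i = ρ • (xsr - xbarR i) - lamsiR i)
    (hxsr1 : xsr1 = (1 / (m : ℝ)) • ∑ i, (xbarR i - (1 / ρ) • lamisR1 i))
    (hlamsiR1 : ∀ i, lamsiR1 i = ρ • (xbarR i - xsr1) - lamisR1 i)
    (hinitR1 : ∀ i, xiR1 i 0 = xiR i K)
    (hinnerR1 : ∀ i, ∀ k < K, xiR1 i (k + 1) =
      xiR1 i k - (1 / (1 / η + ρ)) • (f' i (xiR1 i k) + ρ • (xiR1 i k - xsr1) + lamsiR1 i))
    (hxbarR1 : ∀ i, xbarR1 i = (1 / (K : ℝ)) • ∑ k ∈ Finset.range K, xiR1 i (k + 1))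
    (hlamisR2 : ∀ i, lamisR2 i = ρ • (xsr1 - xbarR1 i) - lamsiR1 i)
    -- KKT point
    (xstar : EuclideanSpace ℝ (Fin d)) (lamstar : Fin m → EuclideanSpace ℝ (Fin d))
    (hKKTgrad : ∀ i, f' i xstar = lamstar i)
    (hKKTsum : ∑ i, lamstar i = 0) :
    ∀ θ ∈ Set.Icc (0 : ℝ) 1,
      ∑ i, (1 / (K : ℝ)) * ∑ k ∈ Finset.range K,
            (1 / η - θ * μ) / 2 * ‖xiR i k - xstar‖ ^ 2
        + ∑ i, 1 / (4 * ρ) * ‖ρ • (xbarR i - xstar) + (lamisR1 i - lamstar i)‖ ^ 2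
      ≥ ∑ i,
          (f i (xbarR i) - ⟪xbarR i, lamstar i⟫ - f i xstar
            + (1 / (K : ℝ)) * ∑ k ∈ Finset.range K,
                (1 / (2 * η) * ‖xstar - xiR i (k + 1)‖ ^ 2
                  + (1 / η - L) / 2 * ‖xiR i (k + 1) - xiR i k‖ ^ 2
                  + (1 - θ) / (2 * L) *
                      ‖ρ • (xsr - xiR i (k + 1)) - lamsiR i - lamstar i
                        - (1 / η) • (xiR i (k + 1) - xiR i k)‖ ^ 2)
            + 1 / (4 * ρ) * ‖ρ • (xbarR1 i - xstar) + (lamisR2 i - lamstar i)‖ ^ 2) := by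
  intro θ hθ
  obtain ⟨hθ0, hθ1⟩ := hθ
  have hKne : (K : ℝ) ≠ 0 := Nat.cast_ne_zero.mpr (by omega)
  have hKpos : (0 : ℝ) < K := by positivity
  have hmne : (m : ℝ) ≠ 0 := Nat.cast_ne_zero.mpr (by omega)
  have hηρ : 1 / η + ρ ≠ 0 := by positivity
  -- the key gradient relation from the inner update
  have hkey : ∀ i, ∀ k < K, f' i (xiR i k) =
      ρ • (xsr - xiR i (k + 1)) - lamsiR i - (1 / η) • (xiR i (k + 1) - xiR i k) := by
    intro i k hk
    have hb := hinnerR i k hk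
    have h3 : (1 / η + ρ) • (xiR i k - xiR i (k + 1))
        = f' i (xiR i k) + ρ • (xiR i k - xsr) + lamsiR i := by
      rw [hb, sub_sub_cancel, smul_smul, mul_one_div_cancel hηρ, one_smul]
    have h4 : f' i (xiR i k) = (1 / η + ρ) • (xiR i k - xiR i (k + 1))
        - ρ • (xiR i k - xsr) - lamsiR i := by
      rw [h3]; abel
    rw [h4]; module
  -- sum of inner iterates
  have hS : ∀ i, ∑ k ∈ Finset.range K, xiR i (k + 1) = (K : ℝ) • xbarR i := by
    intro i
    rw [hxbarR i, smul_smul, mul_one_div_cancel hKne, one_smul]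
  -- per-step inequality
  have hstep : ∀ i, ∀ k < K,
      (1 / η - θ * μ) / 2 * ‖xiR i k - xstar‖ ^ 2 ≥
        f i (xiR i (k + 1)) - f i xstar
        + (1 / (2 * η) * ‖xstar - xiR i (k + 1)‖ ^ 2
            + (1 / η - L) / 2 * ‖xiR i (k + 1) - xiR i k‖ ^ 2
            + (1 - θ) / (2 * L) *
                ‖ρ • (xsr - xiR i (k + 1)) - lamsiR i - lamstar i
                  - (1 / η) • (xiR i (k + 1) - xiR i k)‖ ^ 2)
        + ⟪ρ • (xiR i (k + 1) - xsr) + lamsiR i, xiR i (k + 1) - xstar⟫ := by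
    intro i k hk
    have h2 := hcoco i (xiR i k) xstar
    rw [hKKTgrad i] at h2
    exact gpdmm_step_ineq L μ η ρ θ hη hθ0 hθ1 (f i (xiR i k)) (f i (xiR i (k + 1)))
      (f i xstar) (f' i (xiR i k)) (lamstar i) (xiR i k) (xiR i (k + 1)) xstar xsr
      (lamsiR i) (hkey i k hk) (hstrong i (xiR i k) xstar) h2
      (hdescent i (xiR i k) (xiR i (k + 1)))
  -- per-client averaged inequality
  have hi : ∀ i,
      f i (xbarR i) - f i xstar
        + (1 / (K : ℝ)) * ∑ k ∈ Finset.range K,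
            (1 / (2 * η) * ‖xstar - xiR i (k + 1)‖ ^ 2
              + (1 / η - L) / 2 * ‖xiR i (k + 1) - xiR i k‖ ^ 2
              + (1 - θ) / (2 * L) *
                  ‖ρ • (xsr - xiR i (k + 1)) - lamsiR i - lamstar i
                    - (1 / η) • (xiR i (k + 1) - xiR i k)‖ ^ 2)
        + ⟪ρ • (xbarR i - xsr) + lamsiR i, xbarR i - xstar⟫
      ≤ (1 / (K : ℝ)) * ∑ k ∈ Finset.range K,
          (1 / η - θ * μ) / 2 * ‖xiR i k - xstar‖ ^ 2 := by
    intro i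
    have hsum : ∑ k ∈ Finset.range K,
        (f i (xiR i (k + 1)) - f i xstar
          + (1 / (2 * η) * ‖xstar - xiR i (k + 1)‖ ^ 2
              + (1 / η - L) / 2 * ‖xiR i (k + 1) - xiR i k‖ ^ 2
              + (1 - θ) / (2 * L) *
                  ‖ρ • (xsr - xiR i (k + 1)) - lamsiR i - lamstar i
                    - (1 / η) • (xiR i (k + 1) - xiR i k)‖ ^ 2)
          + ⟪ρ • (xiR i (k + 1) - xsr) + lamsiR i, xiR i (k + 1) - xstar⟫)
        ≤ ∑ k ∈ Finset.range K, (1 / η - θ * μ) / 2 * ‖xiR i k - xstar‖ ^ 2 :=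
      Finset.sum_le_sum fun k hk => hstep i k (Finset.mem_range.mp hk)
    have hsplit : ∑ k ∈ Finset.range K,
        (f i (xiR i (k + 1)) - f i xstar
          + (1 / (2 * η) * ‖xstar - xiR i (k + 1)‖ ^ 2
              + (1 / η - L) / 2 * ‖xiR i (k + 1) - xiR i k‖ ^ 2
              + (1 - θ) / (2 * L) *
                  ‖ρ • (xsr - xiR i (k + 1)) - lamsiR i - lamstar i
                    - (1 / η) • (xiR i (k + 1) - xiR i k)‖ ^ 2)
          + ⟪ρ • (xiR i (k + 1) - xsr) + lamsiR i, xiR i (k + 1) - xstar⟫)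
        = (∑ k ∈ Finset.range K, f i (xiR i (k + 1))) - (K : ℝ) * f i xstar
          + (∑ k ∈ Finset.range K,
              (1 / (2 * η) * ‖xstar - xiR i (k + 1)‖ ^ 2
                + (1 / η - L) / 2 * ‖xiR i (k + 1) - xiR i k‖ ^ 2
                + (1 - θ) / (2 * L) *
                    ‖ρ • (xsr - xiR i (k + 1)) - lamsiR i - lamstar i
                      - (1 / η) • (xiR i (k + 1) - xiR i k)‖ ^ 2))
          + ∑ k ∈ Finset.range K,
              ⟪ρ • (xiR i (k + 1) - xsr) + lamsiR i, xiR i (k + 1) - xstar⟫ := by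
      rw [Finset.sum_add_distrib, Finset.sum_add_distrib, Finset.sum_sub_distrib,
        Finset.sum_const, Finset.card_range, nsmul_eq_mul]
    have hJf : (K : ℝ) * f i (xbarR i) ≤ ∑ k ∈ Finset.range K, f i (xiR i (k + 1)) := by
      refine gpdmm_fjensen K (fun k => xiR i (k + 1)) (xbarR i) (f' i (xbarR i)) (f i)
        (fun y => ?_) (hS i)
      have := hstrong i (xbarR i) y
      nlinarith [mul_nonneg hμ (sq_nonneg ‖xbarR i - y‖)]
    have hJP : (K : ℝ) * ⟪ρ • (xbarR i - xsr) + lamsiR i, xbarR i - xstar⟫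
        ≤ ∑ k ∈ Finset.range K,
            ⟪ρ • (xiR i (k + 1) - xsr) + lamsiR i, xiR i (k + 1) - xstar⟫ :=
      gpdmm_pjensen ρ (le_of_lt hρ) K (fun k => xiR i (k + 1)) (xbarR i) xsr xstar
        (lamsiR i) (hS i)
    rw [hsplit] at hsum
    have hKC : (K : ℝ) * (f i (xbarR i) - f i xstar
          + ⟪ρ • (xbarR i - xsr) + lamsiR i, xbarR i - xstar⟫)
        + (∑ k ∈ Finset.range K,
            (1 / (2 * η) * ‖xstar - xiR i (k + 1)‖ ^ 2
              + (1 / η - L) / 2 * ‖xiR i (k + 1) - xiR i k‖ ^ 2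
              + (1 - θ) / (2 * L) *
                  ‖ρ • (xsr - xiR i (k + 1)) - lamsiR i - lamstar i
                    - (1 / η) • (xiR i (k + 1) - xiR i k)‖ ^ 2))
        ≤ ∑ k ∈ Finset.range K, (1 / η - θ * μ) / 2 * ‖xiR i k - xstar‖ ^ 2 := by
      linarith [hJf, hJP, hsum]
    have h1K : (0 : ℝ) ≤ 1 / (K : ℝ) := by positivity
    have habs : ∀ X Y C : ℝ, (K : ℝ) * X + Y ≤ C → X + (1 / (K : ℝ)) * Y ≤ (1 / (K : ℝ)) * C := by
      intro X Y C h
      have e : X + (1 / (K : ℝ)) * Y = (1 / (K : ℝ)) * ((K : ℝ) * X + Y) := by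
        field_simp
      rw [e]
      exact mul_le_mul_of_nonneg_left h h1K
    have hfin := habs _ _ _ hKC
    linarith
  -- dual-variable identities
  have hP : ∀ i, ρ • (xbarR i - xsr) + lamsiR i = -lamisR1 i := by
    intro i; rw [hlamisR1 i]; module
  have hD1 : ∀ i, ⟪ρ • (xbarR i - xsr) + lamsiR i, xbarR i - xstar⟫
      + 1 / (4 * ρ) * ‖ρ • (xbarR i - xstar) + (lamisR1 i - lamstar i)‖ ^ 2
      = ⟪xstar, lamstar i⟫ - ⟪xbarR i, lamstar i⟫
        + 1 / (4 * ρ) * ‖ρ • (xbarR i - xstar) - (lamisR1 i - lamstar i)‖ ^ 2 := by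
    intro i
    rw [hP i]
    have hq : ‖ρ • (xbarR i - xstar) + (lamisR1 i - lamstar i)‖ ^ 2
        = ‖ρ • (xbarR i - xstar) - (lamisR1 i - lamstar i)‖ ^ 2
          + 4 * ρ * ⟪xbarR i - xstar, lamisR1 i - lamstar i⟫ := by
      simp only [← real_inner_self_eq_norm_sq, inner_add_left, inner_add_right,
        inner_sub_left, inner_sub_right, real_inner_smul_left, real_inner_smul_right]
      simp only [real_inner_comm]
      ring
    have hlin2 : ⟪-lamisR1 i, xbarR i - xstar⟫
        = ⟪xstar, lamstar i⟫ - ⟪xbarR i, lamstar i⟫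
          - ⟪xbarR i - xstar, lamisR1 i - lamstar i⟫ := by
      simp only [inner_neg_left, inner_sub_left, inner_sub_right]
      simp only [real_inner_comm]
      ring
    rw [hq, hlin2]
    field_simp
    ring
  -- the reflection identity between consecutive dual terms
  have hz : ∀ i, ρ • (xbarR1 i - xstar) + (lamisR2 i - lamstar i)
      = (2 * ρ) • (xsr1 - xstar)
        - (ρ • (xbarR i - xstar) - (lamisR1 i - lamstar i)) := by
    intro i; rw [hlamisR2 i, hlamsiR1 i]; module
  have hnormu : ∀ i, ‖ρ • (xbarR1 i - xstar) + (lamisR2 i - lamstar i)‖ ^ 2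
      = 4 * ρ ^ 2 * ‖xsr1 - xstar‖ ^ 2
        - 4 * ρ * ⟪xsr1 - xstar, ρ • (xbarR i - xstar) - (lamisR1 i - lamstar i)⟫
        + ‖ρ • (xbarR i - xstar) - (lamisR1 i - lamstar i)‖ ^ 2 := by
    intro i
    rw [hz i, norm_sub_sq_real, norm_smul, real_inner_smul_left, Real.norm_eq_abs,
      mul_pow, sq_abs]
    ring
  have hvsum : ∑ i, (ρ • (xbarR i - xstar) - (lamisR1 i - lamstar i))
      = (ρ * m) • (xsr1 - xstar) := by
    have h1 : (m : ℝ) • xsr1 = ∑ i, (xbarR i - (1 / ρ) • lamisR1 i) := by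
      rw [hxsr1, smul_smul, mul_one_div_cancel hmne, one_smul]
    have h2 : ∀ i : Fin m, ρ • (xbarR i - xstar) - (lamisR1 i - lamstar i)
        = ρ • (xbarR i - (1 / ρ) • lamisR1 i) - ρ • xstar + lamstar i := by
      intro i
      have hinv : ρ • ((1 / ρ) • lamisR1 i) = lamisR1 i := by
        rw [smul_smul, mul_one_div_cancel (ne_of_gt hρ), one_smul]
      rw [smul_sub ρ (xbarR i) ((1 / ρ) • lamisR1 i), hinv]
      module
    have e2 : ∑ i, (ρ • (xbarR i - xstar) - (lamisR1 i - lamstar i))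
        = ∑ i, (ρ • (xbarR i - (1 / ρ) • lamisR1 i) - ρ • xstar + lamstar i) :=
      Finset.sum_congr rfl fun i _ => h2 i
    rw [e2, Finset.sum_add_distrib, Finset.sum_sub_distrib, ← Finset.smul_sum, ← h1,
      Finset.sum_const, hKKTsum]
    simp only [Finset.card_univ, Fintype.card_fin]
    rw [smul_smul]
    module
  have huv : ∑ i, ‖ρ • (xbarR1 i - xstar) + (lamisR2 i - lamstar i)‖ ^ 2
      = ∑ i, ‖ρ • (xbarR i - xstar) - (lamisR1 i - lamstar i)‖ ^ 2 := by
    have e3 : ∑ i, ‖ρ • (xbarR1 i - xstar) + (lamisR2 i - lamstar i)‖ ^ 2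
        = ∑ i, (4 * ρ ^ 2 * ‖xsr1 - xstar‖ ^ 2
            - 4 * ρ * ⟪xsr1 - xstar, ρ • (xbarR i - xstar) - (lamisR1 i - lamstar i)⟫
            + ‖ρ • (xbarR i - xstar) - (lamisR1 i - lamstar i)‖ ^ 2) :=
      Finset.sum_congr rfl fun i _ => hnormu i
    rw [e3, Finset.sum_add_distrib, Finset.sum_sub_distrib, Finset.sum_const,
      Finset.card_univ, Fintype.card_fin, ← Finset.mul_sum, ← inner_sum, hvsum,
      real_inner_smul_right, real_inner_self_eq_norm_sq, nsmul_eq_mul]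
    ring
  have hinner0 : ∑ i, ⟪xstar, lamstar i⟫ = 0 := by
    rw [← inner_sum, hKKTsum, inner_zero_right]
  -- assemble everything
  rw [ge_iff_le]
  have hR : ∀ i : Fin m,
      f i (xbarR i) - ⟪xbarR i, lamstar i⟫ - f i xstar
        + (1 / (K : ℝ)) * ∑ k ∈ Finset.range K,
            (1 / (2 * η) * ‖xstar - xiR i (k + 1)‖ ^ 2
              + (1 / η - L) / 2 * ‖xiR i (k + 1) - xiR i k‖ ^ 2
              + (1 - θ) / (2 * L) *
                  ‖ρ • (xsr - xiR i (k + 1)) - lamsiR i - lamstar i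
                    - (1 / η) • (xiR i (k + 1) - xiR i k)‖ ^ 2)
        + 1 / (4 * ρ) * ‖ρ • (xbarR1 i - xstar) + (lamisR2 i - lamstar i)‖ ^ 2
      = (f i (xbarR i) - f i xstar
          + (1 / (K : ℝ)) * ∑ k ∈ Finset.range K,
              (1 / (2 * η) * ‖xstar - xiR i (k + 1)‖ ^ 2
                + (1 / η - L) / 2 * ‖xiR i (k + 1) - xiR i k‖ ^ 2
                + (1 - θ) / (2 * L) *
                    ‖ρ • (xsr - xiR i (k + 1)) - lamsiR i - lamstar i
                      - (1 / η) • (xiR i (k + 1) - xiR i k)‖ ^ 2)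
          + ⟪ρ • (xbarR i - xsr) + lamsiR i, xbarR i - xstar⟫)
        + 1 / (4 * ρ) * ‖ρ • (xbarR i - xstar) + (lamisR1 i - lamstar i)‖ ^ 2
        - ⟪xstar, lamstar i⟫
        + 1 / (4 * ρ) * ‖ρ • (xbarR1 i - xstar) + (lamisR2 i - lamstar i)‖ ^ 2
        - 1 / (4 * ρ) * ‖ρ • (xbarR i - xstar) - (lamisR1 i - lamstar i)‖ ^ 2 := by
    intro i
    have := hD1 i
    linarith
  have huv' : ∑ i, 1 / (4 * ρ) * ‖ρ • (xbarR1 i - xstar) + (lamisR2 i - lamstar i)‖ ^ 2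
      = ∑ i, 1 / (4 * ρ) * ‖ρ • (xbarR i - xstar) - (lamisR1 i - lamstar i)‖ ^ 2 := by
    rw [← Finset.mul_sum, ← Finset.mul_sum, huv]
  calc ∑ i,
        (f i (xbarR i) - ⟪xbarR i, lamstar i⟫ - f i xstar
          + (1 / (K : ℝ)) * ∑ k ∈ Finset.range K,
              (1 / (2 * η) * ‖xstar - xiR i (k + 1)‖ ^ 2
                + (1 / η - L) / 2 * ‖xiR i (k + 1) - xiR i k‖ ^ 2
                + (1 - θ) / (2 * L) *
                    ‖ρ • (xsr - xiR i (k + 1)) - lamsiR i - lamstar i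
                      - (1 / η) • (xiR i (k + 1) - xiR i k)‖ ^ 2)
          + 1 / (4 * ρ) * ‖ρ • (xbarR1 i - xstar) + (lamisR2 i - lamstar i)‖ ^ 2)
      ≤ ∑ i,
        ((1 / (K : ℝ)) * (∑ k ∈ Finset.range K,
              (1 / η - θ * μ) / 2 * ‖xiR i k - xstar‖ ^ 2)
          + 1 / (4 * ρ) * ‖ρ • (xbarR i - xstar) + (lamisR1 i - lamstar i)‖ ^ 2
          - ⟪xstar, lamstar i⟫
          + 1 / (4 * ρ) * ‖ρ • (xbarR1 i - xstar) + (lamisR2 i - lamstar i)‖ ^ 2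
          - 1 / (4 * ρ) * ‖ρ • (xbarR i - xstar) - (lamisR1 i - lamstar i)‖ ^ 2) := by
        refine Finset.sum_le_sum fun i _ => ?_
        have h1 := hR i
        have h2 := hi i
        linarith
    _ = (∑ i, (1 / (K : ℝ)) * (∑ k ∈ Finset.range K,
              (1 / η - θ * μ) / 2 * ‖xiR i k - xstar‖ ^ 2))
          + (∑ i, 1 / (4 * ρ) * ‖ρ • (xbarR i - xstar) + (lamisR1 i - lamstar i)‖ ^ 2)
          - (∑ i, ⟪xstar, lamstar i⟫)
          + (∑ i, 1 / (4 * ρ) * ‖ρ • (xbarR1 i - xstar) + (lamisR2 i - lamstar i)‖ ^ 2)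
          - (∑ i, 1 / (4 * ρ) * ‖ρ • (xbarR i - xstar) - (lamisR1 i - lamstar i)‖ ^ 2) := by
        simp only [Finset.sum_add_distrib, Finset.sum_sub_distrib]
    _ = (∑ i, (1 / (K : ℝ)) * (∑ k ∈ Finset.range K,
              (1 / η - θ * μ) / 2 * ‖xiR i k - xstar‖ ^ 2))
          + (∑ i, 1 / (4 * ρ) * ‖ρ • (xbarR i - xstar) + (lamisR1 i - lamstar i)‖ ^ 2) := by
        rw [hinner0, huv']
        ring
end

section
/- Suppose the GPDMM iterates are generated by the GPDMM update equations for all outer iterations r ≥ 1, with 1/η > L ≥ μ > 0, and let (x*, {λ*_{i|s}}) be a KKT point. Fix θ ∈ (0,1) and φ ∈ (0,1) with θμφ/(4ρ²) < 1/(4ρ). Define γ₁ = min( (1−θ)/(2Lη²), (1/η − L)/2 ), γ₂ = min( θμφ/(2ρ²), γ₁η²/2 ), and for r ≥ 1 let Q^r = ∑_{i=1}^m [ ((1/η − θμ)/(2K))‖x_i^{r−1,K} − x*‖² + (1/(4ρ) − γ₂/2)‖ρ(x̄_i^{r,K} − x*) + (λ_{i|s}^{r+1} − λ*_{i|s})‖²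 ]. Then Q^{r+1} ≤ β Q^r for all r ≥ 1, where β = max( (1/(4ρ) − γ₂/2)/(1/(4ρ)), (1/η − θμ)/(1/η − θμφ) ) and 0 < β < 1. -/
open scoped RealInnerProductSpace

set_option linter.unusedSectionVars false


variable {E : Type*} [NormedAddCommGroup E] [InnerProductSpace ℝ E]

lemma sq_norm_sum_le (s : Finset ℕ) (y : ℕ → E) :
    ‖∑ k ∈ s, y k‖ ^ 2 ≤ s.card * ∑ k ∈ s, ‖y k‖ ^ 2 := by
  have h1 : ‖∑ k ∈ s, y k‖ ≤ ∑ k ∈ s, ‖y k‖ := norm_sum_le _ _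
  have h2 : (∑ k ∈ s, ‖y k‖) ^ 2 ≤ (∑ k ∈ s, (1:ℝ) ^ 2) * ∑ k ∈ s, ‖y k‖ ^ 2 := by
    simpa using Finset.sum_mul_sq_le_sq_mul_sq s (fun _ => (1:ℝ)) (fun k => ‖y k‖)
  have h3 : (∑ k ∈ s, (1:ℝ) ^ 2) = s.card := by simp
  have h4 := pow_le_pow_left₀ (norm_nonneg (∑ k ∈ s, y k)) h1 2
  rw [h3] at h2
  linarith

lemma sq_norm_add_le (a b : E) : ‖a + b‖ ^ 2 ≤ 2 * ‖a‖ ^ 2 + 2 * ‖b‖ ^ 2 := by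
  have h := norm_add_sq_real a b
  have h2 := real_inner_le_norm a b
  nlinarith [sq_nonneg (‖a‖ - ‖b‖)]

set_option maxHeartbeats 2000000 in
/-- Per-node, per-outer-iteration key inequality for GPDMM. -/
lemma gpdmm_perNode
    (K : ℕ) (hK : 1 ≤ K)
    (f : E → ℝ) (f' : E → E) (L μ : ℝ) (hL : 0 < L) (hμ : 0 < μ)
    (hdescent : ∀ x y, f y ≤ f x + ⟪f' x, y - x⟫ + L / 2 * ‖x - y‖ ^ 2)
    (hcoco : ∀ x y, f y ≥ f x + ⟪f' x, y - x⟫ + 1 / (2 * L) * ‖f' x - f' y‖ ^ 2)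
    (hstrong : ∀ x y, f y ≥ f x + ⟪f' x, y - x⟫ + μ / 2 * ‖x - y‖ ^ 2)
    (η ρ θ φ γ₂ : ℝ) (hη : 0 < η) (hηL : L < 1 / η) (hρ : 0 < ρ)
    (hθ0 : 0 < θ) (hθ1 : θ < 1) (hφ0 : 0 < φ) (hφ1 : φ < 1)
    (hγ₂0 : 0 ≤ γ₂)
    (hγ₂ρ : γ₂ * ρ ^ 2 ≤ θ * μ * φ / 2)
    (hγ₂L : 2 * γ₂ ≤ (1 - θ) / (2 * L))
    (hγ₂η : 2 * γ₂ * (1 / η) ^ 2 ≤ (1 / η - L) / 2)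
    (x : ℕ → E) (v xstar : E)
    (hupd : ∀ k < K, f' (x k) =
      (1 / η) • (x k - x (k + 1)) - ρ • x (k + 1) + v)
    (xbar : E) (hxbar : xbar = (1 / (K : ℝ)) • ∑ k ∈ Finset.range K, x (k + 1)) :
    (1 / η - θ * μ * φ) / (2 * K) * ‖x K - xstar‖ ^ 2
      + 1 / (4 * ρ) * ‖((2 * ρ) • xbar - v) - (ρ • xstar - f' xstar)‖ ^ 2
    ≤ (1 / η - θ * μ) / (2 * K) * ‖x 0 - xstar‖ ^ 2
      + (1 / (4 * ρ) - γ₂ / 2) * ‖v - (ρ • xstar + f' xstar)‖ ^ 2 := by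
  have hKpos : (0:ℝ) < K := by exact_mod_cast hK
  have hK0 : (K:ℝ) ≠ 0 := ne_of_gt hKpos
  set α := 1 / η with hα
  have hαpos : 0 < α := lt_trans hL hηL
  -- per-step inequality R_k
  have Rk : ∀ k < K, ρ * ‖x (k+1) - xstar‖ ^ 2 + (α - L) / 2 * ‖x k - x (k+1)‖ ^ 2
      + (1 - θ) / (2 * L) * ‖f' (x k) - f' xstar‖ ^ 2 + (θ * μ - α) / 2 * ‖x k - xstar‖ ^ 2
      + α / 2 * ‖x (k+1) - xstar‖ ^ 2
      ≤ ⟪v - (ρ • xstar + f' xstar), x (k+1) - xstar⟫ := by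
    intro k hk
    have hfk : f' (x k) - f' xstar
        = α • (x k - x (k+1)) - ρ • (x (k+1) - xstar) + (v - (ρ • xstar + f' xstar)) := by
      rw [hupd k hk]; module
    have i1 : ⟪f' (x k) - f' xstar, x (k+1) - xstar⟫
        = α * ⟪x k - x (k+1), x (k+1) - xstar⟫ - ρ * ‖x (k+1) - xstar‖ ^ 2
          + ⟪v - (ρ • xstar + f' xstar), x (k+1) - xstar⟫ := by
      rw [hfk, inner_add_left, inner_sub_left, real_inner_smul_left, real_inner_smul_left,
        real_inner_self_eq_norm_sq]
    have i2 : 2 * ⟪x k - x (k+1), x (k+1) - xstar⟫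
        = ‖x k - xstar‖ ^ 2 - ‖x (k+1) - xstar‖ ^ 2 - ‖x k - x (k+1)‖ ^ 2 := by
      have e : x k - x (k+1) = (x k - xstar) - (x (k+1) - xstar) := by abel
      rw [e, inner_sub_left, real_inner_self_eq_norm_sq,
        norm_sub_sq_real (x k - xstar) (x (k+1) - xstar)]
      ring
    -- function value inequalities
    have hd := hdescent (x k) (x (k+1))
    have hs := hstrong (x k) xstar
    have hc := hcoco (x k) xstar
    have hcv := hstrong xstar (x (k+1))
    have j1 : ⟪f' (x k), x (k+1) - xstar⟫
        = ⟪f' (x k), x (k+1) - x k⟫ - ⟪f' (x k), xstar - x k⟫ := by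
      rw [← inner_sub_right]; congr 1; abel
    have j3 : ⟪f' (x k) - f' xstar, x (k+1) - xstar⟫
        = ⟪f' (x k), x (k+1) - xstar⟫ - ⟪f' xstar, x (k+1) - xstar⟫ := inner_sub_left _ _ _
    have hF1 : μ / 2 * ‖x k - xstar‖ ^ 2
        ≤ f xstar - f (x k) - ⟪f' (x k), xstar - x k⟫ := by linarith
    have hF2 : 1 / (2 * L) * ‖f' (x k) - f' xstar‖ ^ 2
        ≤ f xstar - f (x k) - ⟪f' (x k), xstar - x k⟫ := by linarith
    have hF1' := mul_le_mul_of_nonneg_left hF1 hθ0.le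
    have hF2' := mul_le_mul_of_nonneg_left hF2 (by linarith : (0:ℝ) ≤ 1 - θ)
    have hμb : 0 ≤ μ / 2 * ‖xstar - x (k+1)‖ ^ 2 := by positivity
    have Qk : ⟪f' (x k) - f' xstar, x (k+1) - xstar⟫
        ≥ θ * (μ / 2 * ‖x k - xstar‖ ^ 2)
          + (1 - θ) * (1 / (2 * L) * ‖f' (x k) - f' xstar‖ ^ 2)
          - L / 2 * ‖x k - x (k+1)‖ ^ 2 := by
      rw [j3, j1]
      linarith [hd, hcv, hF1', hF2', hμb]
    have hre : (1 - θ) / (2 * L) * ‖f' (x k) - f' xstar‖ ^ 2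
        = (1 - θ) * (1 / (2 * L) * ‖f' (x k) - f' xstar‖ ^ 2) := by ring
    have hre2 : (θ * μ - α) / 2 * ‖x k - xstar‖ ^ 2
        = θ * (μ / 2 * ‖x k - xstar‖ ^ 2) - α / 2 * ‖x k - xstar‖ ^ 2 := by ring
    have i2' : α * ⟪x k - x (k+1), x (k+1) - xstar⟫
        = α / 2 * ‖x k - xstar‖ ^ 2 - α / 2 * ‖x (k+1) - xstar‖ ^ 2
          - α / 2 * ‖x k - x (k+1)‖ ^ 2 := by linear_combination (α / 2) * i2
    linarith [i1, i2', Qk, hre, hre2]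
  -- abbreviations for the sums
  set SB := ∑ k ∈ Finset.range K, ‖x (k+1) - xstar‖ ^ 2 with hSB
  set SD := ∑ k ∈ Finset.range K, ‖x k - x (k+1)‖ ^ 2 with hSD
  set SG := ∑ k ∈ Finset.range K, ‖f' (x k) - f' xstar‖ ^ 2 with hSG
  set SA := ∑ k ∈ Finset.range K, ‖x k - xstar‖ ^ 2 with hSA
  have hSBnn : 0 ≤ SB := Finset.sum_nonneg (fun k _ => by positivity)
  have hSDnn : 0 ≤ SD := Finset.sum_nonneg (fun k _ => by positivity)
  have hSGnn : 0 ≤ SG := Finset.sum_nonneg (fun k _ => by positivity)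
  -- vector sums
  have hKxbar : (K:ℝ) • xbar = ∑ k ∈ Finset.range K, x (k+1) := by
    rw [hxbar, smul_smul, mul_one_div_cancel hK0, one_smul]
  have hsumvec : ∑ k ∈ Finset.range K, (x (k+1) - xstar) = (K:ℝ) • (xbar - xstar) := by
    rw [Finset.sum_sub_distrib, Finset.sum_const, Finset.card_range, smul_sub, hKxbar,
      Nat.cast_smul_eq_nsmul]
  have hsum1 : ∑ k ∈ Finset.range K, ⟪v - (ρ • xstar + f' xstar), x (k+1) - xstar⟫
      = (K:ℝ) * ⟪v - (ρ • xstar + f' xstar), xbar - xstar⟫ := by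
    rw [← inner_sum, hsumvec, real_inner_smul_right]
  have F1 : ρ * SB + (α - L)/2 * SD + (1-θ)/(2*L) * SG + (θ*μ-α)/2 * SA + α/2 * SB
      ≤ (K:ℝ) * ⟪v - (ρ • xstar + f' xstar), xbar - xstar⟫ := by
    rw [← hsum1]
    calc ρ * SB + (α - L)/2 * SD + (1-θ)/(2*L) * SG + (θ*μ-α)/2 * SA + α/2 * SB
        = ∑ k ∈ Finset.range K, (ρ * ‖x (k+1) - xstar‖ ^ 2
            + (α - L) / 2 * ‖x k - x (k+1)‖ ^ 2
            + (1 - θ) / (2 * L) * ‖f' (x k) - f' xstar‖ ^ 2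
            + (θ * μ - α) / 2 * ‖x k - xstar‖ ^ 2
            + α / 2 * ‖x (k+1) - xstar‖ ^ 2) := by
          simp only [Finset.sum_add_distrib, ← Finset.mul_sum, hSB, hSD, hSG, hSA]
      _ ≤ _ := Finset.sum_le_sum (fun k hk => Rk k (Finset.mem_range.mp hk))
  -- telescope
  have F2 : SA + ‖x K - xstar‖ ^ 2 = ‖x 0 - xstar‖ ^ 2 + SB := by
    have h1 := Finset.sum_range_succ (fun k => ‖x k - xstar‖ ^ 2) K
    have h2 := Finset.sum_range_succ' (fun k => ‖x k - xstar‖ ^ 2) K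
    rw [h1] at h2
    linarith [h2]
  -- last term bound
  have F3 : ‖x K - xstar‖ ^ 2 ≤ SB := by
    have hmem : K - 1 ∈ Finset.range K := by
      simp only [Finset.mem_range]; omega
    have h := Finset.single_le_sum (f := fun k => ‖x (k+1) - xstar‖ ^ 2)
      (fun k _ => by positivity) hmem
    have he : K - 1 + 1 = K := by omega
    calc ‖x K - xstar‖ ^ 2 = ‖x (K - 1 + 1) - xstar‖ ^ 2 := by rw [he]
      _ ≤ SB := h
  -- Jensen
  have F4 : (K:ℝ) * ‖xbar - xstar‖ ^ 2 ≤ SB := by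
    have h := sq_norm_sum_le (Finset.range K) (fun k => x (k+1) - xstar)
    simp only [Finset.card_range] at h
    rw [hsumvec, norm_smul, Real.norm_eq_abs, abs_of_pos hKpos, mul_pow] at h
    nlinarith [hKpos]
  -- dual residual decomposition
  have hsumf : ∑ k ∈ Finset.range K, f' (x k)
      = α • (∑ k ∈ Finset.range K, (x k - x (k+1)))
        - ρ • (∑ k ∈ Finset.range K, x (k+1)) + (K:ℝ) • v := by
    rw [Finset.sum_congr rfl (fun k hk => hupd k (Finset.mem_range.mp hk))]
    rw [Finset.sum_add_distrib, Finset.sum_sub_distrib, ← Finset.smul_sum, ← Finset.smul_sum,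
      Finset.sum_const, Finset.card_range, Nat.cast_smul_eq_nsmul]
  have e1 : ∑ k ∈ Finset.range K, (f' (x k) - f' xstar)
      = (∑ k ∈ Finset.range K, f' (x k)) - (K:ℝ) • f' xstar := by
    rw [Finset.sum_sub_distrib, Finset.sum_const, Finset.card_range, Nat.cast_smul_eq_nsmul]
  have hvvK : (K:ℝ) • (v - (ρ • xstar + f' xstar))
      = (K:ℝ) • (ρ • (xbar - xstar))
        + ((∑ k ∈ Finset.range K, (f' (x k) - f' xstar))
            - α • (∑ k ∈ Finset.range K, (x k - x (k+1)))) := by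
    rw [e1, hsumf, ← hKxbar]; module
  -- bound on ‖v - v*‖²
  have F5 : (K:ℝ) * ‖v - (ρ • xstar + f' xstar)‖ ^ 2
      ≤ 2 * ρ ^ 2 * ((K:ℝ) * ‖xbar - xstar‖ ^ 2) + 4 * SG + 4 * α ^ 2 * SD := by
    have t1 : ‖(K:ℝ) • (v - (ρ • xstar + f' xstar))‖ ^ 2
        ≤ 2 * ‖(K:ℝ) • (ρ • (xbar - xstar))‖ ^ 2
          + 2 * ‖(∑ k ∈ Finset.range K, (f' (x k) - f' xstar))
              - α • (∑ k ∈ Finset.range K, (x k - x (k+1)))‖ ^ 2 := by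
      rw [hvvK]; exact sq_norm_add_le _ _
    have t2 : ‖(∑ k ∈ Finset.range K, (f' (x k) - f' xstar))
          - α • (∑ k ∈ Finset.range K, (x k - x (k+1)))‖ ^ 2
        ≤ 2 * ‖∑ k ∈ Finset.range K, (f' (x k) - f' xstar)‖ ^ 2
          + 2 * ‖α • (∑ k ∈ Finset.range K, (x k - x (k+1)))‖ ^ 2 := by
      rw [sub_eq_add_neg]
      simpa [norm_neg] using sq_norm_add_le
        (∑ k ∈ Finset.range K, (f' (x k) - f' xstar))
        (-(α • (∑ k ∈ Finset.range K, (x k - x (k+1)))))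
    have t3 : ‖∑ k ∈ Finset.range K, (f' (x k) - f' xstar)‖ ^ 2 ≤ (K:ℝ) * SG := by
      simpa [Finset.card_range] using
        sq_norm_sum_le (Finset.range K) (fun k => f' (x k) - f' xstar)
    have t4 : ‖α • (∑ k ∈ Finset.range K, (x k - x (k+1)))‖ ^ 2 ≤ α ^ 2 * ((K:ℝ) * SD) := by
      rw [norm_smul, Real.norm_eq_abs, mul_pow, sq_abs]
      have := sq_norm_sum_le (Finset.range K) (fun k => x k - x (k+1))
      simp only [Finset.card_range] at this
      exact mul_le_mul_of_nonneg_left this (sq_nonneg α)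
    have t5 : ‖(K:ℝ) • (v - (ρ • xstar + f' xstar))‖ ^ 2
        = (K:ℝ) ^ 2 * ‖v - (ρ • xstar + f' xstar)‖ ^ 2 := by
      rw [norm_smul, Real.norm_eq_abs, mul_pow, sq_abs]
    have t6 : ‖(K:ℝ) • (ρ • (xbar - xstar))‖ ^ 2
        = (K:ℝ) ^ 2 * (ρ ^ 2 * ‖xbar - xstar‖ ^ 2) := by
      rw [norm_smul, norm_smul, Real.norm_eq_abs, Real.norm_eq_abs, mul_pow, mul_pow,
        sq_abs, sq_abs]
    have hcomb : (K:ℝ) * ((K:ℝ) * ‖v - (ρ • xstar + f' xstar)‖ ^ 2)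
        ≤ (K:ℝ) * (2 * ρ ^ 2 * ((K:ℝ) * ‖xbar - xstar‖ ^ 2) + 4 * SG + 4 * α ^ 2 * SD) := by
      linarith [t1, t2, t3, t4, t5, t6]
    exact le_of_mul_le_mul_left hcomb hKpos
  -- expansion of the w-residual
  set IB := ⟪v - (ρ • xstar + f' xstar), xbar - xstar⟫ with hIB
  have F6 : ‖((2 * ρ) • xbar - v) - (ρ • xstar - f' xstar)‖ ^ 2
      = 4 * ρ ^ 2 * ‖xbar - xstar‖ ^ 2 - 4 * ρ * IB
        + ‖v - (ρ • xstar + f' xstar)‖ ^ 2 := by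
    have e : ((2 * ρ) • xbar - v) - (ρ • xstar - f' xstar)
        = (2 * ρ) • (xbar - xstar) - (v - (ρ • xstar + f' xstar)) := by module
    rw [e, norm_sub_sq_real, norm_smul, Real.norm_eq_abs, mul_pow, sq_abs,
      real_inner_smul_left]
    have : ⟪xbar - xstar, v - (ρ • xstar + f' xstar)⟫ = IB := real_inner_comm _ _
    rw [this]
    ring
  have F6' : (K:ℝ) * (1 / (4 * ρ)) * ‖((2 * ρ) • xbar - v) - (ρ • xstar - f' xstar)‖ ^ 2
      = ρ * ((K:ℝ) * ‖xbar - xstar‖ ^ 2) - (K:ℝ) * IB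
        + 1 / (4 * ρ) * ((K:ℝ) * ‖v - (ρ • xstar + f' xstar)‖ ^ 2) := by
    rw [F6]; field_simp
  -- pre-scaled product inequalities
  have hXnn : 0 ≤ (K:ℝ) * ‖xbar - xstar‖ ^ 2 := by positivity
  have F2' : (θ*μ - α)/2 * SA + (θ*μ - α)/2 * ‖x K - xstar‖ ^ 2
      = (θ*μ - α)/2 * ‖x 0 - xstar‖ ^ 2 + (θ*μ - α)/2 * SB := by
    linear_combination ((θ*μ - α)/2) * F2
  have P3 : θ*μ*(1-φ)/2 * ‖x K - xstar‖ ^ 2 ≤ θ*μ*(1-φ)/2 * SB :=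
    mul_le_mul_of_nonneg_left F3 (div_nonneg (mul_nonneg (mul_nonneg hθ0.le hμ.le) (by linarith)) (by norm_num))
  have P4a : ρ * ((K:ℝ) * ‖xbar - xstar‖ ^ 2) ≤ ρ * SB :=
    mul_le_mul_of_nonneg_left F4 hρ.le
  have P4b : θ*μ*φ/2 * ((K:ℝ) * ‖xbar - xstar‖ ^ 2) ≤ θ*μ*φ/2 * SB :=
    mul_le_mul_of_nonneg_left F4 (by positivity)
  have P5 : γ₂/2 * ((K:ℝ) * ‖v - (ρ • xstar + f' xstar)‖ ^ 2)
      ≤ γ₂/2 * (2 * ρ ^ 2 * ((K:ℝ) * ‖xbar - xstar‖ ^ 2) + 4 * SG + 4 * α ^ 2 * SD) :=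
    mul_le_mul_of_nonneg_left F5 (by linarith)
  have P6a : γ₂ * ρ ^ 2 * ((K:ℝ) * ‖xbar - xstar‖ ^ 2)
      ≤ θ * μ * φ / 2 * ((K:ℝ) * ‖xbar - xstar‖ ^ 2) :=
    mul_le_mul_of_nonneg_right hγ₂ρ hXnn
  have P6b : 2 * γ₂ * SG ≤ (1-θ)/(2*L) * SG := mul_le_mul_of_nonneg_right hγ₂L hSGnn
  have P6c : 2 * γ₂ * α ^ 2 * SD ≤ (α - L)/2 * SD := by
    have := mul_le_mul_of_nonneg_right hγ₂η hSDnn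
    calc 2 * γ₂ * α ^ 2 * SD = 2 * γ₂ * (1/η) ^ 2 * SD := by rw [hα]
      _ ≤ (1/η - L)/2 * SD := this
      _ = (α - L)/2 * SD := by rw [hα]
  -- main scaled inequality
  have main : (α - θ*μ*φ)/2 * ‖x K - xstar‖ ^ 2
        + (K:ℝ) * (1 / (4 * ρ)) * ‖((2 * ρ) • xbar - v) - (ρ • xstar - f' xstar)‖ ^ 2
      ≤ (α - θ*μ)/2 * ‖x 0 - xstar‖ ^ 2
        + (K:ℝ) * (1 / (4 * ρ) - γ₂/2) * ‖v - (ρ • xstar + f' xstar)‖ ^ 2 := by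
    rw [F6']
    linarith [F1, F2', P3, P4a, P4b, P5, P6a, P6b, P6c]
  -- divide by K
  have hgl : (α - θ*μ*φ) / (2 * (K:ℝ)) * ‖x K - xstar‖ ^ 2
        + 1 / (4 * ρ) * ‖((2 * ρ) • xbar - v) - (ρ • xstar - f' xstar)‖ ^ 2
      = (1/(K:ℝ)) * ((α - θ*μ*φ)/2 * ‖x K - xstar‖ ^ 2
        + (K:ℝ) * (1 / (4 * ρ)) * ‖((2 * ρ) • xbar - v) - (ρ • xstar - f' xstar)‖ ^ 2) := by
    field_simp
  have hgr : (α - θ*μ) / (2 * (K:ℝ)) * ‖x 0 - xstar‖ ^ 2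
        + (1 / (4 * ρ) - γ₂/2) * ‖v - (ρ • xstar + f' xstar)‖ ^ 2
      = (1/(K:ℝ)) * ((α - θ*μ)/2 * ‖x 0 - xstar‖ ^ 2
        + (K:ℝ) * (1 / (4 * ρ) - γ₂/2) * ‖v - (ρ • xstar + f' xstar)‖ ^ 2) := by
    field_simp
  rw [hgl, hgr]
  exact mul_le_mul_of_nonneg_left main (by positivity)

set_option maxHeartbeats 1000000 in
lemma reflection_isometry {m : ℕ} (hm : 0 < m) (e : Fin m → E) :
    ∑ i, ‖(2/(m:ℝ)) • (∑ j, e j) - e i‖ ^ 2 = ∑ i, ‖e i‖ ^ 2 := by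
  have hm0 : (m:ℝ) ≠ 0 := by positivity
  have expand : ∀ i : Fin m, ‖(2/(m:ℝ)) • (∑ j, e j) - e i‖ ^ 2
      = (2/(m:ℝ)) ^ 2 * ‖∑ j, e j‖ ^ 2 - (2 * (2/(m:ℝ))) * ⟪∑ j, e j, e i⟫ + ‖e i‖ ^ 2 := by
    intro i
    rw [norm_sub_sq_real, norm_smul, Real.norm_eq_abs, mul_pow, sq_abs, real_inner_smul_left]
    ring
  rw [Finset.sum_congr rfl (fun i _ => expand i)]
  have hS : ∑ i, ⟪∑ j, e j, e i⟫ = ‖∑ j, e j‖ ^ 2 := by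
    rw [← inner_sum, real_inner_self_eq_norm_sq]
  rw [Finset.sum_add_distrib, Finset.sum_sub_distrib]
  simp only [← Finset.mul_sum]
  rw [hS, Finset.sum_const, Finset.card_univ, Fintype.card_fin, nsmul_eq_mul]
  field_simp
  ring

set_option maxHeartbeats 4000000 in
/-- Theorem 1 of the paper: linear convergence of GPDMM for strongly convex clients. -/
theorem gpdmm_linear_convergence {d m K : ℕ} (hm : 0 < m) (hK : 1 ≤ K)
    (f : Fin m → EuclideanSpace ℝ (Fin d) → ℝ)
    (f' : Fin m → EuclideanSpace ℝ (Fin d) → EuclideanSpace ℝ (Fin d))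
    (L μ : ℝ) (hL : 0 < L) (hμ : 0 < μ) (hμL : μ ≤ L)
    (hdiff : ∀ i x, HasGradientAt (f i) (f' i x) x)
    (hdescent : ∀ i x y, f i y ≤ f i x + ⟪f' i x, y - x⟫ + L / 2 * ‖x - y‖ ^ 2)
    (hcoco : ∀ i x y, f i y ≥ f i x + ⟪f' i x, y - x⟫ + 1 / (2 * L) * ‖f' i x - f' i y‖ ^ 2)
    (hstrong : ∀ i x y, f i y ≥ f i x + ⟪f' i x, y - x⟫ + μ / 2 * ‖x - y‖ ^ 2)
    (η ρ : ℝ) (hη : 0 < η) (hηL : L < 1 / η) (hρ : 0 < ρ)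
    -- GPDMM iterates : xi i r k = xᵢ^{r,k}, xbar i r = x̄ᵢ^{r,K},
    -- lamis i r = λ_{i|s}^r, lamsi i r = λ_{s|i}^r, xs r = x_s^r
    (xi : Fin m → ℕ → ℕ → EuclideanSpace ℝ (Fin d))
    (xbar : Fin m → ℕ → EuclideanSpace ℝ (Fin d))
    (lamis lamsi : Fin m → ℕ → EuclideanSpace ℝ (Fin d))
    (xs : ℕ → EuclideanSpace ℝ (Fin d))
    (hinit : ∀ i, ∀ r ≥ 1, xi i r 0 = xi i (r - 1) K)
    (hinner : ∀ i, ∀ r ≥ 1, ∀ k < K, xi i r (k + 1) =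
      xi i r k - (1 / (1 / η + ρ)) • (f' i (xi i r k) + ρ • (xi i r k - xs r) + lamsi i r))
    (hxbar : ∀ i, ∀ r ≥ 1, xbar i r = (1 / (K : ℝ)) • ∑ k ∈ Finset.range K, xi i r (k + 1))
    (hlamis : ∀ i, ∀ r ≥ 1, lamis i (r + 1) = ρ • (xs r - xbar i r) - lamsi i r)
    (hxs : ∀ r ≥ 1, xs (r + 1) = (1 / (m : ℝ)) • ∑ i, (xbar i r - (1 / ρ) • lamis i (r + 1)))
    (hlamsi : ∀ i, ∀ r ≥ 1, lamsi i (r + 1) = ρ • (xbar i r - xs (r + 1)) - lamis i (r + 1))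
    -- KKT point
    (xstar : EuclideanSpace ℝ (Fin d)) (lamstar : Fin m → EuclideanSpace ℝ (Fin d))
    (hKKTgrad : ∀ i, f' i xstar = lamstar i)
    (hKKTsum : ∑ i, lamstar i = 0)
    -- parameters
    (θ φ : ℝ) (hθ : θ ∈ Set.Ioo (0 : ℝ) 1) (hφ : φ ∈ Set.Ioo (0 : ℝ) 1)
    (hcond : θ * μ * φ / (4 * ρ ^ 2) < 1 / (4 * ρ))
    (γ₁ γ₂ β : ℝ)
    (hγ₁ : γ₁ = min ((1 - θ) / (2 * L * η ^ 2)) ((1 / η - L) / 2))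
    (hγ₂ : γ₂ = min (θ * μ * φ / (2 * ρ ^ 2)) (γ₁ * η ^ 2 / 2))
    (hβ : β = max ((1 / (4 * ρ) - γ₂ / 2) / (1 / (4 * ρ)))
                  ((1 / η - θ * μ) / (1 / η - θ * μ * φ))) :
    (0 < β ∧ β < 1) ∧
      ∀ r ≥ 1,
        (∑ i, ((1 / η - θ * μ) / (2 * (K : ℝ)) * ‖xi i r K - xstar‖ ^ 2
            + (1 / (4 * ρ) - γ₂ / 2) *
                ‖ρ • (xbar i (r + 1) - xstar) + (lamis i (r + 2) - lamstar i)‖ ^ 2))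
          ≤ β *
            ∑ i, ((1 / η - θ * μ) / (2 * (K : ℝ)) * ‖xi i (r - 1) K - xstar‖ ^ 2
              + (1 / (4 * ρ) - γ₂ / 2) *
                  ‖ρ • (xbar i r - xstar) + (lamis i (r + 1) - lamstar i)‖ ^ 2) := by
  obtain ⟨hθ0, hθ1⟩ := hθ
  obtain ⟨hφ0, hφ1⟩ := hφ
  have hm0 : (m:ℝ) ≠ 0 := by positivity
  have hKpos : (0:ℝ) < K := by exact_mod_cast hK
  have hK0 : (K:ℝ) ≠ 0 := ne_of_gt hKpos
  have hρ0 : ρ ≠ 0 := ne_of_gt hρ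
  have hη2 : (0:ℝ) < η ^ 2 := by positivity
  -- parameter inequalities
  have hγ₁a : γ₁ ≤ (1 - θ) / (2 * L * η ^ 2) := hγ₁ ▸ min_le_left _ _
  have hγ₁b : γ₁ ≤ (1 / η - L) / 2 := hγ₁ ▸ min_le_right _ _
  have hγ₁pos : 0 < γ₁ := by
    rw [hγ₁]
    exact lt_min (div_pos (by linarith) (by positivity)) (div_pos (by linarith) (by norm_num))
  have hγ₂a : γ₂ ≤ θ * μ * φ / (2 * ρ ^ 2) := hγ₂ ▸ min_le_left _ _
  have hγ₂b : γ₂ ≤ γ₁ * η ^ 2 / 2 := hγ₂ ▸ min_le_right _ _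
  have hγ₂pos : 0 < γ₂ := by
    rw [hγ₂]
    refine lt_min (div_pos ?_ (by positivity)) (by positivity)
    exact mul_pos (mul_pos hθ0 hμ) hφ0
  have hγ₂ρ : γ₂ * ρ ^ 2 ≤ θ * μ * φ / 2 := by
    have h := mul_le_mul_of_nonneg_right hγ₂a (sq_nonneg ρ)
    have e : θ * μ * φ / (2 * ρ ^ 2) * ρ ^ 2 = θ * μ * φ / 2 := by
      field_simp
    linarith [h, e ▸ h]
  have hγ₂L : 2 * γ₂ ≤ (1 - θ) / (2 * L) := by
    have h1 : 2 * γ₂ ≤ γ₁ * η ^ 2 := by linarith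
    have h2 : γ₁ * η ^ 2 ≤ (1 - θ) / (2 * L * η ^ 2) * η ^ 2 :=
      mul_le_mul_of_nonneg_right hγ₁a hη2.le
    have e : (1 - θ) / (2 * L * η ^ 2) * η ^ 2 = (1 - θ) / (2 * L) := by
      field_simp
    linarith [e ▸ h2]
  have hγ₂η : 2 * γ₂ * (1 / η) ^ 2 ≤ (1 / η - L) / 2 := by
    have h1 : 2 * γ₂ ≤ γ₁ * η ^ 2 := by linarith
    have h2 : 2 * γ₂ * (1 / η) ^ 2 ≤ γ₁ * η ^ 2 * (1 / η) ^ 2 :=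
      mul_le_mul_of_nonneg_right h1 (by positivity)
    have e : γ₁ * η ^ 2 * (1 / η) ^ 2 = γ₁ := by
      field_simp
    linarith [e ▸ h2, hγ₁b]
  -- β facts
  have hθμ : θ * μ < 1 / η := by nlinarith
  have hθμφ : θ * μ * φ < θ * μ := by nlinarith [mul_pos hθ0 hμ]
  have hθμφpos : 0 < θ * μ * φ := by positivity
  have hb2pos : 0 < 1 / η - θ * μ := by linarith
  have hb2φpos : 0 < 1 / η - θ * μ * φ := by linarith
  have h4ρpos : (0:ℝ) < 1 / (4 * ρ) := by positivity
  have hcb : γ₂ / 2 < 1 / (4 * ρ) := by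
    have e : θ * μ * φ / (2 * ρ ^ 2) / 2 = θ * μ * φ / (4 * ρ ^ 2) := by ring
    linarith [hγ₂a, hcond, e ▸ (by linarith [hγ₂a] : γ₂ / 2 ≤ θ * μ * φ / (2 * ρ ^ 2) / 2)]
  have hcbpos : 0 < 1 / (4 * ρ) - γ₂ / 2 := by linarith
  have hβ1pos : 0 < (1 / (4 * ρ) - γ₂ / 2) / (1 / (4 * ρ)) := div_pos hcbpos h4ρpos
  have hβ1lt : (1 / (4 * ρ) - γ₂ / 2) / (1 / (4 * ρ)) < 1 :=
    (div_lt_one h4ρpos).mpr (by linarith)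
  have hβ2pos : 0 < (1 / η - θ * μ) / (1 / η - θ * μ * φ) := div_pos hb2pos hb2φpos
  have hβ2lt : (1 / η - θ * μ) / (1 / η - θ * μ * φ) < 1 :=
    (div_lt_one hb2φpos).mpr (by linarith)
  have hβpos : 0 < β := hβ ▸ lt_max_of_lt_left hβ1pos
  have hβlt : β < 1 := hβ ▸ max_lt hβ1lt hβ2lt
  have hββ1 : (1 / (4 * ρ) - γ₂ / 2) / (1 / (4 * ρ)) ≤ β := hβ ▸ le_max_left _ _
  have hββ2 : (1 / η - θ * μ) / (1 / η - θ * μ * φ) ≤ β := hβ ▸ le_max_right _ _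
  refine ⟨⟨hβpos, hβlt⟩, ?_⟩
  intro r hr
  have hηρ : (0:ℝ) < 1 / η + ρ := by positivity
  -- rewrite the inner update
  have hupd : ∀ i : Fin m, ∀ k < K, f' i (xi i r k)
      = (1 / η) • (xi i r k - xi i r (k + 1)) - ρ • xi i r (k + 1)
        + (ρ • xs r - lamsi i r) := by
    intro i k hk
    have h2 : (1 / η + ρ) • (xi i r k - xi i r (k + 1))
        = f' i (xi i r k) + ρ • (xi i r k - xs r) + lamsi i r := by
      rw [hinner i r hr k hk, sub_sub_cancel, smul_smul, mul_one_div_cancel (ne_of_gt hηρ),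
        one_smul]
    have h3 : f' i (xi i r k) = (1 / η + ρ) • (xi i r k - xi i r (k + 1))
        - ρ • (xi i r k - xs r) - lamsi i r := by
      rw [h2]; abel
    rw [h3]; module
  -- per-node key inequality
  have key : ∀ i : Fin m,
      (1 / η - θ * μ * φ) / (2 * (K:ℝ)) * ‖xi i r K - xstar‖ ^ 2
        + 1 / (4 * ρ) * ‖((2 * ρ) • xbar i r - (ρ • xs r - lamsi i r))
            - (ρ • xstar - lamstar i)‖ ^ 2
      ≤ (1 / η - θ * μ) / (2 * (K:ℝ)) * ‖xi i (r - 1) K - xstar‖ ^ 2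
        + (1 / (4 * ρ) - γ₂ / 2) * ‖(ρ • xs r - lamsi i r)
            - (ρ • xstar + lamstar i)‖ ^ 2 := by
    intro i
    have h := gpdmm_perNode K hK (f i) (f' i) L μ hL hμ (hdescent i) (hcoco i) (hstrong i)
      η ρ θ φ γ₂ hη hηL hρ hθ0 hθ1 hφ0 hφ1 hγ₂pos.le hγ₂ρ hγ₂L hγ₂η
      (xi i r) (ρ • xs r - lamsi i r) xstar (hupd i) (xbar i r) (hxbar i r hr)
    rw [hKKTgrad i, hinit i r hr] at h
    exact h
  -- residual identifications
  have hbr : ∀ i : Fin m, ρ • (xbar i r - xstar) + (lamis i (r + 1) - lamstar i)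
      = (ρ • xs r - lamsi i r) - (ρ • xstar + lamstar i) := by
    intro i; rw [hlamis i r hr]; module
  have hbr1 : ∀ i : Fin m, ρ • (xbar i (r + 1) - xstar) + (lamis i (r + 2) - lamstar i)
      = (ρ • xs (r + 1) - lamsi i (r + 1)) - (ρ • xstar + lamstar i) := by
    intro i; rw [hlamis i (r + 1) (by omega)]; module
  -- the reflected variables
  have hWwv : ∀ j : Fin m, (2 * ρ) • xbar j r - (ρ • xs r - lamsi j r)
      = ρ • xbar j r - lamis j (r + 1) := by
    intro j; rw [hlamis j r hr]; module
  have hxs1 : (m:ℝ) • (ρ • xs (r + 1)) = ∑ j, (ρ • xbar j r - lamis j (r + 1)) := by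
    have h1 : (m:ℝ) • xs (r + 1) = ∑ j, (xbar j r - (1 / ρ) • lamis j (r + 1)) := by
      rw [hxs r hr, smul_smul, mul_one_div_cancel hm0, one_smul]
    have h2 : ρ • ((m:ℝ) • xs (r + 1)) = ∑ j, (ρ • xbar j r - lamis j (r + 1)) := by
      rw [h1, Finset.smul_sum]
      refine Finset.sum_congr rfl (fun j _ => ?_)
      rw [smul_sub, smul_smul, mul_one_div_cancel hρ0, one_smul]
    rw [← h2, smul_comm]
  have hstarsum : ∑ j : Fin m, (ρ • xstar - lamstar j) = (m:ℝ) • (ρ • xstar) := by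
    rw [Finset.sum_sub_distrib, hKKTsum, sub_zero, Finset.sum_const, Finset.card_univ,
      Fintype.card_fin, Nat.cast_smul_eq_nsmul]
  have hesum : ∑ j, (((2 * ρ) • xbar j r - (ρ • xs r - lamsi j r)) - (ρ • xstar - lamstar j))
      = (m:ℝ) • (ρ • xs (r + 1)) - (m:ℝ) • (ρ • xstar) := by
    rw [Finset.sum_sub_distrib, Finset.sum_congr rfl (fun j _ => hWwv j), hxs1, hstarsum]
  have hmm : (2 / (m:ℝ)) * (m:ℝ) = 2 := by field_simp
  have hwsum : ∀ i : Fin m, (ρ • xs (r + 1) - lamsi i (r + 1)) - (ρ • xstar + lamstar i)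
      = (2 / (m:ℝ)) • (∑ j, (((2 * ρ) • xbar j r - (ρ • xs r - lamsi j r))
            - (ρ • xstar - lamstar j)))
        - (((2 * ρ) • xbar i r - (ρ • xs r - lamsi i r)) - (ρ • xstar - lamstar i)) := by
    intro i
    have hc1 : (2 / (m:ℝ)) • ((m:ℝ) • (ρ • xs (r + 1))) = (2:ℝ) • (ρ • xs (r + 1)) := by
      rw [smul_smul, hmm]
    have hc2 : (2 / (m:ℝ)) • ((m:ℝ) • (ρ • xstar)) = (2:ℝ) • (ρ • xstar) := by
      rw [smul_smul, hmm]
    rw [hlamsi i r hr, hesum, smul_sub, smul_sub, hc1, hc2, hWwv i]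
    module
  -- isometry of the reflection step
  have hiso : ∑ i, ‖(2 / (m:ℝ)) • (∑ j, (((2 * ρ) • xbar j r - (ρ • xs r - lamsi j r))
          - (ρ • xstar - lamstar j)))
        - (((2 * ρ) • xbar i r - (ρ • xs r - lamsi i r)) - (ρ • xstar - lamstar i))‖ ^ 2
      = ∑ i, ‖((2 * ρ) • xbar i r - (ρ • xs r - lamsi i r)) - (ρ • xstar - lamstar i)‖ ^ 2 :=
    reflection_isometry hm
      (fun j => ((2 * ρ) • xbar j r - (ρ • xs r - lamsi j r)) - (ρ • xstar - lamstar j))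
  -- per-node coefficient comparison
  have hcAe : (1 / η - θ * μ) / (2 * (K:ℝ))
      = ((1 / η - θ * μ) / (1 / η - θ * μ * φ)) * ((1 / η - θ * μ * φ) / (2 * (K:ℝ))) := by
    rw [div_mul_div_comm, mul_comm (1 / η - θ * μ) (1 / η - θ * μ * φ),
      mul_div_mul_left _ _ hb2φpos.ne']
  have hcBe : 1 / (4 * ρ) - γ₂ / 2
      = ((1 / (4 * ρ) - γ₂ / 2) / (1 / (4 * ρ))) * (1 / (4 * ρ)) := by
    field_simp
  have stepi : ∀ i : Fin m,
      (1 / η - θ * μ) / (2 * (K:ℝ)) * ‖xi i r K - xstar‖ ^ 2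
        + (1 / (4 * ρ) - γ₂ / 2) * ‖((2 * ρ) • xbar i r - (ρ • xs r - lamsi i r))
            - (ρ • xstar - lamstar i)‖ ^ 2
      ≤ β * ((1 / η - θ * μ * φ) / (2 * (K:ℝ)) * ‖xi i r K - xstar‖ ^ 2
          + 1 / (4 * ρ) * ‖((2 * ρ) • xbar i r - (ρ • xs r - lamsi i r))
              - (ρ • xstar - lamstar i)‖ ^ 2) := by
    intro i
    have hcA'nn : 0 ≤ (1 / η - θ * μ * φ) / (2 * (K:ℝ)) * ‖xi i r K - xstar‖ ^ 2 := by
      have : 0 ≤ (1 / η - θ * μ * φ) / (2 * (K:ℝ)) := by positivity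
      positivity
    have h1 : (1 / η - θ * μ) / (2 * (K:ℝ)) * ‖xi i r K - xstar‖ ^ 2
        ≤ β * ((1 / η - θ * μ * φ) / (2 * (K:ℝ)) * ‖xi i r K - xstar‖ ^ 2) := by
      calc (1 / η - θ * μ) / (2 * (K:ℝ)) * ‖xi i r K - xstar‖ ^ 2
          = ((1 / η - θ * μ) / (1 / η - θ * μ * φ))
            * ((1 / η - θ * μ * φ) / (2 * (K:ℝ)) * ‖xi i r K - xstar‖ ^ 2) := by
            rw [hcAe]; ring
        _ ≤ β * ((1 / η - θ * μ * φ) / (2 * (K:ℝ)) * ‖xi i r K - xstar‖ ^ 2) :=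
            mul_le_mul_of_nonneg_right hββ2 hcA'nn
    have h2 : (1 / (4 * ρ) - γ₂ / 2) * ‖((2 * ρ) • xbar i r - (ρ • xs r - lamsi i r))
            - (ρ • xstar - lamstar i)‖ ^ 2
        ≤ β * (1 / (4 * ρ) * ‖((2 * ρ) • xbar i r - (ρ • xs r - lamsi i r))
            - (ρ • xstar - lamstar i)‖ ^ 2) := by
      calc (1 / (4 * ρ) - γ₂ / 2) * ‖((2 * ρ) • xbar i r - (ρ • xs r - lamsi i r))
              - (ρ • xstar - lamstar i)‖ ^ 2
          = ((1 / (4 * ρ) - γ₂ / 2) / (1 / (4 * ρ)))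
            * (1 / (4 * ρ) * ‖((2 * ρ) • xbar i r - (ρ • xs r - lamsi i r))
                - (ρ • xstar - lamstar i)‖ ^ 2) := by
            field_simp
        _ ≤ _ := mul_le_mul_of_nonneg_right hββ1 (by positivity)
    linarith
  -- final chain
  calc (∑ i, ((1 / η - θ * μ) / (2 * (K:ℝ)) * ‖xi i r K - xstar‖ ^ 2
        + (1 / (4 * ρ) - γ₂ / 2) *
            ‖ρ • (xbar i (r + 1) - xstar) + (lamis i (r + 2) - lamstar i)‖ ^ 2))
      = ∑ i, ((1 / η - θ * μ) / (2 * (K:ℝ)) * ‖xi i r K - xstar‖ ^ 2)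
        + (1 / (4 * ρ) - γ₂ / 2) *
          ∑ i, ‖(2 / (m:ℝ)) • (∑ j, (((2 * ρ) • xbar j r - (ρ • xs r - lamsi j r))
              - (ρ • xstar - lamstar j)))
            - (((2 * ρ) • xbar i r - (ρ • xs r - lamsi i r)) - (ρ • xstar - lamstar i))‖ ^ 2 := by
        rw [Finset.sum_add_distrib, Finset.mul_sum]
        congr 1
        refine Finset.sum_congr rfl (fun i _ => ?_)
        rw [hbr1 i, hwsum i]
    _ = ∑ i, ((1 / η - θ * μ) / (2 * (K:ℝ)) * ‖xi i r K - xstar‖ ^ 2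
          + (1 / (4 * ρ) - γ₂ / 2) * ‖((2 * ρ) • xbar i r - (ρ • xs r - lamsi i r))
              - (ρ • xstar - lamstar i)‖ ^ 2) := by
        rw [hiso, Finset.sum_add_distrib, Finset.mul_sum]
    _ ≤ ∑ i, (β * ((1 / η - θ * μ * φ) / (2 * (K:ℝ)) * ‖xi i r K - xstar‖ ^ 2
          + 1 / (4 * ρ) * ‖((2 * ρ) • xbar i r - (ρ • xs r - lamsi i r))
              - (ρ • xstar - lamstar i)‖ ^ 2)) :=
        Finset.sum_le_sum (fun i _ => stepi i)
    _ = β * ∑ i, ((1 / η - θ * μ * φ) / (2 * (K:ℝ)) * ‖xi i r K - xstar‖ ^ 2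
          + 1 / (4 * ρ) * ‖((2 * ρ) • xbar i r - (ρ • xs r - lamsi i r))
              - (ρ • xstar - lamstar i)‖ ^ 2) := by
        rw [Finset.mul_sum]
    _ ≤ β * ∑ i, ((1 / η - θ * μ) / (2 * (K:ℝ)) * ‖xi i (r - 1) K - xstar‖ ^ 2
          + (1 / (4 * ρ) - γ₂ / 2) * ‖(ρ • xs r - lamsi i r)
              - (ρ • xstar + lamstar i)‖ ^ 2) :=
        mul_le_mul_of_nonneg_left (Finset.sum_le_sum (fun i _ => key i)) hβpos.le
    _ = β * ∑ i, ((1 / η - θ * μ) / (2 * (K:ℝ)) * ‖xi i (r - 1) K - xstar‖ ^ 2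
          + (1 / (4 * ρ) - γ₂ / 2) *
              ‖ρ • (xbar i r - xstar) + (lamis i (r + 1) - lamstar i)‖ ^ 2) := by
        congr 1
        refine Finset.sum_congr rfl (fun i _ => ?_)
        rw [hbr i]
end

section
/- Suppose each f_i is convex (μ = 0) and the GPDMM iterates are generated by the GPDMM update equations for all outer iterations r ≥ 1, with 1/η > L, and let (x*, {λ*_{i|s}}) be a KKT point. For R ≥ 1 define the running average x̄_i^{R} = (1/R)∑_{r=1}^R x̄_i^{r,K}, and let C = ∑_{i=1}^m [ (1/(2ηK))‖x_i^{0,K} − x*‖² + (1/(4ρ))‖ρ(x̄_i^{1,K} − x*) + (λ_{i|s}^{2} − λ*_{i|s})‖² ]. Then for every R ≥ 1: ∑_{i=1}^m [ f_i(x̄_i^{R}) − (λ*_{i|s})ᵀ x̄_i^{R} − f_i(x*) ] ≤ C/R; in particular this quantity is nonnegative and is O(1/R) as R → ∞. -/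
open scoped RealInnerProductSpace

section GpdmmHelpers
variable {E : Type*} [NormedAddCommGroup E] [InnerProductSpace ℝ E]

lemma gpdmm_three_point (a b c : E) :
    2 * ⟪b - a, b - c⟫ = ‖b - a‖^2 + ‖b - c‖^2 - ‖a - c‖^2 := by
  simp only [← real_inner_self_eq_norm_sq, inner_sub_left, inner_sub_right]
  rw [real_inner_comm a b, real_inner_comm c b, real_inner_comm c a]
  ring

lemma gpdmm_inner_diff (u v : E) (ρ : ℝ) :
    ‖ρ • u + v‖^2 - ‖ρ • u - v‖^2 = 4 * ρ * ⟪v, u⟫ := by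
  rw [norm_add_sq_real, norm_sub_sq_real, real_inner_smul_left, real_inner_comm u v]
  ring

lemma gpdmm_sum_norm_sq {ι : Type*} (s : Finset ι) (x : ι → E) (xb : E)
    (h : ∑ k ∈ s, x k = (s.card : ℝ) • xb) :
    (s.card : ℝ) * ‖xb‖^2 ≤ ∑ k ∈ s, ‖x k‖^2 := by
  have h0 : (0:ℝ) ≤ ∑ k ∈ s, ‖x k - xb‖^2 := Finset.sum_nonneg fun k _ => sq_nonneg _
  have hexp : ∑ k ∈ s, ‖x k - xb‖^2
      = ∑ k ∈ s, ‖x k‖^2 - 2 * ⟪∑ k ∈ s, x k, xb⟫ + (s.card : ℝ) * ‖xb‖^2 := by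
    rw [sum_inner]
    simp only [norm_sub_sq_real, Finset.sum_add_distrib, Finset.sum_sub_distrib,
      Finset.sum_const, nsmul_eq_mul, Finset.mul_sum]
  have hin : ⟪∑ k ∈ s, x k, xb⟫ = (s.card : ℝ) * ‖xb‖^2 := by
    rw [h, real_inner_smul_left, real_inner_self_eq_norm_sq]
  rw [hexp, hin] at h0
  linarith

lemma gpdmm_sum_inner_quad {ι : Type*} (s : Finset ι) (x : ι → E) (xb p q : E)
    (h : ∑ k ∈ s, x k = (s.card : ℝ) • xb) :
    (s.card : ℝ) * ⟪xb - p, xb - q⟫ ≤ ∑ k ∈ s, ⟪x k - p, x k - q⟫ := by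
  have key := gpdmm_sum_norm_sq s x xb h
  have hexp : ∀ y : E, ⟪y - p, y - q⟫ = ‖y‖^2 - ⟪y, q⟫ - ⟪p, y⟫ + ⟪p, q⟫ := by
    intro y
    simp only [inner_sub_left, inner_sub_right, real_inner_self_eq_norm_sq]
    ring
  have h1 : ∑ k ∈ s, ⟪x k - p, x k - q⟫
      = ∑ k ∈ s, ‖x k‖^2 - ⟪∑ k ∈ s, x k, q⟫ - ⟪p, ∑ k ∈ s, x k⟫ + (s.card:ℝ) * ⟪p, q⟫ := by
    rw [sum_inner, inner_sum]
    simp only [hexp, Finset.sum_add_distrib, Finset.sum_sub_distrib, Finset.sum_const,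
      nsmul_eq_mul]
  rw [h1, hexp, h, real_inner_smul_left, real_inner_smul_right]
  linarith

/-- Jensen-type inequality from first-order convexity. -/
lemma gpdmm_jensen {ι : Type*} (s : Finset ι) (f : E → ℝ) (gb : E) (x : ι → E) (xb : E)
    (hsum : ∑ k ∈ s, x k = (s.card : ℝ) • xb)
    (hcvx : ∀ y, f y ≥ f xb + ⟪gb, y - xb⟫) :
    (s.card : ℝ) * f xb ≤ ∑ k ∈ s, f (x k) := by
  have h1 : ∀ k ∈ s, f xb + ⟪gb, x k - xb⟫ ≤ f (x k) := fun k _ => hcvx (x k)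
  have h2 := Finset.sum_le_sum h1
  have h3 : ∑ k ∈ s, ⟪gb, x k - xb⟫ = 0 := by
    rw [← inner_sum]
    have : ∑ k ∈ s, (x k - xb) = 0 := by
      rw [Finset.sum_sub_distrib, Finset.sum_const, hsum, ← Nat.cast_smul_eq_nsmul ℝ,
        sub_self]
    rw [this, inner_zero_right]
  rw [Finset.sum_add_distrib, Finset.sum_const, h3, nsmul_eq_mul] at h2
  linarith

lemma gpdmm_step1 (f : E → ℝ) (g : E) (L η ρ : ℝ) (hη : 0 < η) (hηL : L < 1/η)
    (a b z xc lam : E)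
    (hb : b = a - (1/(1/η+ρ)) • (g + ρ • (a - xc) + lam))
    (hρc : 1/η + ρ ≠ 0)
    (hdes : f b ≤ f a + ⟪g, b - a⟫ + L/2 * ‖a - b‖^2)
    (hcvx : f z ≥ f a + ⟪g, z - a⟫) :
    f b + ⟪lam, b - z⟫ + ρ * ⟪b - xc, b - z⟫
      ≤ f z + (1/(2*η)) * (‖a - z‖^2 - ‖b - z‖^2) := by
  have hg : g = (1/η) • (a - b) - ρ • (b - xc) - lam := by
    have hab : a - b = (1/(1/η+ρ)) • (g + ρ • (a - xc) + lam) := by rw [hb]; module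
    have h2 : (1/η+ρ) • (a - b) = g + ρ • (a - xc) + lam := by
      rw [hab, smul_smul, mul_one_div, div_self hρc, one_smul]
    have h3 : g = (1/η+ρ) • (a - b) - ρ • (a - xc) - lam := by rw [h2]; abel
    rw [h3]; module
  have hip : ⟪g, b - z⟫
      = (1/η) * ⟪a - b, b - z⟫ - ρ * ⟪b - xc, b - z⟫ - ⟪lam, b - z⟫ := by
    rw [hg, inner_sub_left, inner_sub_left, real_inner_smul_left, real_inner_smul_left]
  have h3 : ⟪a - b, b - z⟫ = -⟪b - a, b - z⟫ := by
    rw [show a - b = -(b - a) by abel, inner_neg_left]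
  have h4 := gpdmm_three_point a b z
  have h4' : (1/η) * ⟪b - a, b - z⟫
      = (1/(2*η)) * (‖b - a‖^2 + ‖b - z‖^2 - ‖a - z‖^2) := by
    rw [← h4]; ring
  have h5 : ‖b - a‖^2 = ‖a - b‖^2 := by rw [norm_sub_rev]
  have hsplit : ⟪g, b - a⟫ - ⟪g, z - a⟫ = ⟪g, b - z⟫ := by
    rw [← inner_sub_right]; congr 1; abel
  have hle : L/2 * ‖a - b‖^2 ≤ 1/(2*η) * ‖a - b‖^2 := by
    have h6 : L/2 ≤ 1/(2*η) := by
      have : (1:ℝ)/(2*η) = (1/η)/2 := by ring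
      linarith
    exact mul_le_mul_of_nonneg_right h6 (sq_nonneg _)
  have key : f b ≤ f z + ⟪g, b - z⟫ + L/2 * ‖a - b‖^2 := by linarith
  rw [hip, h3] at key
  rw [h5] at h4'
  have hgoal : 1/η * ⟪b - a, b - z⟫ + 1/(2*η) * (‖a - z‖^2 - ‖b - z‖^2)
      = 1/(2*η) * ‖a - b‖^2 := by rw [h4']; ring
  nlinarith [key, hle, hgoal]

lemma gpdmm_step2 {K : ℕ} (f : E → ℝ) (gb : E) (x : ℕ → E)
    (xb z xc lam : E) (ρ η : ℝ) (hρ : 0 ≤ ρ)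
    (hsum : ∑ k ∈ Finset.range K, x (k+1) = (K:ℝ) • xb)
    (hcvx : ∀ y, f y ≥ f xb + ⟪gb, y - xb⟫)
    (hstep : ∀ k < K, f (x (k+1)) + ⟪lam, x (k+1) - z⟫ + ρ * ⟪x (k+1) - xc, x (k+1) - z⟫
        ≤ f z + (1/(2*η)) * (‖x k - z‖^2 - ‖x (k+1) - z‖^2)) :
    (K:ℝ) * (f xb + ⟪lam, xb - z⟫ + ρ * ⟪xb - xc, xb - z⟫)
      ≤ (K:ℝ) * f z + (1/(2*η)) * (‖x 0 - z‖^2 - ‖x K - z‖^2) := by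
  have hcard : ((Finset.range K).card : ℝ) = (K:ℝ) := by simp
  have htot : ∑ k ∈ Finset.range K,
        (f (x (k+1)) + ⟪lam, x (k+1) - z⟫ + ρ * ⟪x (k+1) - xc, x (k+1) - z⟫)
      ≤ (K:ℝ) * f z + (1/(2*η)) * (‖x 0 - z‖^2 - ‖x K - z‖^2) := by
    calc ∑ k ∈ Finset.range K,
          (f (x (k+1)) + ⟪lam, x (k+1) - z⟫ + ρ * ⟪x (k+1) - xc, x (k+1) - z⟫)
        ≤ ∑ k ∈ Finset.range K,
          (f z + (1/(2*η)) * (‖x k - z‖^2 - ‖x (k+1) - z‖^2)) :=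
          Finset.sum_le_sum fun k hk => hstep k (Finset.mem_range.mp hk)
      _ = (K:ℝ) * f z + (1/(2*η)) * (‖x 0 - z‖^2 - ‖x K - z‖^2) := by
          rw [Finset.sum_add_distrib, Finset.sum_const, ← Finset.mul_sum,
            Finset.sum_range_sub' (fun k => ‖x k - z‖^2), nsmul_eq_mul, hcard]
  have hf : (K:ℝ) * f xb ≤ ∑ k ∈ Finset.range K, f (x (k+1)) := by
    have := gpdmm_jensen (Finset.range K) f gb (fun k => x (k+1)) xb
      (by rw [hcard]; exact hsum) hcvx
    rwa [hcard] at this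
  have hlam : ∑ k ∈ Finset.range K, ⟪lam, x (k+1) - z⟫ = (K:ℝ) * ⟪lam, xb - z⟫ := by
    rw [← inner_sum]
    have : ∑ k ∈ Finset.range K, (x (k+1) - z) = (K:ℝ) • (xb - z) := by
      rw [Finset.sum_sub_distrib, Finset.sum_const, hsum,
        ← Nat.cast_smul_eq_nsmul ℝ, Finset.card_range, smul_sub]
    rw [this, real_inner_smul_right]
  have hquad : (K:ℝ) * ⟪xb - xc, xb - z⟫
      ≤ ∑ k ∈ Finset.range K, ⟪x (k+1) - xc, x (k+1) - z⟫ := by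
    have := gpdmm_sum_inner_quad (Finset.range K) (fun k => x (k+1)) xb xc z
      (by rw [hcard]; exact hsum)
    rwa [hcard] at this
  have hsplit : ∑ k ∈ Finset.range K,
        (f (x (k+1)) + ⟪lam, x (k+1) - z⟫ + ρ * ⟪x (k+1) - xc, x (k+1) - z⟫)
      = ∑ k ∈ Finset.range K, f (x (k+1)) + ∑ k ∈ Finset.range K, ⟪lam, x (k+1) - z⟫
        + ρ * ∑ k ∈ Finset.range K, ⟪x (k+1) - xc, x (k+1) - z⟫ := by
    rw [Finset.sum_add_distrib, Finset.sum_add_distrib, Finset.mul_sum]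
  rw [hsplit] at htot
  have hρq := mul_le_mul_of_nonneg_left hquad hρ
  nlinarith [htot, hf, hlam, hρq]

end GpdmmHelpers

/-- Reflection identity used for the dual telescoping. -/
lemma gpdmm_reflection {E : Type*} [NormedAddCommGroup E] [InnerProductSpace ℝ E]
    {m : ℕ} (w : Fin m → E) (y : E) (c : ℝ)
    (hsum : ∑ i, w i = ((m:ℝ) * c) • y) :
    ∑ i, ‖(2*c) • y - w i‖^2 = ∑ i, ‖w i‖^2 := by
  have h1 : ∑ i : Fin m, ‖(2*c) • y - w i‖^2
      = ∑ i : Fin m, ‖(2*c) • y‖^2 - 2 * ⟪(2*c) • y, ∑ i, w i⟫ + ∑ i, ‖w i‖^2 := by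
    rw [inner_sum, Finset.mul_sum]
    simp only [norm_sub_sq_real]
    rw [Finset.sum_add_distrib, Finset.sum_sub_distrib]
  rw [h1, hsum, real_inner_smul_right, real_inner_smul_left, real_inner_self_eq_norm_sq,
    Finset.sum_const, Finset.card_univ, Fintype.card_fin, nsmul_eq_mul, norm_smul,
    Real.norm_eq_abs, mul_pow, sq_abs]
  ring

lemma gpdmm_telescope (a : ℕ → ℝ) (R : ℕ) :
    ∑ r ∈ Finset.Icc 1 R, (a r - a (r+1)) = a 1 - a (R+1) := by
  rw [← Finset.Ico_add_one_right_eq_Icc, Finset.sum_Ico_eq_sum_range]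
  have hR1 : R + 1 - 1 = R := by omega
  rw [hR1]
  have h := Finset.sum_range_sub' (fun k => a (1+k)) R
  rw [Nat.add_comm 1 R] at h
  exact h

set_option maxHeartbeats 1000000 in
/-- First claim of Theorem 2 of the paper: sublinear O(1/R) convergence of the GPDMM
primal running averages for general convex clients (μ = 0). -/
theorem gpdmm_sublinear_primal {d m K : ℕ} (hm : 0 < m) (hK : 1 ≤ K)
    (f : Fin m → EuclideanSpace ℝ (Fin d) → ℝ)
    (f' : Fin m → EuclideanSpace ℝ (Fin d) → EuclideanSpace ℝ (Fin d))
    (L : ℝ) (hL : 0 < L)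
    (hdiff : ∀ i x, HasGradientAt (f i) (f' i x) x)
    (hconvex : ∀ i x y, f i y ≥ f i x + ⟪f' i x, y - x⟫)
    (hdescent : ∀ i x y, f i y ≤ f i x + ⟪f' i x, y - x⟫ + L / 2 * ‖x - y‖ ^ 2)
    (hcoco : ∀ i x y, f i y ≥ f i x + ⟪f' i x, y - x⟫ + 1 / (2 * L) * ‖f' i x - f' i y‖ ^ 2)
    (η ρ : ℝ) (hη : 0 < η) (hηL : L < 1 / η) (hρ : 0 < ρ)
    -- GPDMM iterates
    (xi : Fin m → ℕ → ℕ → EuclideanSpace ℝ (Fin d))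
    (xbar : Fin m → ℕ → EuclideanSpace ℝ (Fin d))
    (lamis lamsi : Fin m → ℕ → EuclideanSpace ℝ (Fin d))
    (xs : ℕ → EuclideanSpace ℝ (Fin d))
    (hinit : ∀ i, ∀ r ≥ 1, xi i r 0 = xi i (r - 1) K)
    (hinner : ∀ i, ∀ r ≥ 1, ∀ k < K, xi i r (k + 1) =
      xi i r k - (1 / (1 / η + ρ)) • (f' i (xi i r k) + ρ • (xi i r k - xs r) + lamsi i r))
    (hxbar : ∀ i, ∀ r ≥ 1, xbar i r = (1 / (K : ℝ)) • ∑ k ∈ Finset.range K, xi i r (k + 1))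
    (hlamis : ∀ i, ∀ r ≥ 1, lamis i (r + 1) = ρ • (xs r - xbar i r) - lamsi i r)
    (hxs : ∀ r ≥ 1, xs (r + 1) = (1 / (m : ℝ)) • ∑ i, (xbar i r - (1 / ρ) • lamis i (r + 1)))
    (hlamsi : ∀ i, ∀ r ≥ 1, lamsi i (r + 1) = ρ • (xbar i r - xs (r + 1)) - lamis i (r + 1))
    -- KKT point
    (xstar : EuclideanSpace ℝ (Fin d)) (lamstar : Fin m → EuclideanSpace ℝ (Fin d))
    (hKKTgrad : ∀ i, f' i xstar = lamstar i)
    (hKKTsum : ∑ i, lamstar i = 0)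
    -- the constant C
    (C : ℝ)
    (hC : C = ∑ i, (1 / (2 * η * (K : ℝ)) * ‖xi i 0 K - xstar‖ ^ 2
      + 1 / (4 * ρ) * ‖ρ • (xbar i 1 - xstar) + (lamis i 2 - lamstar i)‖ ^ 2)) :
    ∀ R : ℕ, 1 ≤ R →
      0 ≤ ∑ i, (f i ((1 / (R : ℝ)) • ∑ r ∈ Finset.Icc 1 R, xbar i r)
            - ⟪lamstar i, (1 / (R : ℝ)) • ∑ r ∈ Finset.Icc 1 R, xbar i r⟫
            - f i xstar) ∧
      ∑ i, (f i ((1 / (R : ℝ)) • ∑ r ∈ Finset.Icc 1 R, xbar i r)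
            - ⟪lamstar i, (1 / (R : ℝ)) • ∑ r ∈ Finset.Icc 1 R, xbar i r⟫
            - f i xstar) ≤ C / (R : ℝ) := by
  intro R hR
  have hK0 : ((K:ℝ)) ≠ 0 := by positivity
  have hKpos : (0:ℝ) < (K:ℝ) := by exact_mod_cast (by omega : 0 < K)
  have hRpos : (0:ℝ) < (R:ℝ) := by exact_mod_cast (by omega : 0 < R)
  have hR0 : ((R:ℝ)) ≠ 0 := hRpos.ne'
  have hm0 : ((m:ℝ)) ≠ 0 := by positivity
  have hρc : 1/η + ρ ≠ 0 := by positivity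
  -- Step 3: per-iteration primal bound
  have step3 : ∀ i, ∀ r, 1 ≤ r →
      f i (xbar i r) - f i xstar - ⟪lamis i (r+1), xbar i r - xstar⟫
        ≤ 1/(2*η*(K:ℝ)) * (‖xi i r 0 - xstar‖^2 - ‖xi i r K - xstar‖^2) := by
    intro i r hr
    have hsum : ∑ k ∈ Finset.range K, xi i r (k+1) = (K:ℝ) • xbar i r := by
      rw [hxbar i r hr, smul_smul, mul_one_div, div_self hK0, one_smul]
    have hstep : ∀ k < K, f i (xi i r (k+1)) + ⟪lamsi i r, xi i r (k+1) - xstar⟫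
        + ρ * ⟪xi i r (k+1) - xs r, xi i r (k+1) - xstar⟫
        ≤ f i xstar + (1/(2*η)) * (‖xi i r k - xstar‖^2 - ‖xi i r (k+1) - xstar‖^2) := by
      intro k hk
      exact gpdmm_step1 (f i) (f' i (xi i r k)) L η ρ hη hηL _ _ _ _ _
        (hinner i r hr k hk) hρc (hdescent i (xi i r k) (xi i r (k+1)))
        (hconvex i (xi i r k) xstar)
    have h2 := gpdmm_step2 (f i) (f' i (xbar i r)) (xi i r) (xbar i r) xstar (xs r)
      (lamsi i r) ρ η hρ.le hsum (fun y => hconvex i (xbar i r) y) hstep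
    have hvec : lamsi i r + ρ • (xbar i r - xs r) = -(lamis i (r+1)) := by
      rw [hlamis i r hr]; module
    have hipeq : ⟪lamsi i r, xbar i r - xstar⟫ + ρ * ⟪xbar i r - xs r, xbar i r - xstar⟫
        = -⟪lamis i (r+1), xbar i r - xstar⟫ := by
      rw [← real_inner_smul_left, ← inner_add_left, hvec, inner_neg_left]
    have hKt : (K:ℝ) * (f i (xbar i r) - f i xstar - ⟪lamis i (r+1), xbar i r - xstar⟫)
        ≤ (1/(2*η)) * (‖xi i r 0 - xstar‖^2 - ‖xi i r K - xstar‖^2) := by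
      have h2' : (K:ℝ) * (f i (xbar i r) - ⟪lamis i (r+1), xbar i r - xstar⟫)
          ≤ (K:ℝ) * f i xstar
            + (1/(2*η)) * (‖xi i r 0 - xstar‖^2 - ‖xi i r K - xstar‖^2) := by
        calc (K:ℝ) * (f i (xbar i r) - ⟪lamis i (r+1), xbar i r - xstar⟫)
            = (K:ℝ) * (f i (xbar i r) + ⟪lamsi i r, xbar i r - xstar⟫
              + ρ * ⟪xbar i r - xs r, xbar i r - xstar⟫) := by
                linear_combination (-(K:ℝ)) * hipeq
          _ ≤ _ := h2
      linarith [h2']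
    have hdiv : f i (xbar i r) - f i xstar - ⟪lamis i (r+1), xbar i r - xstar⟫
        ≤ ((1/(2*η)) * (‖xi i r 0 - xstar‖^2 - ‖xi i r K - xstar‖^2)) / (K:ℝ) := by
      rw [le_div_iff₀ hKpos]; linarith [hKt]
    calc f i (xbar i r) - f i xstar - ⟪lamis i (r+1), xbar i r - xstar⟫
        ≤ ((1/(2*η)) * (‖xi i r 0 - xstar‖^2 - ‖xi i r K - xstar‖^2)) / (K:ℝ) := hdiv
      _ = 1/(2*η*(K:ℝ)) * (‖xi i r 0 - xstar‖^2 - ‖xi i r K - xstar‖^2) := by ring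
  -- dual telescoping identity
  have claimPN : ∀ r, 1 ≤ r →
      (∑ i, ‖ρ • (xbar i (r+1) - xstar) + (lamis i (r+1+1) - lamstar i)‖^2)
      = ∑ i, ‖ρ • (xbar i r - xstar) - (lamis i (r+1) - lamstar i)‖^2 := by
    intro r hr
    have hw : ∀ i, ρ • (xbar i (r+1) - xstar) + (lamis i (r+1+1) - lamstar i)
        = (2*ρ) • (xs (r+1) - xstar)
          - (ρ • (xbar i r - xstar) - (lamis i (r+1) - lamstar i)) := by
      intro i
      rw [hlamis i (r+1) (by omega), hlamsi i r hr]
      module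
    have hT : (m:ℝ) • xs (r+1) = ∑ i, (xbar i r - (1/ρ) • lamis i (r+1)) := by
      rw [hxs r hr, smul_smul, mul_one_div, div_self hm0, one_smul]
    have hsumw : ∑ i, (ρ • (xbar i r - xstar) - (lamis i (r+1) - lamstar i))
        = ((m:ℝ)*ρ) • (xs (r+1) - xstar) := by
      have hexpand : ∀ i : Fin m, ρ • (xbar i r - xstar) - (lamis i (r+1) - lamstar i)
          = ρ • (xbar i r - (1/ρ) • lamis i (r+1)) - ρ • xstar + lamstar i := by
        intro i
        have key : ρ • ((1/ρ) • lamis i (r+1)) = lamis i (r+1) := by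
          rw [smul_smul, mul_one_div, div_self hρ.ne', one_smul]
        rw [smul_sub ρ (xbar i r) ((1/ρ) • lamis i (r+1)), key]
        module
      rw [Finset.sum_congr rfl (fun i _ => hexpand i), Finset.sum_add_distrib,
        Finset.sum_sub_distrib, ← Finset.smul_sum, ← hT, hKKTsum, Finset.sum_const,
        Finset.card_univ, Fintype.card_fin, ← Nat.cast_smul_eq_nsmul ℝ]
      module
    calc ∑ i, ‖ρ • (xbar i (r+1) - xstar) + (lamis i (r+1+1) - lamstar i)‖^2
        = ∑ i, ‖(2*ρ) • (xs (r+1) - xstar)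
            - (ρ • (xbar i r - xstar) - (lamis i (r+1) - lamstar i))‖^2 :=
          Finset.sum_congr rfl fun i _ => by rw [hw i]
      _ = ∑ i, ‖ρ • (xbar i r - xstar) - (lamis i (r+1) - lamstar i)‖^2 :=
          gpdmm_reflection _ _ _ hsumw
  -- inner product as difference of squares
  have claimIP : ∀ (i : Fin m) (r : ℕ),
      ⟪lamis i (r+1) - lamstar i, xbar i r - xstar⟫
        = 1/(4*ρ) * (‖ρ • (xbar i r - xstar) + (lamis i (r+1) - lamstar i)‖^2
          - ‖ρ • (xbar i r - xstar) - (lamis i (r+1) - lamstar i)‖^2) := by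
    intro i r
    rw [gpdmm_inner_diff (xbar i r - xstar) (lamis i (r+1) - lamstar i) ρ]
    field_simp
  have hzero : ∑ i, ⟪lamstar i, xstar⟫ = 0 := by
    rw [← sum_inner, hKKTsum, inner_zero_left]
  -- master per-iteration inequality
  have master : ∀ r, 1 ≤ r →
      ∑ i, (f i (xbar i r) - ⟪lamstar i, xbar i r⟫ - f i xstar)
      ≤ ∑ i, (1/(2*η*(K:ℝ)) * (‖xi i r 0 - xstar‖^2 - ‖xi i r K - xstar‖^2))
        + 1/(4*ρ) * ((∑ i, ‖ρ • (xbar i r - xstar) + (lamis i (r+1) - lamstar i)‖^2)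
          - ∑ i, ‖ρ • (xbar i r - xstar) - (lamis i (r+1) - lamstar i)‖^2) := by
    intro r hr
    have hgi : ∀ i : Fin m, f i (xbar i r) - ⟪lamstar i, xbar i r⟫ - f i xstar
        = (f i (xbar i r) - f i xstar - ⟪lamis i (r+1), xbar i r - xstar⟫)
          + ⟪lamis i (r+1) - lamstar i, xbar i r - xstar⟫ - ⟪lamstar i, xstar⟫ := by
      intro i
      simp only [inner_sub_left, inner_sub_right]
      ring
    rw [Finset.sum_congr rfl (fun i _ => hgi i), Finset.sum_sub_distrib,
      Finset.sum_add_distrib, hzero, sub_zero]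
    have hA := Finset.sum_le_sum (fun i (_ : i ∈ Finset.univ) => step3 i r hr)
    have hB : ∑ i, ⟪lamis i (r+1) - lamstar i, xbar i r - xstar⟫
        = 1/(4*ρ) * ((∑ i, ‖ρ • (xbar i r - xstar) + (lamis i (r+1) - lamstar i)‖^2)
          - ∑ i, ‖ρ • (xbar i r - xstar) - (lamis i (r+1) - lamstar i)‖^2) := by
      rw [Finset.sum_congr rfl (fun i _ => claimIP i r), ← Finset.mul_sum,
        Finset.sum_sub_distrib]
    rw [hB]
    linarith [hA]
  -- telescoping the primal distance terms
  have hD : ∀ i : Fin m, ∑ r ∈ Finset.Icc 1 R,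
      (1/(2*η*(K:ℝ)) * (‖xi i r 0 - xstar‖^2 - ‖xi i r K - xstar‖^2))
      ≤ 1/(2*η*(K:ℝ)) * ‖xi i 0 K - xstar‖^2 := by
    intro i
    have hterm : ∀ r : ℕ, 1/(2*η*(K:ℝ)) * (‖xi i r 0 - xstar‖^2 - ‖xi i r K - xstar‖^2)
        = 1/(2*η*(K:ℝ)) * ‖xi i r 0 - xstar‖^2
          - 1/(2*η*(K:ℝ)) * ‖xi i (r+1) 0 - xstar‖^2 := by
      intro r
      have h0 : xi i (r+1) 0 = xi i r K := by
        have := hinit i (r+1) (by omega)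
        simpa using this
      rw [h0]; ring
    have htel : ∑ r ∈ Finset.Icc 1 R, (1/(2*η*(K:ℝ)) * ‖xi i r 0 - xstar‖^2
        - 1/(2*η*(K:ℝ)) * ‖xi i (r+1) 0 - xstar‖^2)
        = 1/(2*η*(K:ℝ)) * ‖xi i 1 0 - xstar‖^2
          - 1/(2*η*(K:ℝ)) * ‖xi i (R+1) 0 - xstar‖^2 :=
      gpdmm_telescope (fun r => 1/(2*η*(K:ℝ)) * ‖xi i r 0 - xstar‖^2) R
    have h10 : xi i 1 0 = xi i 0 K := by simpa using hinit i 1 le_rfl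
    have hnn : 0 ≤ 1/(2*η*(K:ℝ)) * ‖xi i (R+1) 0 - xstar‖^2 := by positivity
    calc ∑ r ∈ Finset.Icc 1 R,
          (1/(2*η*(K:ℝ)) * (‖xi i r 0 - xstar‖^2 - ‖xi i r K - xstar‖^2))
        = ∑ r ∈ Finset.Icc 1 R, (1/(2*η*(K:ℝ)) * ‖xi i r 0 - xstar‖^2
            - 1/(2*η*(K:ℝ)) * ‖xi i (r+1) 0 - xstar‖^2) :=
          Finset.sum_congr rfl fun r _ => hterm r
      _ = 1/(2*η*(K:ℝ)) * ‖xi i 1 0 - xstar‖^2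
          - 1/(2*η*(K:ℝ)) * ‖xi i (R+1) 0 - xstar‖^2 := htel
      _ ≤ 1/(2*η*(K:ℝ)) * ‖xi i 0 K - xstar‖^2 := by rw [h10]; linarith
  -- telescoping the dual terms
  have hPtel : ∑ r ∈ Finset.Icc 1 R,
      ((∑ i, ‖ρ • (xbar i r - xstar) + (lamis i (r+1) - lamstar i)‖^2)
        - ∑ i, ‖ρ • (xbar i r - xstar) - (lamis i (r+1) - lamstar i)‖^2)
      ≤ ∑ i, ‖ρ • (xbar i 1 - xstar) + (lamis i 2 - lamstar i)‖^2 := by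
    have htel : ∑ r ∈ Finset.Icc 1 R,
        ((∑ i, ‖ρ • (xbar i r - xstar) + (lamis i (r+1) - lamstar i)‖^2)
          - ∑ i, ‖ρ • (xbar i (r+1) - xstar) + (lamis i (r+1+1) - lamstar i)‖^2)
        = (∑ i, ‖ρ • (xbar i 1 - xstar) + (lamis i (1+1) - lamstar i)‖^2)
          - ∑ i, ‖ρ • (xbar i (R+1) - xstar) + (lamis i (R+1+1) - lamstar i)‖^2 :=
      gpdmm_telescope
        (fun r => ∑ i, ‖ρ • (xbar i r - xstar) + (lamis i (r+1) - lamstar i)‖^2) R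
    have hnn : 0 ≤ ∑ i, ‖ρ • (xbar i (R+1) - xstar) + (lamis i (R+1+1) - lamstar i)‖^2 :=
      Finset.sum_nonneg fun i _ => sq_nonneg _
    calc ∑ r ∈ Finset.Icc 1 R,
          ((∑ i, ‖ρ • (xbar i r - xstar) + (lamis i (r+1) - lamstar i)‖^2)
            - ∑ i, ‖ρ • (xbar i r - xstar) - (lamis i (r+1) - lamstar i)‖^2)
        = ∑ r ∈ Finset.Icc 1 R,
          ((∑ i, ‖ρ • (xbar i r - xstar) + (lamis i (r+1) - lamstar i)‖^2)
            - ∑ i, ‖ρ • (xbar i (r+1) - xstar) + (lamis i (r+1+1) - lamstar i)‖^2) := by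
          refine Finset.sum_congr rfl fun r hr => ?_
          rw [claimPN r (Finset.mem_Icc.mp hr).1]
      _ = (∑ i, ‖ρ • (xbar i 1 - xstar) + (lamis i (1+1) - lamstar i)‖^2)
          - ∑ i, ‖ρ • (xbar i (R+1) - xstar) + (lamis i (R+1+1) - lamstar i)‖^2 := htel
      _ ≤ ∑ i, ‖ρ • (xbar i 1 - xstar) + (lamis i 2 - lamstar i)‖^2 := by
          rw [show (1+1 : ℕ) = 2 from rfl]
          linarith
  -- summing the master inequality
  have hsumS : ∑ r ∈ Finset.Icc 1 R,
      (∑ i, (f i (xbar i r) - ⟪lamstar i, xbar i r⟫ - f i xstar)) ≤ C := by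
    have h1 : ∀ r ∈ Finset.Icc 1 R,
        ∑ i, (f i (xbar i r) - ⟪lamstar i, xbar i r⟫ - f i xstar)
        ≤ ∑ i, (1/(2*η*(K:ℝ)) * (‖xi i r 0 - xstar‖^2 - ‖xi i r K - xstar‖^2))
          + 1/(4*ρ) * ((∑ i, ‖ρ • (xbar i r - xstar) + (lamis i (r+1) - lamstar i)‖^2)
            - ∑ i, ‖ρ • (xbar i r - xstar) - (lamis i (r+1) - lamstar i)‖^2) :=
      fun r hr => master r (Finset.mem_Icc.mp hr).1
    have h2 : ∑ r ∈ Finset.Icc 1 R,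
        (∑ i, (1/(2*η*(K:ℝ)) * (‖xi i r 0 - xstar‖^2 - ‖xi i r K - xstar‖^2)))
        ≤ ∑ i, 1/(2*η*(K:ℝ)) * ‖xi i 0 K - xstar‖^2 := by
      rw [Finset.sum_comm]
      exact Finset.sum_le_sum fun i _ => hD i
    have h3 : 1/(4*ρ) * (∑ r ∈ Finset.Icc 1 R,
        ((∑ i, ‖ρ • (xbar i r - xstar) + (lamis i (r+1) - lamstar i)‖^2)
          - ∑ i, ‖ρ • (xbar i r - xstar) - (lamis i (r+1) - lamstar i)‖^2))
        ≤ 1/(4*ρ) * ∑ i, ‖ρ • (xbar i 1 - xstar) + (lamis i 2 - lamstar i)‖^2 :=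
      mul_le_mul_of_nonneg_left hPtel (by positivity)
    calc ∑ r ∈ Finset.Icc 1 R, (∑ i, (f i (xbar i r) - ⟪lamstar i, xbar i r⟫ - f i xstar))
        ≤ ∑ r ∈ Finset.Icc 1 R,
          (∑ i, (1/(2*η*(K:ℝ)) * (‖xi i r 0 - xstar‖^2 - ‖xi i r K - xstar‖^2))
            + 1/(4*ρ) * ((∑ i, ‖ρ • (xbar i r - xstar) + (lamis i (r+1) - lamstar i)‖^2)
              - ∑ i, ‖ρ • (xbar i r - xstar) - (lamis i (r+1) - lamstar i)‖^2)) :=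
          Finset.sum_le_sum h1
      _ = ∑ r ∈ Finset.Icc 1 R,
            (∑ i, (1/(2*η*(K:ℝ)) * (‖xi i r 0 - xstar‖^2 - ‖xi i r K - xstar‖^2)))
          + 1/(4*ρ) * (∑ r ∈ Finset.Icc 1 R,
            ((∑ i, ‖ρ • (xbar i r - xstar) + (lamis i (r+1) - lamstar i)‖^2)
              - ∑ i, ‖ρ • (xbar i r - xstar) - (lamis i (r+1) - lamstar i)‖^2)) := by
          rw [Finset.sum_add_distrib, Finset.mul_sum]
      _ ≤ (∑ i, 1/(2*η*(K:ℝ)) * ‖xi i 0 K - xstar‖^2)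
          + 1/(4*ρ) * ∑ i, ‖ρ • (xbar i 1 - xstar) + (lamis i 2 - lamstar i)‖^2 := by
          linarith
      _ = C := by rw [hC, Finset.sum_add_distrib, Finset.mul_sum]
  -- Jensen step
  have hcard : (((Finset.Icc 1 R).card : ℕ) : ℝ) = (R:ℝ) := by
    rw [Nat.card_Icc]; simp
  have hsumz : ∀ i : Fin m, ∑ r ∈ Finset.Icc 1 R, xbar i r
      = (R:ℝ) • ((1/(R:ℝ)) • ∑ r ∈ Finset.Icc 1 R, xbar i r) := by
    intro i; rw [smul_smul, mul_one_div, div_self hR0, one_smul]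
  have hjf : ∀ i : Fin m, (R:ℝ) * f i ((1/(R:ℝ)) • ∑ r ∈ Finset.Icc 1 R, xbar i r)
      ≤ ∑ r ∈ Finset.Icc 1 R, f i (xbar i r) := by
    intro i
    have := gpdmm_jensen (Finset.Icc 1 R) (f i)
      (f' i ((1/(R:ℝ)) • ∑ r ∈ Finset.Icc 1 R, xbar i r)) (fun r => xbar i r)
      ((1/(R:ℝ)) • ∑ r ∈ Finset.Icc 1 R, xbar i r)
      (by rw [hcard]; exact hsumz i)
      (fun y => hconvex i _ y)
    rwa [hcard] at this
  have hjl : ∀ i : Fin m, ∑ r ∈ Finset.Icc 1 R, ⟪lamstar i, xbar i r⟫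
      = (R:ℝ) * ⟪lamstar i, (1/(R:ℝ)) • ∑ r ∈ Finset.Icc 1 R, xbar i r⟫ := by
    intro i
    calc ∑ r ∈ Finset.Icc 1 R, ⟪lamstar i, xbar i r⟫
        = ⟪lamstar i, ∑ r ∈ Finset.Icc 1 R, xbar i r⟫ := (inner_sum _ _ _).symm
      _ = ⟪lamstar i, (R:ℝ) • ((1/(R:ℝ)) • ∑ r ∈ Finset.Icc 1 R, xbar i r)⟫ := by
          rw [← hsumz i]
      _ = (R:ℝ) * ⟪lamstar i, (1/(R:ℝ)) • ∑ r ∈ Finset.Icc 1 R, xbar i r⟫ :=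
          real_inner_smul_right _ _ _
  have hji : ∀ i : Fin m,
      (R:ℝ) * (f i ((1/(R:ℝ)) • ∑ r ∈ Finset.Icc 1 R, xbar i r)
        - ⟪lamstar i, (1/(R:ℝ)) • ∑ r ∈ Finset.Icc 1 R, xbar i r⟫ - f i xstar)
      ≤ ∑ r ∈ Finset.Icc 1 R, (f i (xbar i r) - ⟪lamstar i, xbar i r⟫ - f i xstar) := by
    intro i
    have hsplit : ∑ r ∈ Finset.Icc 1 R, (f i (xbar i r) - ⟪lamstar i, xbar i r⟫ - f i xstar)
        = ∑ r ∈ Finset.Icc 1 R, f i (xbar i r)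
          - ∑ r ∈ Finset.Icc 1 R, ⟪lamstar i, xbar i r⟫
          - (((Finset.Icc 1 R).card : ℕ) : ℝ) * f i xstar := by
      rw [Finset.sum_sub_distrib, Finset.sum_sub_distrib, Finset.sum_const, nsmul_eq_mul]
    rw [hsplit, hjl i, hcard]
    linarith [hjf i]
  have hfinal : (R:ℝ) * (∑ i, (f i ((1/(R:ℝ)) • ∑ r ∈ Finset.Icc 1 R, xbar i r)
      - ⟪lamstar i, (1/(R:ℝ)) • ∑ r ∈ Finset.Icc 1 R, xbar i r⟫ - f i xstar)) ≤ C := by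
    rw [Finset.mul_sum]
    calc ∑ i, (R:ℝ) * (f i ((1/(R:ℝ)) • ∑ r ∈ Finset.Icc 1 R, xbar i r)
          - ⟪lamstar i, (1/(R:ℝ)) • ∑ r ∈ Finset.Icc 1 R, xbar i r⟫ - f i xstar)
        ≤ ∑ i, ∑ r ∈ Finset.Icc 1 R,
            (f i (xbar i r) - ⟪lamstar i, xbar i r⟫ - f i xstar) :=
          Finset.sum_le_sum fun i _ => hji i
      _ = ∑ r ∈ Finset.Icc 1 R,
            (∑ i, (f i (xbar i r) - ⟪lamstar i, xbar i r⟫ - f i xstar)) :=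
          Finset.sum_comm
      _ ≤ C := hsumS
  constructor
  · have h1 : ∀ i : Fin m, -⟪lamstar i, xstar⟫
        ≤ f i ((1/(R:ℝ)) • ∑ r ∈ Finset.Icc 1 R, xbar i r)
          - ⟪lamstar i, (1/(R:ℝ)) • ∑ r ∈ Finset.Icc 1 R, xbar i r⟫ - f i xstar := by
      intro i
      have hc := hconvex i xstar ((1/(R:ℝ)) • ∑ r ∈ Finset.Icc 1 R, xbar i r)
      rw [hKKTgrad i] at hc
      have h2 : ⟪lamstar i, ((1/(R:ℝ)) • ∑ r ∈ Finset.Icc 1 R, xbar i r) - xstar⟫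
          = ⟪lamstar i, (1/(R:ℝ)) • ∑ r ∈ Finset.Icc 1 R, xbar i r⟫
            - ⟪lamstar i, xstar⟫ := inner_sub_right _ _ _
      linarith
    have h2 := Finset.sum_le_sum fun i (_ : i ∈ Finset.univ) => h1 i
    have h3 : ∑ i, -⟪lamstar i, xstar⟫ = (0:ℝ) := by
      rw [Finset.sum_neg_distrib, hzero, neg_zero]
    linarith [h2, h3.symm.le, h3.le]
  · rw [le_div_iff₀ hRpos]
    linarith [hfinal]
end

section
/- Suppose each f_i is convex (μ = 0) and the GPDMM iterates are generated by the GPDMM update equations for all outer iterations r ≥ 1, with 1/η > L, and let (x*, {λ*_{i|s}}) be a KKT point. For R ≥ 1 define the averaged dual estimates λ̄_{i|s}^{R} = (1/R)∑_{r=1}^R λ_{i|s}^{r+1}, let γ₁ = min( 1/(2Lη²), (1/η − L)/2 ), and let C = ∑_{i=1}^m [ (1/(2ηK))‖x_i^{0,K} − x*‖² + (1/(4ρ))‖ρ(x̄_i^{1,K} − x*) + (λ_{i|s}^{2} − λ*_{i|s})‖² ]. Then for every R ≥ 1: ∑_{i=1}^m (γ₁η²/2)‖λ̄_{i|s}^{R}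 − λ*_{i|s}‖² ≤ C/R; in particular this quantity is O(1/R) as R → ∞. -/
open scoped RealInnerProductSpace

set_option maxHeartbeats 1000000
open scoped RealInnerProductSpace
variable {E : Type*} [NormedAddCommGroup E] [InnerProductSpace ℝ E]

lemma gpdmm_step (η ρ L : ℝ) (hη : 0 < η) (hρ : 0 < ρ)
    (fx fx' fst : ℝ) (x x' xs lam xst F Fst : E)
    (hx' : x' = x - (1/(1/η+ρ)) • (F + ρ • (x - xs) + lam))
    (hdes : fx' ≤ fx + ⟪F, x' - x⟫ + L/2 * ‖x - x'‖^2)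
    (hco : fst ≥ fx + ⟪F, xst - x⟫ + 1/(2*L) * ‖F - Fst‖^2) :
    fx' + ρ/2 * ‖x' - xs‖^2 + ⟪lam, x'⟫ ≤ fst + ρ/2 * ‖xst - xs‖^2 + ⟪lam, xst⟫
      + (1/η+ρ)/2 * (‖x - xst‖^2 - ‖x' - xst‖^2) - (1/η - L)/2 * ‖x' - x‖^2
      - 1/(2*L) * ‖F - Fst‖^2 - ρ/2 * ‖x - xst‖^2 := by
  have hτ : (0:ℝ) < 1/η + ρ := by positivity
  have hF : (1/η+ρ) • (x - x') = F + ρ • (x - xs) + lam := by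
    rw [hx', sub_sub_cancel, smul_smul, mul_one_div, div_self hτ.ne', one_smul]
  have hF2 : F = (1/η+ρ) • (x - x') - ρ • (x - xs) - lam := by rw [hF]; abel
  have key : fst - ⟪F, xst - x⟫ - 1/(2*L) * ‖F - Fst‖^2 + ⟪F, x' - x⟫ + L/2 * ‖x - x'‖^2
      + ρ/2 * ‖x' - xs‖^2 + ⟪lam, x'⟫
      = fst + ρ/2 * ‖xst - xs‖^2 + ⟪lam, xst⟫
      + (1/η+ρ)/2 * (‖x - xst‖^2 - ‖x' - xst‖^2) - (1/η - L)/2 * ‖x' - x‖^2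
      - 1/(2*L) * ‖F - Fst‖^2 - ρ/2 * ‖x - xst‖^2 := by
    rw [hF2]
    simp only [← real_inner_self_eq_norm_sq, inner_sub_left, inner_sub_right,
      inner_add_left, inner_add_right, real_inner_smul_left, real_inner_smul_right,
      real_inner_comm]
    ring
  linarith [hdes, hco, key.ge, key.le]

lemma norm_sum_sq_le (w : ℕ → E) (n : ℕ) :
    ‖∑ k ∈ Finset.range n, w k‖^2 ≤ (n:ℝ) * ∑ k ∈ Finset.range n, ‖w k‖^2 := by
  have h1 : ‖∑ k ∈ Finset.range n, w k‖ ≤ ∑ k ∈ Finset.range n, ‖w k‖ :=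
    norm_sum_le _ _
  have h2 : (∑ k ∈ Finset.range n, ‖w k‖)^2 ≤ (n:ℝ) * ∑ k ∈ Finset.range n, ‖w k‖^2 := by
    have := sq_sum_le_card_mul_sum_sq (s := Finset.range n) (f := fun k => ‖w k‖)
    simpa using this
  calc ‖∑ k ∈ Finset.range n, w k‖^2 ≤ (∑ k ∈ Finset.range n, ‖w k‖)^2 := by
        have h0 : (0:ℝ) ≤ ‖∑ k ∈ Finset.range n, w k‖ := norm_nonneg _
        nlinarith
    _ ≤ _ := h2

lemma sq_add_bound {x a b : ℝ} (hx : 0 ≤ x) (h : x ≤ a + b) (ha : 0 ≤ a) (hb : 0 ≤ b) :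
    x^2 ≤ 2*a^2 + 2*b^2 := by nlinarith [sq_nonneg (a-b)]

lemma gpdmm_claim1 (η ρ L γ₁ : ℝ) (hη : 0 < η) (hρ : 0 < ρ) (hL : 0 < L) (hηL : L < 1/η)
    (hγ₁ : γ₁ = min (1/(2*L*η^2)) ((1/η - L)/2))
    (K : ℕ) (hK : 1 ≤ K)
    (f : E → ℝ) (f' : E → E)
    (hconvex : ∀ x y, f y ≥ f x + ⟪f' x, y - x⟫)
    (hdescent : ∀ x y, f y ≤ f x + ⟪f' x, y - x⟫ + L/2 * ‖x - y‖^2)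
    (hcoco : ∀ x y, f y ≥ f x + ⟪f' x, y - x⟫ + 1/(2*L) * ‖f' x - f' y‖^2)
    (xk : ℕ → E) (xs lam lamnew xb xst lamst : E)
    (hstep : ∀ k < K, xk (k+1) = xk k - (1/(1/η+ρ)) • (f' (xk k) + ρ • (xk k - xs) + lam))
    (hxb : xb = (1/(K:ℝ)) • ∑ k ∈ Finset.range K, xk (k+1))
    (hlamnew : lamnew = ρ • (xs - xb) - lam)
    (hst : f' xst = lamst) :
    γ₁ * η^2/2 * ‖lamnew - lamst‖^2 ≤
      1/(2*η*(K:ℝ)) * (‖xk 0 - xst‖^2 - ‖xk K - xst‖^2)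
      + 1/(4*ρ) * (‖ρ • (xb - xst) + (lamnew - lamst)‖^2
                 - ‖ρ • (xb - xst) - (lamnew - lamst)‖^2) := by
  have hKpos : (0:ℝ) < K := by exact_mod_cast hK
  have hKne : (K:ℝ) ≠ 0 := hKpos.ne'
  have hτ : (0:ℝ) < 1/η + ρ := by positivity
  -- summed step inequality
  have hstep' : ∀ k ∈ Finset.range K,
      f (xk (k+1)) + ρ/2 * ‖xk (k+1) - xs‖^2 + ⟪lam, xk (k+1)⟫ ≤
      (f xst + ρ/2 * ‖xst - xs‖^2 + ⟪lam, xst⟫)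
      + (1/η+ρ)/2 * (‖xk k - xst‖^2 - ‖xk (k+1) - xst‖^2)
      - (1/η - L)/2 * ‖xk (k+1) - xk k‖^2
      - 1/(2*L) * ‖f' (xk k) - lamst‖^2 - ρ/2 * ‖xk k - xst‖^2 := by
    intro k hk
    have hk' : k < K := Finset.mem_range.mp hk
    have hco : f xst ≥ f (xk k) + ⟪f' (xk k), xst - xk k⟫ + 1/(2*L) * ‖f' (xk k) - lamst‖^2 := by
      have := hcoco (xk k) xst
      rw [hst] at this
      linarith
    have := gpdmm_step η ρ L hη hρ (f (xk k)) (f (xk (k+1))) (f xst)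
      (xk k) (xk (k+1)) xs lam xst (f' (xk k)) lamst (hstep k hk')
      (hdescent (xk k) (xk (k+1))) hco
    linarith
  have h2 := Finset.sum_le_sum hstep'
  have hRHS : ∑ k ∈ Finset.range K,
      ((f xst + ρ/2 * ‖xst - xs‖^2 + ⟪lam, xst⟫)
      + (1/η+ρ)/2 * (‖xk k - xst‖^2 - ‖xk (k+1) - xst‖^2)
      - (1/η - L)/2 * ‖xk (k+1) - xk k‖^2
      - 1/(2*L) * ‖f' (xk k) - lamst‖^2 - ρ/2 * ‖xk k - xst‖^2)
      = (K:ℝ) * (f xst + ρ/2 * ‖xst - xs‖^2 + ⟪lam, xst⟫)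
      + (1/η+ρ)/2 * (‖xk 0 - xst‖^2 - ‖xk K - xst‖^2)
      - (1/η - L)/2 * (∑ k ∈ Finset.range K, ‖xk (k+1) - xk k‖^2)
      - 1/(2*L) * (∑ k ∈ Finset.range K, ‖f' (xk k) - lamst‖^2)
      - ρ/2 * (∑ k ∈ Finset.range K, ‖xk k - xst‖^2) := by
    simp only [Finset.sum_add_distrib, Finset.sum_sub_distrib, ← Finset.mul_sum,
      Finset.sum_const, Finset.card_range, nsmul_eq_mul,
      Finset.sum_range_sub' (fun k => ‖xk k - xst‖^2) K]
    ring
  -- sum of inner iterates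
  have hsumxb : ∑ k ∈ Finset.range K, xk (k+1) = (K:ℝ) • xb := by
    rw [hxb, smul_smul, mul_one_div, div_self hKne, one_smul]
  -- convexity lower bound on sum of f values
  have hfa : (K:ℝ) * (f xst) + ((K:ℝ) * ⟪lamst, xb⟫ - (K:ℝ) * ⟪lamst, xst⟫)
      ≤ ∑ k ∈ Finset.range K, f (xk (k+1)) := by
    have hper : ∀ k ∈ Finset.range K,
        f xst + (⟪lamst, xk (k+1)⟫ - ⟪lamst, xst⟫) ≤ f (xk (k+1)) := by
      intro k _
      have := hconvex xst (xk (k+1))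
      rw [hst, inner_sub_right] at this
      linarith
    have := Finset.sum_le_sum hper
    have hsum2 : ∑ k ∈ Finset.range K, (f xst + (⟪lamst, xk (k+1)⟫ - ⟪lamst, xst⟫))
        = (K:ℝ) * (f xst) + ((K:ℝ) * ⟪lamst, xb⟫ - (K:ℝ) * ⟪lamst, xst⟫) := by
      rw [Finset.sum_add_distrib, Finset.sum_sub_distrib, ← inner_sum, hsumxb,
        real_inner_smul_right]
      simp [Finset.sum_const, Finset.card_range, nsmul_eq_mul]
    linarith [hsum2 ▸ this]
  -- linear term
  have hlin : ∑ k ∈ Finset.range K, ⟪lam, xk (k+1)⟫ = (K:ℝ) * ⟪lam, xb⟫ := by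
    rw [← inner_sum, hsumxb, real_inner_smul_right]
  -- quadratic Jensen bounds
  have hquadgen : ∀ v : E, (K:ℝ) * ‖xb - v‖^2 ≤ ∑ k ∈ Finset.range K, ‖xk (k+1) - v‖^2 := by
    intro v
    have h := norm_sum_sq_le (fun k => xk (k+1) - v) K
    have hs : ∑ k ∈ Finset.range K, (xk (k+1) - v) = (K:ℝ) • (xb - v) := by
      rw [Finset.sum_sub_distrib, hsumxb, Finset.sum_const, Finset.card_range, smul_sub]
      congr 1
      exact (Nat.cast_smul_eq_nsmul ℝ K v).symm
    rw [hs] at h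
    rw [norm_smul] at h
    simp only [Real.norm_eq_abs, abs_of_pos hKpos] at h
    nlinarith [h, hKpos]
  have hquad := hquadgen xs
  have hquad2 := hquadgen xst
  -- index shift for the q-sum
  have hSq : ∑ k ∈ Finset.range K, ‖xk k - xst‖^2
      = ∑ k ∈ Finset.range K, ‖xk (k+1) - xst‖^2 + ‖xk 0 - xst‖^2 - ‖xk K - xst‖^2 := by
    have h := Finset.sum_range_sub' (fun k => ‖xk k - xst‖^2) K
    rw [Finset.sum_sub_distrib] at h
    linarith
  -- lambda identity
  have hgradk : ∀ k ∈ Finset.range K, f' (xk k)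
      = (1/η+ρ) • (xk k - xk (k+1)) - ρ • (xk k - xs) - lam := by
    intro k hk
    have hk' := Finset.mem_range.mp hk
    have hF : (1/η+ρ) • (xk k - xk (k+1)) = f' (xk k) + ρ • (xk k - xs) + lam := by
      rw [hstep k hk', sub_sub_cancel, smul_smul, mul_one_div, div_self hτ.ne', one_smul]
    rw [hF]; abel
  have hgs : ∑ k ∈ Finset.range K, f' (xk k)
      = (1/η+ρ) • (xk 0 - xk K) - ρ • (∑ k ∈ Finset.range K, xk k)
        + (K:ℝ) • (ρ • xs) - (K:ℝ) • lam := by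
    rw [Finset.sum_congr rfl hgradk, Finset.sum_sub_distrib, Finset.sum_sub_distrib,
      ← Finset.smul_sum, ← Finset.smul_sum, Finset.sum_range_sub' xk K,
      Finset.sum_sub_distrib, Finset.sum_const, Finset.card_range, Finset.sum_const,
      Finset.card_range, ← Nat.cast_smul_eq_nsmul ℝ K xs, ← Nat.cast_smul_eq_nsmul ℝ K lam]
    module
  have hshift : ∑ k ∈ Finset.range K, xk k = (K:ℝ) • xb + xk 0 - xk K := by
    have h := Finset.sum_range_sub' xk K
    rw [Finset.sum_sub_distrib, hsumxb, sub_eq_iff_eq_add] at h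
    rw [h]; abel
  have hlid : lamnew - lamst
      = (1/(η*(K:ℝ))) • (xk K - xk 0)
        + (1/(K:ℝ)) • (∑ k ∈ Finset.range K, (f' (xk k) - lamst)) := by
    rw [hlamnew, Finset.sum_sub_distrib, hgs, hshift, Finset.sum_const, Finset.card_range,
      ← Nat.cast_smul_eq_nsmul ℝ K lamst]
    match_scalars <;> field_simp <;> ring
  -- norm bound on lamnew - lamst
  have hδ : ‖xk K - xk 0‖^2 ≤ (K:ℝ) * ∑ k ∈ Finset.range K, ‖xk (k+1) - xk k‖^2 := by
    have h := norm_sum_sq_le (fun k => xk (k+1) - xk k) K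
    rw [Finset.sum_range_sub xk K] at h
    exact h
  have hFb : ‖∑ k ∈ Finset.range K, (f' (xk k) - lamst)‖^2
      ≤ (K:ℝ) * ∑ k ∈ Finset.range K, ‖f' (xk k) - lamst‖^2 := norm_sum_sq_le _ K
  have hnb : ‖lamnew - lamst‖^2
      ≤ 2/(η^2*(K:ℝ)) * (∑ k ∈ Finset.range K, ‖xk (k+1) - xk k‖^2)
        + 2/(K:ℝ) * (∑ k ∈ Finset.range K, ‖f' (xk k) - lamst‖^2) := by
    have htri : ‖lamnew - lamst‖ ≤ ‖(1/(η*(K:ℝ))) • (xk K - xk 0)‖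
        + ‖(1/(K:ℝ)) • (∑ k ∈ Finset.range K, (f' (xk k) - lamst))‖ := by
      rw [hlid]; exact norm_add_le _ _
    have ha : ‖(1/(η*(K:ℝ))) • (xk K - xk 0)‖^2
        = (1/(η*(K:ℝ)))^2 * ‖xk K - xk 0‖^2 := by
      rw [norm_smul, Real.norm_eq_abs, abs_of_pos (by positivity), mul_pow]
    have hb : ‖(1/(K:ℝ)) • (∑ k ∈ Finset.range K, (f' (xk k) - lamst))‖^2
        = (1/(K:ℝ))^2 * ‖∑ k ∈ Finset.range K, (f' (xk k) - lamst)‖^2 := by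
      rw [norm_smul, Real.norm_eq_abs, abs_of_pos (by positivity), mul_pow]
    have h1 : ‖lamnew - lamst‖^2 ≤ 2 * ‖(1/(η*(K:ℝ))) • (xk K - xk 0)‖^2
        + 2 * ‖(1/(K:ℝ)) • (∑ k ∈ Finset.range K, (f' (xk k) - lamst))‖^2 := by
      exact sq_add_bound (norm_nonneg _) htri (norm_nonneg _) (norm_nonneg _)
    have h2a := mul_le_mul_of_nonneg_left hδ
      (show (0:ℝ) ≤ 2*(1/(η*(K:ℝ)))^2 by positivity)
    have h2b := mul_le_mul_of_nonneg_left hFb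
      (show (0:ℝ) ≤ 2*(1/(K:ℝ))^2 by positivity)
    have e1 : 2*(1/(η*(K:ℝ)))^2 * ((K:ℝ) * ∑ k ∈ Finset.range K, ‖xk (k+1) - xk k‖^2)
        = 2/(η^2*(K:ℝ)) * (∑ k ∈ Finset.range K, ‖xk (k+1) - xk k‖^2) := by
      field_simp
    have e2 : 2*(1/(K:ℝ))^2 * ((K:ℝ) * ∑ k ∈ Finset.range K, ‖f' (xk k) - lamst‖^2)
        = 2/(K:ℝ) * (∑ k ∈ Finset.range K, ‖f' (xk k) - lamst‖^2) := by
      field_simp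
    linarith [h1, h2a, h2b, e1, e2, ha, hb]
  -- gamma facts
  have hγa : γ₁ ≤ 1/(2*L*η^2) := hγ₁ ▸ min_le_left _ _
  have hγb : γ₁ ≤ (1/η - L)/2 := hγ₁ ▸ min_le_right _ _
  have hγpos : 0 < γ₁ := by
    rw [hγ₁]; apply lt_min
    · positivity
    · linarith
  have hγη : γ₁ * η^2 ≤ 1/(2*L) := by
    have h := mul_le_mul_of_nonneg_right hγa (le_of_lt (show (0:ℝ) < η^2 by positivity))
    have e : (1/(2*L*η^2))*η^2 = 1/(2*L) := by field_simp
    linarith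
  -- main scaled bound on lambda term
  have hmain : (K:ℝ) * (γ₁ * η^2/2 * ‖lamnew - lamst‖^2)
      ≤ (1/η - L)/2 * (∑ k ∈ Finset.range K, ‖xk (k+1) - xk k‖^2)
        + 1/(2*L) * (∑ k ∈ Finset.range K, ‖f' (xk k) - lamst‖^2) := by
    have hSδ0 : (0:ℝ) ≤ ∑ k ∈ Finset.range K, ‖xk (k+1) - xk k‖^2 :=
      Finset.sum_nonneg fun k _ => by positivity
    have hSF0 : (0:ℝ) ≤ ∑ k ∈ Finset.range K, ‖f' (xk k) - lamst‖^2 :=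
      Finset.sum_nonneg fun k _ => by positivity
    have h3 := mul_le_mul_of_nonneg_left hnb
      (show (0:ℝ) ≤ (K:ℝ)*(γ₁*η^2/2) by positivity)
    have h4 : (K:ℝ)*(γ₁*η^2/2) * (2/(η^2*(K:ℝ)) * (∑ k ∈ Finset.range K, ‖xk (k+1) - xk k‖^2)
          + 2/(K:ℝ) * (∑ k ∈ Finset.range K, ‖f' (xk k) - lamst‖^2))
        = γ₁ * (∑ k ∈ Finset.range K, ‖xk (k+1) - xk k‖^2)
          + (γ₁*η^2) * (∑ k ∈ Finset.range K, ‖f' (xk k) - lamst‖^2) := by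
      field_simp
    have h5 := mul_le_mul_of_nonneg_right hγb hSδ0
    have h6 := mul_le_mul_of_nonneg_right hγη hSF0
    linarith [h3, h4, h5, h6]
  -- cross identity
  have hcross : ⟪lamst, xst⟫ - ⟪lamst, xb⟫ + (⟪lam, xst⟫ - ⟪lam, xb⟫)
      + ρ/2 * (‖xst - xs‖^2 - ‖xb - xs‖^2 - ‖xb - xst‖^2)
      = 1/(4*ρ) * (‖ρ • (xb - xst) + (lamnew - lamst)‖^2
                 - ‖ρ • (xb - xst) - (lamnew - lamst)‖^2) := by
    rw [hlamnew]
    simp only [← real_inner_self_eq_norm_sq, inner_sub_left, inner_sub_right,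
      inner_add_left, inner_add_right, real_inner_smul_left, real_inner_smul_right,
      real_inner_comm]
    field_simp
    ring
  -- assemble (scaled by K)
  have hsplit : ∑ k ∈ Finset.range K,
      (f (xk (k+1)) + ρ/2 * ‖xk (k+1) - xs‖^2 + ⟪lam, xk (k+1)⟫)
      = (∑ k ∈ Finset.range K, f (xk (k+1)))
        + ρ/2 * (∑ k ∈ Finset.range K, ‖xk (k+1) - xs‖^2) + (K:ℝ) * ⟪lam, xb⟫ := by
    rw [Finset.sum_add_distrib, Finset.sum_add_distrib, ← Finset.mul_sum, hlin]
  rw [hsplit, hRHS] at h2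
  have hmul1 := mul_le_mul_of_nonneg_left hquad (show (0:ℝ) ≤ ρ/2 by positivity)
  have hmul2 := mul_le_mul_of_nonneg_left hquad2 (show (0:ℝ) ≤ ρ/2 by positivity)
  have hSqρ : ρ/2 * (∑ k ∈ Finset.range K, ‖xk k - xst‖^2)
      = ρ/2 * (∑ k ∈ Finset.range K, ‖xk (k+1) - xst‖^2
        + ‖xk 0 - xst‖^2 - ‖xk K - xst‖^2) := by rw [hSq]
  have hcrossK : (K:ℝ) * (⟪lamst, xst⟫ - ⟪lamst, xb⟫ + (⟪lam, xst⟫ - ⟪lam, xb⟫)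
      + ρ/2 * (‖xst - xs‖^2 - ‖xb - xs‖^2 - ‖xb - xst‖^2))
      = (K:ℝ) * (1/(4*ρ) * (‖ρ • (xb - xst) + (lamnew - lamst)‖^2
                 - ‖ρ • (xb - xst) - (lamnew - lamst)‖^2)) := by rw [hcross]
  have hscaled : (K:ℝ) * (γ₁ * η^2/2 * ‖lamnew - lamst‖^2)
      ≤ 1/(2*η) * (‖xk 0 - xst‖^2 - ‖xk K - xst‖^2)
        + (K:ℝ) * (1/(4*ρ) * (‖ρ • (xb - xst) + (lamnew - lamst)‖^2
                 - ‖ρ • (xb - xst) - (lamnew - lamst)‖^2)) := by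
    have haux : (1/η+ρ)/2 * (‖xk 0 - xst‖^2 - ‖xk K - xst‖^2)
        = 1/(2*η) * (‖xk 0 - xst‖^2 - ‖xk K - xst‖^2)
          + ρ/2 * (‖xk 0 - xst‖^2 - ‖xk K - xst‖^2) := by ring
    linarith [hmain, h2, hfa, hmul1, hmul2, hSqρ, hcrossK, haux]
  have heq2 : 1/(2*η) * (‖xk 0 - xst‖^2 - ‖xk K - xst‖^2)
        + (K:ℝ) * (1/(4*ρ) * (‖ρ • (xb - xst) + (lamnew - lamst)‖^2
                 - ‖ρ • (xb - xst) - (lamnew - lamst)‖^2))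
      = (K:ℝ) * (1/(2*η*(K:ℝ)) * (‖xk 0 - xst‖^2 - ‖xk K - xst‖^2)
        + 1/(4*ρ) * (‖ρ • (xb - xst) + (lamnew - lamst)‖^2
                 - ‖ρ • (xb - xst) - (lamnew - lamst)‖^2)) := by
    field_simp
  rw [heq2] at hscaled
  exact le_of_mul_le_mul_left hscaled hKpos

lemma norm_sum_sq_le' {ι : Type*} (s : Finset ι) (w : ι → E) :
    ‖∑ k ∈ s, w k‖^2 ≤ (s.card : ℝ) * ∑ k ∈ s, ‖w k‖^2 := by
  have h1 : ‖∑ k ∈ s, w k‖ ≤ ∑ k ∈ s, ‖w k‖ := norm_sum_le _ _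
  have h2 : (∑ k ∈ s, ‖w k‖)^2 ≤ (s.card : ℝ) * ∑ k ∈ s, ‖w k‖^2 := by
    have := sq_sum_le_card_mul_sum_sq (s := s) (f := fun k => ‖w k‖)
    simpa using this
  calc ‖∑ k ∈ s, w k‖^2 ≤ (∑ k ∈ s, ‖w k‖)^2 := by
        have h0 : (0:ℝ) ≤ ‖∑ k ∈ s, w k‖ := norm_nonneg _
        nlinarith
    _ ≤ _ := h2

lemma telescope_Icc (g : ℕ → ℝ) (R : ℕ) :
    ∑ r ∈ Finset.Icc 1 R, (g r - g (r+1)) = g 1 - g (R+1) := by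
  induction R with
  | zero => simp
  | succ n ih =>
    rcases Nat.eq_zero_or_pos n with hn | hn
    · subst hn; simp
    · rw [Finset.sum_Icc_succ_top (by omega : 1 ≤ n + 1), ih]
      ring

/-- Second claim of Theorem 2 of the paper: sublinear O(1/R) convergence of the GPDMM
averaged dual estimates for general convex clients (μ = 0). -/
theorem gpdmm_sublinear_dual {d m K : ℕ} (hm : 0 < m) (hK : 1 ≤ K)
    (f : Fin m → EuclideanSpace ℝ (Fin d) → ℝ)
    (f' : Fin m → EuclideanSpace ℝ (Fin d) → EuclideanSpace ℝ (Fin d))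
    (L : ℝ) (hL : 0 < L)
    (hdiff : ∀ i x, HasGradientAt (f i) (f' i x) x)
    (hconvex : ∀ i x y, f i y ≥ f i x + ⟪f' i x, y - x⟫)
    (hdescent : ∀ i x y, f i y ≤ f i x + ⟪f' i x, y - x⟫ + L / 2 * ‖x - y‖ ^ 2)
    (hcoco : ∀ i x y, f i y ≥ f i x + ⟪f' i x, y - x⟫ + 1 / (2 * L) * ‖f' i x - f' i y‖ ^ 2)
    (η ρ : ℝ) (hη : 0 < η) (hηL : L < 1 / η) (hρ : 0 < ρ)
    -- GPDMM iterates
    (xi : Fin m → ℕ → ℕ → EuclideanSpace ℝ (Fin d))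
    (xbar : Fin m → ℕ → EuclideanSpace ℝ (Fin d))
    (lamis lamsi : Fin m → ℕ → EuclideanSpace ℝ (Fin d))
    (xs : ℕ → EuclideanSpace ℝ (Fin d))
    (hinit : ∀ i, ∀ r ≥ 1, xi i r 0 = xi i (r - 1) K)
    (hinner : ∀ i, ∀ r ≥ 1, ∀ k < K, xi i r (k + 1) =
      xi i r k - (1 / (1 / η + ρ)) • (f' i (xi i r k) + ρ • (xi i r k - xs r) + lamsi i r))
    (hxbar : ∀ i, ∀ r ≥ 1, xbar i r = (1 / (K : ℝ)) • ∑ k ∈ Finset.range K, xi i r (k + 1))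
    (hlamis : ∀ i, ∀ r ≥ 1, lamis i (r + 1) = ρ • (xs r - xbar i r) - lamsi i r)
    (hxs : ∀ r ≥ 1, xs (r + 1) = (1 / (m : ℝ)) • ∑ i, (xbar i r - (1 / ρ) • lamis i (r + 1)))
    (hlamsi : ∀ i, ∀ r ≥ 1, lamsi i (r + 1) = ρ • (xbar i r - xs (r + 1)) - lamis i (r + 1))
    -- KKT point
    (xstar : EuclideanSpace ℝ (Fin d)) (lamstar : Fin m → EuclideanSpace ℝ (Fin d))
    (hKKTgrad : ∀ i, f' i xstar = lamstar i)
    (hKKTsum : ∑ i, lamstar i = 0)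
    -- the constants γ₁ and C
    (γ₁ : ℝ) (hγ₁ : γ₁ = min (1 / (2 * L * η ^ 2)) ((1 / η - L) / 2))
    (C : ℝ)
    (hC : C = ∑ i, (1 / (2 * η * (K : ℝ)) * ‖xi i 0 K - xstar‖ ^ 2
      + 1 / (4 * ρ) * ‖ρ • (xbar i 1 - xstar) + (lamis i 2 - lamstar i)‖ ^ 2)) :
    ∀ R : ℕ, 1 ≤ R →
      ∑ i, (γ₁ * η ^ 2 / 2) *
          ‖((1 / (R : ℝ)) • ∑ r ∈ Finset.Icc 1 R, lamis i (r + 1)) - lamstar i‖ ^ 2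
        ≤ C / (R : ℝ) := by
  intro R hR
  have hRpos : (0:ℝ) < R := by exact_mod_cast hR
  have hRne : (R:ℝ) ≠ 0 := hRpos.ne'
  have hmpos : (0:ℝ) < m := by exact_mod_cast hm
  have hmne : (m:ℝ) ≠ 0 := hmpos.ne'
  have hγ1pos : 0 < γ₁ := by
    rw [hγ₁]; apply lt_min
    · positivity
    · linarith
  have hγc : (0:ℝ) ≤ γ₁ * η^2/2 := by positivity
  -- Claim 1 instantiated
  have hC1 : ∀ (i : Fin m), ∀ r : ℕ, 1 ≤ r →
      γ₁ * η^2/2 * ‖lamis i (r+1) - lamstar i‖^2 ≤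
        1/(2*η*(K:ℝ)) * (‖xi i r 0 - xstar‖^2 - ‖xi i r K - xstar‖^2)
        + 1/(4*ρ) * (‖ρ • (xbar i r - xstar) + (lamis i (r+1) - lamstar i)‖^2
                   - ‖ρ • (xbar i r - xstar) - (lamis i (r+1) - lamstar i)‖^2) := by
    intro i r hr
    exact gpdmm_claim1 η ρ L γ₁ hη hρ hL hηL hγ₁ K hK (f i) (f' i)
      (hconvex i) (hdescent i) (hcoco i) (fun k => xi i r k) (xs r) (lamsi i r)
      (lamis i (r+1)) (xbar i r) xstar (lamstar i)
      (fun k hk => hinner i r hr k hk) (hxbar i r hr) (hlamis i r hr) (hKKTgrad i)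
  -- sum of server duals vanishes
  have hsum0 : ∀ r : ℕ, 1 ≤ r → ∑ i, lamsi i (r+1) = 0 := by
    intro r hr
    have h1 : (m:ℝ) • xs (r+1) = ∑ i, (xbar i r - (1/ρ) • lamis i (r+1)) := by
      rw [hxs r hr, smul_smul, mul_one_div, div_self hmne, one_smul]
    rw [Finset.sum_sub_distrib, ← Finset.smul_sum] at h1
    have h2 : ∑ i, lamsi i (r+1) = ∑ i, (ρ • (xbar i r - xs (r+1)) - lamis i (r+1)) :=
      Finset.sum_congr rfl (fun i _ => hlamsi i r hr)
    rw [h2, Finset.sum_sub_distrib]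
    have h3 : ∑ i, ρ • (xbar i r - xs (r+1))
        = ρ • ((∑ i, xbar i r) - (m:ℝ) • xs (r+1)) := by
      rw [← Finset.smul_sum, Finset.sum_sub_distrib, Finset.sum_const, Finset.card_univ,
        Fintype.card_fin, ← Nat.cast_smul_eq_nsmul ℝ m (xs (r+1))]
    rw [h3, h1]
    match_scalars <;> field_simp <;> ring
  -- Z (r+1) = Y r
  have hZY : ∀ r : ℕ, 1 ≤ r →
      (∑ i, ‖ρ • (xbar i (r+1) - xstar) + (lamis i (r+1+1) - lamstar i)‖^2)
      = ∑ i, ‖ρ • (xbar i r - xstar) - (lamis i (r+1) - lamstar i)‖^2 := by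
    intro r hr
    have hz : ∀ i : Fin m, ρ • (xbar i (r+1) - xstar) + (lamis i (r+1+1) - lamstar i)
        = ρ • (xs (r+1) - xstar) - (lamsi i (r+1) + lamstar i) := by
      intro i
      rw [hlamis i (r+1) (by omega)]
      module
    have hy : ∀ i : Fin m, ρ • (xbar i r - xstar) - (lamis i (r+1) - lamstar i)
        = ρ • (xs (r+1) - xstar) + (lamsi i (r+1) + lamstar i) := by
      intro i
      have h2 : lamis i (r+1) = ρ • (xbar i r - xs (r+1)) - lamsi i (r+1) := by
        rw [hlamsi i r hr]; abel
      rw [h2]; module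
    have hb0 : ∑ i, (lamsi i (r+1) + lamstar i) = 0 := by
      rw [Finset.sum_add_distrib, hsum0 r hr, hKKTsum, add_zero]
    calc (∑ i, ‖ρ • (xbar i (r+1) - xstar) + (lamis i (r+1+1) - lamstar i)‖^2)
        = ∑ i, ‖ρ • (xs (r+1) - xstar) - (lamsi i (r+1) + lamstar i)‖^2 :=
          Finset.sum_congr rfl (fun i _ => by rw [hz i])
      _ = ∑ i, ‖ρ • (xs (r+1) - xstar) + (lamsi i (r+1) + lamstar i)‖^2 := by
          have hexp : ∀ i : Fin m, ‖ρ • (xs (r+1) - xstar) + (lamsi i (r+1) + lamstar i)‖^2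
              = ‖ρ • (xs (r+1) - xstar) - (lamsi i (r+1) + lamstar i)‖^2
                + 4 * ⟪ρ • (xs (r+1) - xstar), lamsi i (r+1) + lamstar i⟫ := by
            intro i
            rw [norm_add_sq_real, norm_sub_sq_real]; ring
          rw [Finset.sum_congr rfl (fun i _ => hexp i), Finset.sum_add_distrib,
            ← Finset.mul_sum, ← inner_sum, hb0, inner_zero_right]
          ring
      _ = ∑ i, ‖ρ • (xbar i r - xstar) - (lamis i (r+1) - lamstar i)‖^2 :=
          Finset.sum_congr rfl (fun i _ => by rw [hy i])
  -- per-round summed inequality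
  have hstepR : ∀ r ∈ Finset.Icc 1 R,
      ∑ i, (γ₁ * η^2/2 * ‖lamis i (r+1) - lamstar i‖^2)
      ≤ (∑ i, 1/(2*η*(K:ℝ)) * (‖xi i r 0 - xstar‖^2 - ‖xi i (r+1) 0 - xstar‖^2))
        + 1/(4*ρ) * ((∑ i, ‖ρ • (xbar i r - xstar) + (lamis i (r+1) - lamstar i)‖^2)
           - (∑ i, ‖ρ • (xbar i (r+1) - xstar) + (lamis i (r+1+1) - lamstar i)‖^2)) := by
    intro r hrm
    have hr1 : 1 ≤ r := (Finset.mem_Icc.mp hrm).1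
    have hxiK : ∀ i : Fin m, xi i (r+1) 0 = xi i r K := by
      intro i
      have := hinit i (r+1) (by omega)
      simpa using this
    simp only [hxiK]
    rw [hZY r hr1]
    refine le_trans (Finset.sum_le_sum fun i _ => hC1 i r hr1) (le_of_eq ?_)
    rw [Finset.sum_add_distrib]
    congr 1
    rw [← Finset.mul_sum, Finset.sum_sub_distrib]
  -- the grand telescoped bound
  have hgrand : ∑ r ∈ Finset.Icc 1 R, ∑ i, (γ₁ * η^2/2 * ‖lamis i (r+1) - lamstar i‖^2)
      ≤ C := by
    have hx10 : ∀ i : Fin m, xi i 1 0 = xi i 0 K := by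
      intro i
      have := hinit i 1 (le_refl 1)
      simpa using this
    calc ∑ r ∈ Finset.Icc 1 R, ∑ i, (γ₁ * η^2/2 * ‖lamis i (r+1) - lamstar i‖^2)
        ≤ ∑ r ∈ Finset.Icc 1 R,
          ((∑ i, 1/(2*η*(K:ℝ)) * (‖xi i r 0 - xstar‖^2 - ‖xi i (r+1) 0 - xstar‖^2))
          + 1/(4*ρ) * ((∑ i, ‖ρ • (xbar i r - xstar) + (lamis i (r+1) - lamstar i)‖^2)
             - (∑ i, ‖ρ • (xbar i (r+1) - xstar) + (lamis i (r+1+1) - lamstar i)‖^2))) :=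
          Finset.sum_le_sum hstepR
      _ = (∑ i, ∑ r ∈ Finset.Icc 1 R,
            (1/(2*η*(K:ℝ)) * ‖xi i r 0 - xstar‖^2 - 1/(2*η*(K:ℝ)) * ‖xi i (r+1) 0 - xstar‖^2))
          + 1/(4*ρ) * ∑ r ∈ Finset.Icc 1 R,
            ((∑ i, ‖ρ • (xbar i r - xstar) + (lamis i (r+1) - lamstar i)‖^2)
             - (∑ i, ‖ρ • (xbar i (r+1) - xstar) + (lamis i (r+1+1) - lamstar i)‖^2)) := by
          rw [Finset.sum_add_distrib]
          congr 1
          · rw [Finset.sum_comm]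
            exact Finset.sum_congr rfl fun i _ => Finset.sum_congr rfl fun r _ => by ring
          · exact (Finset.mul_sum _ _ _).symm
      _ = (∑ i, (1/(2*η*(K:ℝ)) * ‖xi i 1 0 - xstar‖^2
              - 1/(2*η*(K:ℝ)) * ‖xi i (R+1) 0 - xstar‖^2))
          + 1/(4*ρ) * ((∑ i, ‖ρ • (xbar i 1 - xstar) + (lamis i (1+1) - lamstar i)‖^2)
             - (∑ i, ‖ρ • (xbar i (R+1) - xstar) + (lamis i (R+1+1) - lamstar i)‖^2)) := by
          rw [telescope_Icc (fun r => ∑ i, ‖ρ • (xbar i r - xstar)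
            + (lamis i (r+1) - lamstar i)‖^2) R]
          congr 1
          refine Finset.sum_congr rfl fun i _ => ?_
          exact telescope_Icc (fun r => 1/(2*η*(K:ℝ)) * ‖xi i r 0 - xstar‖^2) R
      _ ≤ (∑ i, 1/(2*η*(K:ℝ)) * ‖xi i 1 0 - xstar‖^2)
          + 1/(4*ρ) * (∑ i, ‖ρ • (xbar i 1 - xstar) + (lamis i (1+1) - lamstar i)‖^2) := by
          have ht1 : ∀ i : Fin m, (0:ℝ) ≤ 1/(2*η*(K:ℝ)) * ‖xi i (R+1) 0 - xstar‖^2 := by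
            intro i
            have hKpos : (0:ℝ) < K := by exact_mod_cast hK
            positivity
          have ht2 : (0:ℝ) ≤ ∑ i, ‖ρ • (xbar i (R+1) - xstar) + (lamis i (R+1+1) - lamstar i)‖^2 :=
            Finset.sum_nonneg fun i _ => by positivity
          have ht3 : (0:ℝ) ≤ 1/(4*ρ) := by positivity
          have h4 := Finset.sum_nonneg (fun i (_ : i ∈ Finset.univ) => ht1 i)
          have h5 := mul_nonneg ht3 ht2
          have h6 : ∑ i, (1/(2*η*(K:ℝ)) * ‖xi i 1 0 - xstar‖^2
              - 1/(2*η*(K:ℝ)) * ‖xi i (R+1) 0 - xstar‖^2)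
              = (∑ i, 1/(2*η*(K:ℝ)) * ‖xi i 1 0 - xstar‖^2)
                - ∑ i, 1/(2*η*(K:ℝ)) * ‖xi i (R+1) 0 - xstar‖^2 :=
            Finset.sum_sub_distrib _ _
          nlinarith [h4, h5, h6]
      _ = C := by
          rw [hC, Finset.sum_add_distrib]
          congr 1
          · exact Finset.sum_congr rfl fun i _ => by rw [hx10 i]
          · norm_num [Finset.mul_sum]
  -- Jensen step and conclusion
  have hcard : (Finset.Icc 1 R).card = R := by
    rw [Nat.card_Icc]; omega
  have hjensen : ∀ i : Fin m,
      ‖((1/(R:ℝ)) • ∑ r ∈ Finset.Icc 1 R, lamis i (r+1)) - lamstar i‖^2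
      ≤ (1/(R:ℝ)) * ∑ r ∈ Finset.Icc 1 R, ‖lamis i (r+1) - lamstar i‖^2 := by
    intro i
    have h0 : ((1/(R:ℝ)) • ∑ r ∈ Finset.Icc 1 R, lamis i (r+1)) - lamstar i
        = (1/(R:ℝ)) • (∑ r ∈ Finset.Icc 1 R, (lamis i (r+1) - lamstar i)) := by
      rw [Finset.sum_sub_distrib, Finset.sum_const, hcard,
        ← Nat.cast_smul_eq_nsmul ℝ R (lamstar i), smul_sub, smul_smul, one_div,
        inv_mul_cancel₀ hRne, one_smul]
    rw [h0, norm_smul, Real.norm_eq_abs, abs_of_pos (by positivity), mul_pow]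
    have hcs := norm_sum_sq_le' (Finset.Icc 1 R) (fun r => lamis i (r+1) - lamstar i)
    rw [hcard] at hcs
    have h7 := mul_le_mul_of_nonneg_left hcs (show (0:ℝ) ≤ (1/(R:ℝ))^2 by positivity)
    have h8 : (1/(R:ℝ))^2 * ((R:ℝ) * ∑ r ∈ Finset.Icc 1 R, ‖lamis i (r+1) - lamstar i‖^2)
        = (1/(R:ℝ)) * ∑ r ∈ Finset.Icc 1 R, ‖lamis i (r+1) - lamstar i‖^2 := by
      field_simp
    linarith [h7, h8]
  calc ∑ i, (γ₁ * η ^ 2 / 2) *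
          ‖((1 / (R : ℝ)) • ∑ r ∈ Finset.Icc 1 R, lamis i (r + 1)) - lamstar i‖ ^ 2
      ≤ ∑ i, (γ₁ * η ^ 2 / 2) *
          ((1/(R:ℝ)) * ∑ r ∈ Finset.Icc 1 R, ‖lamis i (r+1) - lamstar i‖^2) :=
        Finset.sum_le_sum fun i _ => mul_le_mul_of_nonneg_left (hjensen i) hγc
    _ = (1/(R:ℝ)) * ∑ i, ∑ r ∈ Finset.Icc 1 R, (γ₁ * η^2/2 * ‖lamis i (r+1) - lamstar i‖^2) := by
        simp only [Finset.mul_sum]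
        refine Finset.sum_congr rfl fun i _ => Finset.sum_congr rfl fun r _ => by ring
    _ = (1/(R:ℝ)) * ∑ r ∈ Finset.Icc 1 R, ∑ i, (γ₁ * η^2/2 * ‖lamis i (r+1) - lamstar i‖^2) := by
        rw [Finset.sum_comm]
    _ ≤ (1/(R:ℝ)) * C := by
        have := mul_le_mul_of_nonneg_left hgrand (show (0:ℝ) ≤ 1/(R:ℝ) by positivity)
        linarith
    _ = C / (R:ℝ) := by ring
end

section
/- Let ρ > 0 and suppose vectors x_s^r, x_s^{r+1}, and for each i = 1,…,m vectors x̄_i^{r,K}, x̄_i^{r+1,K}, λ_{s|i}^r, λ_{s|i}^{r+1}, λ_{i|s}^{r+1}, λ_{i|s}^{r+2} in ℝ^d satisfy: λ_{i|s}^{r+1} = ρ(x_s^r − x̄_i^{r,K}) − λ_{s|i}^r; x_s^{r+1} = (1/m)∑_{i=1}^m (x̄_i^{r,K} − λ_{i|s}^{r+1}/ρ); λ_{s|i}^{r+1} = ρ(x̄_i^{r,K} − x_s^{r+1}) − λ_{i|s}^{r+1}; and λ_{i|s}^{r+2} = ρ(x_s^{r+1} − x̄_i^{r+1,K}) − λ_{s|i}^{r+1}.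 Let x* ∈ ℝ^d and λ*_{i|s} ∈ ℝ^d with ∑_{i=1}^m λ*_{i|s} = 0. Then: 2∑_{i=1}^m (x̄_i^{r,K} − x*)ᵀλ_{i|s}^{r+1} = 2∑_{i=1}^m (λ*_{i|s})ᵀ x̄_i^{r,K} + ∑_{i=1}^m (1/(2ρ))‖ρ(x̄_i^{r,K} − x*) + (λ_{i|s}^{r+1} − λ*_{i|s})‖² − ∑_{i=1}^m (1/(2ρ))‖ρ(x̄_i^{r+1,K} − x*) + (λ_{i|s}^{r+2} − λ*_{i|s})‖². -/
open scoped RealInnerProductSpace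

/-- Lemma 6 of the paper: the key algebraic identity for the GPDMM/PDMM server–client
updates at two consecutive outer iterations. -/
theorem pdmm_key_identity {d m : ℕ} (hm : 0 < m) (ρ : ℝ) (hρ : 0 < ρ)
    (xsr xsr1 : EuclideanSpace ℝ (Fin d))
    (xbarR xbarR1 lamsiR lamsiR1 lamisR1 lamisR2 : Fin m → EuclideanSpace ℝ (Fin d))
    (h1 : ∀ i, lamisR1 i = ρ • (xsr - xbarR i) - lamsiR i)
    (h2 : xsr1 = (1 / (m : ℝ)) • ∑ i, (xbarR i - (1 / ρ) • lamisR1 i))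
    (h3 : ∀ i, lamsiR1 i = ρ • (xbarR i - xsr1) - lamisR1 i)
    (h4 : ∀ i, lamisR2 i = ρ • (xsr1 - xbarR1 i) - lamsiR1 i)
    (xstar : EuclideanSpace ℝ (Fin d)) (lamstar : Fin m → EuclideanSpace ℝ (Fin d))
    (hsum : ∑ i, lamstar i = 0) :
    2 * ∑ i, ⟪xbarR i - xstar, lamisR1 i⟫
      = 2 * ∑ i, ⟪lamstar i, xbarR i⟫
        + ∑ i, 1 / (2 * ρ) * ‖ρ • (xbarR i - xstar) + (lamisR1 i - lamstar i)‖ ^ 2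
        - ∑ i, 1 / (2 * ρ) * ‖ρ • (xbarR1 i - xstar) + (lamisR2 i - lamstar i)‖ ^ 2 := by
  have hρ' : ρ ≠ 0 := ne_of_gt hρ
  have hm' : (m : ℝ) ≠ 0 := Nat.cast_ne_zero.mpr hm.ne'
  -- Step 1: sum of duals in terms of server variable
  have e1 : (m : ℝ) • xsr1 = (∑ i, xbarR i) - (1 / ρ) • ∑ i, lamisR1 i := by
    rw [h2, smul_smul, mul_one_div, div_self hm', one_smul,
        Finset.sum_sub_distrib, Finset.smul_sum]
  have hL : ∑ i, lamisR1 i = ρ • ((∑ i, xbarR i) - (m : ℝ) • xsr1) := by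
    have e2 := congrArg (fun v => ρ • v) e1
    simp only [smul_sub, smul_smul, mul_one_div, div_self hρ', one_smul] at e2
    linear_combination (norm := module) e2
  -- polarization identity
  have pol : ∀ a b : EuclideanSpace ℝ (Fin d), ‖a‖ ^ 2 - ‖b‖ ^ 2 = ⟪a - b, a + b⟫ := by
    intro a b
    simp only [inner_sub_left, inner_add_right, real_inner_self_eq_norm_sq]
    rw [real_inner_comm b a]; ring
  -- per-term difference of quadratic terms
  have key : ∀ i, 1 / (2 * ρ) * ‖ρ • (xbarR i - xstar) + (lamisR1 i - lamstar i)‖ ^ 2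
      - 1 / (2 * ρ) * ‖ρ • (xbarR1 i - xstar) + (lamisR2 i - lamstar i)‖ ^ 2
      = 2 * ⟪xbarR i - xsr1, ρ • (xsr1 - xstar) + (lamisR1 i - lamstar i)⟫ := by
    intro i
    have h5 : lamisR2 i = (2 * ρ) • xsr1 - ρ • xbarR1 i - ρ • xbarR i + lamisR1 i := by
      rw [h4 i, h3 i]; module
    have ea : (ρ • (xbarR i - xstar) + (lamisR1 i - lamstar i))
        - (ρ • (xbarR1 i - xstar) + (lamisR2 i - lamstar i))
        = (2 * ρ) • (xbarR i - xsr1) := by rw [h5]; module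
    have eb : (ρ • (xbarR i - xstar) + (lamisR1 i - lamstar i))
        + (ρ • (xbarR1 i - xstar) + (lamisR2 i - lamstar i))
        = (2 : ℝ) • (ρ • (xsr1 - xstar) + (lamisR1 i - lamstar i)) := by rw [h5]; module
    have hd : ‖ρ • (xbarR i - xstar) + (lamisR1 i - lamstar i)‖ ^ 2
        - ‖ρ • (xbarR1 i - xstar) + (lamisR2 i - lamstar i)‖ ^ 2
        = (2 * ρ) * (2 * ⟪xbarR i - xsr1, ρ • (xsr1 - xstar) + (lamisR1 i - lamstar i)⟫) := by
      rw [pol, ea, eb, real_inner_smul_left, real_inner_smul_right]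
      try ring
    have hr : 1 / (2 * ρ) * ‖ρ • (xbarR i - xstar) + (lamisR1 i - lamstar i)‖ ^ 2
        - 1 / (2 * ρ) * ‖ρ • (xbarR1 i - xstar) + (lamisR2 i - lamstar i)‖ ^ 2
        = 1 / (2 * ρ) * (‖ρ • (xbarR i - xstar) + (lamisR1 i - lamstar i)‖ ^ 2
          - ‖ρ • (xbarR1 i - xstar) + (lamisR2 i - lamstar i)‖ ^ 2) := by ring
    rw [hr, hd]
    field_simp
  have hAB : (∑ i, 1 / (2 * ρ) * ‖ρ • (xbarR i - xstar) + (lamisR1 i - lamstar i)‖ ^ 2)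
      - ∑ i, 1 / (2 * ρ) * ‖ρ • (xbarR1 i - xstar) + (lamisR2 i - lamstar i)‖ ^ 2
      = ∑ i, 2 * ⟪xbarR i - xsr1, ρ • (xsr1 - xstar) + (lamisR1 i - lamstar i)⟫ := by
    rw [← Finset.sum_sub_distrib]
    exact Finset.sum_congr rfl fun i _ => key i
  have expand : ∀ i : Fin m, 2 * ⟪xbarR i - xsr1, ρ • (xsr1 - xstar) + (lamisR1 i - lamstar i)⟫
      = (2 * ⟪xbarR i - xstar, lamisR1 i⟫ - 2 * ⟪lamstar i, xbarR i⟫)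
        + (2 * ρ * ⟪xbarR i, xsr1 - xstar⟫ - 2 * ⟪xsr1 - xstar, lamisR1 i⟫
          + 2 * ⟪xsr1, lamstar i⟫ - 2 * ρ * ⟪xsr1, xsr1 - xstar⟫) := by
    intro i
    simp only [inner_sub_left, inner_sub_right, inner_add_right, real_inner_smul_right]
    rw [real_inner_comm (lamstar i) (xbarR i)]
    ring
  have G0 : ∑ i, (2 * ρ * ⟪xbarR i, xsr1 - xstar⟫ - 2 * ⟪xsr1 - xstar, lamisR1 i⟫
      + 2 * ⟪xsr1, lamstar i⟫ - 2 * ρ * ⟪xsr1, xsr1 - xstar⟫) = 0 := by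
    simp only [Finset.sum_sub_distrib, Finset.sum_add_distrib, ← Finset.mul_sum,
      ← sum_inner, ← inner_sum, hsum, inner_zero_right, Finset.sum_const,
      Finset.card_univ, Fintype.card_fin, nsmul_eq_mul]
    rw [hL, real_inner_smul_right, inner_sub_right (𝕜 := ℝ) (xsr1 - xstar),
      real_inner_smul_right, real_inner_comm (∑ i, xbarR i) (xsr1 - xstar),
      real_inner_comm xsr1 (xsr1 - xstar)]
    rw [← Nat.cast_smul_eq_nsmul ℝ m xsr1, real_inner_smul_left]
    ring
  have hsplit : ∑ i, 2 * ⟪xbarR i - xsr1, ρ • (xsr1 - xstar) + (lamisR1 i - lamstar i)⟫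
      = (∑ i, (2 * ⟪xbarR i - xstar, lamisR1 i⟫ - 2 * ⟪lamstar i, xbarR i⟫))
        + ∑ i, (2 * ρ * ⟪xbarR i, xsr1 - xstar⟫ - 2 * ⟪xsr1 - xstar, lamisR1 i⟫
          + 2 * ⟪xsr1, lamstar i⟫ - 2 * ρ * ⟪xsr1, xsr1 - xstar⟫) := by
    rw [← Finset.sum_add_distrib]
    exact Finset.sum_congr rfl fun i _ => expand i
  calc 2 * ∑ i, ⟪xbarR i - xstar, lamisR1 i⟫
      = 2 * ∑ i, ⟪lamstar i, xbarR i⟫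
        + ∑ i, 2 * ⟪xbarR i - xsr1, ρ • (xsr1 - xstar) + (lamisR1 i - lamstar i)⟫ := by
        rw [hsplit, G0, add_zero, Finset.sum_sub_distrib, ← Finset.mul_sum, ← Finset.mul_sum]
        ring
    _ = 2 * ∑ i, ⟪lamstar i, xbarR i⟫
        + ∑ i, 1 / (2 * ρ) * ‖ρ • (xbarR i - xstar) + (lamisR1 i - lamstar i)‖ ^ 2
        - ∑ i, 1 / (2 * ρ) * ‖ρ • (xbarR1 i - xstar) + (lamisR2 i - lamstar i)‖ ^ 2 := by
        rw [add_sub_assoc, hAB]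
end

section
/- Let γ > 0, set ρ = 1/γ, and suppose sequences x_i^r, λ_{i|s}^r (i = 1,…,m), x_s^r, λ_{s|i}^r in ℝ^d satisfy the PDMM server–client updates: x_i^{r+1} minimizes x ↦ f_i(x) + (ρ/2)‖x − x_s^r + λ_{s|i}^r/ρ‖² over ℝ^d; λ_{i|s}^{r+1} = ρ(x_s^r − x_i^{r+1}) − λ_{s|i}^r; x_s^{r+1} = (1/m)∑_{i=1}^m (x_i^{r+1} − λ_{i|s}^{r+1}/ρ); λ_{s|i}^{r+1} = ρ(x_i^{r+1} − x_s^{r+1}) − λ_{i|s}^{r+1}. Define z_{i|s}^r = x_i^r − γλ_{i|s}^r and z_{s|i}^r = x_s^r − γλ_{s|i}^r. Then the transformed iterates satisfy the FedSplit updates: (i) for every x ∈ ℝ^d, f_i(x) + (ρ/2)‖x − x_s^r + λ_{s|i}^r/ρ‖² = f_i(x) + (1/(2γ))‖x − z_{s|i}^r‖², so x_i^{r+1} minimizes x ↦ f_i(x) + (1/(2γ))‖x − z_{s|i}^r‖²; (ii) z_{i|s}^{r+1} = 2x_i^{r+1} − z_{s|i}^r; (iii) x_s^{r+1} = (1/m)∑_{i=1}^m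 z_{i|s}^{r+1}; (iv) z_{s|i}^{r+1} = 2x_s^{r+1} − z_{i|s}^{r+1}. -/
/-- Section III of the paper: PDMM applied to the centralized consensus problem is
identical to FedSplit under the change of variables `z = x − γλ` with `ρ = 1/γ`. -/
theorem pdmm_equals_fedsplit {d m : ℕ} (hm : 0 < m)
    (f : Fin m → EuclideanSpace ℝ (Fin d) → ℝ)
    (γ ρ : ℝ) (hγ : 0 < γ) (hρ : ρ = 1 / γ)
    (x : Fin m → ℕ → EuclideanSpace ℝ (Fin d))
    (lamis lamsi : Fin m → ℕ → EuclideanSpace ℝ (Fin d))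
    (xs : ℕ → EuclideanSpace ℝ (Fin d))
    -- PDMM server–client updates
    (hmin : ∀ i r, ∀ y,
      f i (x i (r + 1)) + ρ / 2 * ‖x i (r + 1) - xs r + (1 / ρ) • lamsi i r‖ ^ 2
        ≤ f i y + ρ / 2 * ‖y - xs r + (1 / ρ) • lamsi i r‖ ^ 2)
    (hlamis : ∀ i r, lamis i (r + 1) = ρ • (xs r - x i (r + 1)) - lamsi i r)
    (hxs : ∀ r, xs (r + 1) = (1 / (m : ℝ)) • ∑ i, (x i (r + 1) - (1 / ρ) • lamis i (r + 1)))
    (hlamsi : ∀ i r, lamsi i (r + 1) = ρ • (x i (r + 1) - xs (r + 1)) - lamis i (r + 1))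
    -- FedSplit auxiliary variables
    (zis zsi : Fin m → ℕ → EuclideanSpace ℝ (Fin d))
    (hzis : ∀ i r, zis i r = x i r - γ • lamis i r)
    (hzsi : ∀ i r, zsi i r = xs r - γ • lamsi i r) :
    -- (i) the objectives coincide and x i (r+1) minimizes the FedSplit objective
    (∀ i r (y : EuclideanSpace ℝ (Fin d)),
        f i y + ρ / 2 * ‖y - xs r + (1 / ρ) • lamsi i r‖ ^ 2
          = f i y + 1 / (2 * γ) * ‖y - zsi i r‖ ^ 2) ∧
    (∀ i r (y : EuclideanSpace ℝ (Fin d)),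
        f i (x i (r + 1)) + 1 / (2 * γ) * ‖x i (r + 1) - zsi i r‖ ^ 2
          ≤ f i y + 1 / (2 * γ) * ‖y - zsi i r‖ ^ 2) ∧
    -- (ii)
    (∀ i r, zis i (r + 1) = (2 : ℝ) • x i (r + 1) - zsi i r) ∧
    -- (iii)
    (∀ r, xs (r + 1) = (1 / (m : ℝ)) • ∑ i, zis i (r + 1)) ∧
    -- (iv)
    (∀ i r, zsi i (r + 1) = (2 : ℝ) • xs (r + 1) - zis i (r + 1)) := by
  have hγ0 : γ ≠ 0 := ne_of_gt hγ
  have hinv : (1 : ℝ) / ρ = γ := by rw [hρ]; field_simp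
  have hρ2 : ρ / 2 = 1 / (2 * γ) := by rw [hρ]; field_simp
  have hγρ : γ * ρ = 1 := by rw [hρ]; field_simp
  have harg : ∀ i r (y : EuclideanSpace ℝ (Fin d)),
      y - xs r + (1 / ρ) • lamsi i r = y - zsi i r := by
    intro i r y
    rw [hinv, hzsi]
    abel
  refine ⟨fun i r y => by rw [harg, hρ2], fun i r y => ?_, fun i r => ?_, fun r => ?_,
    fun i r => ?_⟩
  · have := hmin i r y
    rwa [harg, harg, hρ2] at this
  · rw [hzis, hlamis, hzsi]
    simp only [smul_sub, smul_smul, hγρ, one_smul, two_smul]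
    abel
  · rw [hxs r]
    congr 1
    refine Finset.sum_congr rfl fun i _ => ?_
    rw [hzis, hinv]
  · rw [hzsi, hlamsi, hzis]
    simp only [smul_sub, smul_smul, hγρ, one_smul, two_smul]
    abel
end

section
/- Let f_i : ℝ^d → ℝ (i = 1,…,m) be differentiable, let η > 0, ρ > 0 with γ = 1/ρ, and let x_s^r ∈ ℝ^d, λ_{s|i}^r ∈ ℝ^d with ∑_{i=1}^m λ_{s|i}^r = 0. Set z_{s|i}^r = x_s^r − λ_{s|i}^r/ρ and define, for each i, one Inexact-FedSplit gradient step started from x_s^r: x_i^{r,1} = x_s^r − η[∇f_i(x_s^r) + (1/γ)(x_s^r − z_{s|i}^r)] = x_s^r − η[∇f_i(x_s^r) + λ_{s|i}^r]; then z_{i|s}^{r+1} = 2x_i^{r,1} − z_{s|i}^r and x_s^{r+1} = (1/m)∑_{i=1}^m z_{i|s}^{r+1}. Then x_s^{r+1} = x_s^r − 2η·(1/m)∑_{i=1}^m ∇f_i(x_s^r). -/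
/-- Remark 2 of the paper: the variant of Inexact FedSplit initialized at the server
estimate, with K = 1 gradient step, reduces to vanilla gradient descent with step
size 2η. -/
theorem inexact_fedsplit_variant_K1 {d m : ℕ} (hm : 0 < m)
    (f : Fin m → EuclideanSpace ℝ (Fin d) → ℝ)
    (f' : Fin m → EuclideanSpace ℝ (Fin d) → EuclideanSpace ℝ (Fin d))
    (hdiff : ∀ i x, HasGradientAt (f i) (f' i x) x)
    (η ρ γ : ℝ) (hη : 0 < η) (hρ : 0 < ρ) (hγ : γ = 1 / ρ)
    (xsr : EuclideanSpace ℝ (Fin d)) (lamsi : Fin m → EuclideanSpace ℝ (Fin d))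
    (hsum : ∑ i, lamsi i = 0)
    (zsi : Fin m → EuclideanSpace ℝ (Fin d))
    (hzsi : ∀ i, zsi i = xsr - (1 / ρ) • lamsi i)
    (xi1 zis1 : Fin m → EuclideanSpace ℝ (Fin d)) (xsr1 : EuclideanSpace ℝ (Fin d))
    (hxi1 : ∀ i, xi1 i = xsr - η • (f' i xsr + (1 / γ) • (xsr - zsi i)))
    (hzis1 : ∀ i, zis1 i = (2 : ℝ) • xi1 i - zsi i)
    (hxsr1 : xsr1 = (1 / (m : ℝ)) • ∑ i, zis1 i) :
    (∀ i, xi1 i = xsr - η • (f' i xsr + lamsi i)) ∧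
      xsr1 = xsr - (2 * η) • ((1 / (m : ℝ)) • ∑ i, f' i xsr) := by
  have hρ' : ρ ≠ 0 := hρ.ne'
  have hγρ : (1 / γ : ℝ) = ρ := by rw [hγ]; field_simp
  have h1 : ∀ i, xi1 i = xsr - η • (f' i xsr + lamsi i) := by
    intro i
    rw [hxi1 i, hzsi i, sub_sub_cancel, smul_smul, hγρ, mul_one_div_cancel hρ', one_smul]
  refine ⟨h1, ?_⟩
  have hz : ∀ i, zis1 i = xsr - (2 * η) • f' i xsr + (1 / ρ - 2 * η) • lamsi i := by
    intro i
    rw [hzis1 i, h1 i, hzsi i]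
    module
  have hsumz : ∑ i, zis1 i = (m : ℝ) • xsr - (2 * η) • ∑ i, f' i xsr := by
    simp only [hz, Finset.sum_add_distrib, Finset.sum_sub_distrib, ← Finset.smul_sum, hsum,
      smul_zero, add_zero, Finset.sum_const, Finset.card_univ, Fintype.card_fin, ← Nat.cast_smul_eq_nsmul ℝ]
  have hm' : (m : ℝ) ≠ 0 := Nat.cast_ne_zero.mpr hm.ne'
  rw [hxsr1, hsumz, smul_sub, smul_smul, one_div_mul_cancel hm', one_smul, smul_comm]
end

section
/- Suppose that, at outer iteration r, the GPDMM client iterates x_i^{r,k} (k = 0,…,K) and x̄_i^{r,K} = (1/K)∑_{k=1}^K x_i^{r,k} are generated by the GPDMM inner update x_i^{r,k+1} = x_i^{r,k} − (1/(1/η + ρ))·[∇f_i(x_i^{r,k}) + ρ(x_i^{r,k} − x_s^r) + λ_{s|i}^r] with 1/η ≥ L, and set λ_{i|s}^{r+1} = ρ(x_s^r − x̄_i^{r,K}) − λ_{s|i}^r. Let x* ∈ ℝ^d and λ*_{i|s} = ∇f_i(x*) for each i. Then for every θ ∈ [0,1]: ∑_{i=1}^m (1/K)∑_{k=0}^{K−1}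 ((1/η − θμ)/2)‖x_i^{r,k} − x*‖² ≥ ∑_{i=1}^m [ f_i(x̄_i^{r,K}) − f_i(x*) − (x̄_i^{r,K} − x*)ᵀλ_{i|s}^{r+1} + (1/K)∑_{k=0}^{K−1} ( (1/(2η))‖x* − x_i^{r,k+1}‖² + ((1/η − L)/2)‖x_i^{r,k+1} − x_i^{r,k}‖² + ((1−θ)/(2L))‖ρ(x_s^r − x_i^{r,k+1}) − λ_{s|i}^r − λ*_{i|s} − (1/η)(x_i^{r,k+1} − x_i^{r,k})‖² ) ]. -/
open scoped RealInnerProductSpace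

section aux
variable {F : Type*} [NormedAddCommGroup F] [InnerProductSpace ℝ F]

lemma gpdmm_inner_three (a b c : F) :
    ⟪a - b, a - c⟫ = (‖a - b‖ ^ 2 + ‖a - c‖ ^ 2 - ‖b - c‖ ^ 2) / 2 := by
  have h : ‖b - c‖ ^ 2 = ‖a - c‖ ^ 2 - 2 * ⟪a - c, a - b⟫ + ‖a - b‖ ^ 2 := by
    rw [show b - c = (a - c) - (a - b) by abel]
    exact norm_sub_sq_real _ _
  rw [real_inner_comm]
  linarith

lemma gpdmm_step_ineq_s14 (L μ η ρ θ : ℝ) (hL : 0 < L) (hμ : 0 ≤ μ) (hη : 0 < η)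
    (hθ0 : 0 ≤ θ) (hθ1 : θ ≤ 1)
    (fk fa fs : ℝ) (x a xs xsr lam lamst g : F)
    (hg : g = ρ • (xsr - a) - lam - (1 / η) • (a - x))
    (H1 : fa ≤ fk + ⟪g, a - x⟫ + L / 2 * ‖x - a‖ ^ 2)
    (H2 : fs ≥ fk + ⟪g, xs - x⟫ + μ / 2 * ‖x - xs‖ ^ 2)
    (H3 : fs ≥ fk + ⟪g, xs - x⟫ + 1 / (2 * L) * ‖g - lamst‖ ^ 2) :
    fa - fs - ⟪ρ • (xsr - a) - lam, a - xs⟫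
      + (1 / (2 * η) * ‖xs - a‖ ^ 2 + (1 / η - L) / 2 * ‖a - x‖ ^ 2
        + (1 - θ) / (2 * L) * ‖ρ • (xsr - a) - lam - lamst - (1 / η) • (a - x)‖ ^ 2)
    ≤ (1 / η - θ * μ) / 2 * ‖x - xs‖ ^ 2 := by
  have hGnorm : ρ • (xsr - a) - lam - lamst - (1 / η) • (a - x) = g - lamst := by
    rw [hg]; abel
  rw [hGnorm]
  have hsplit : ⟪g, a - xs⟫ = ⟪ρ • (xsr - a) - lam, a - xs⟫ - (1 / η) * ⟪a - x, a - xs⟫ := by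
    rw [hg, inner_sub_left, real_inner_smul_left]
  have hcomb : ⟪g, a - x⟫ - ⟪g, xs - x⟫ = ⟪g, a - xs⟫ := by
    rw [← inner_sub_right]; congr 1; abel
  have h3 := gpdmm_inner_three a x xs
  have hn1 : ‖xs - a‖ = ‖a - xs‖ := norm_sub_rev _ _
  have hn2 : ‖x - a‖ = ‖a - x‖ := norm_sub_rev _ _
  rw [hn1]
  rw [hn2] at H1
  have c1 := mul_le_mul_of_nonneg_left H2 hθ0
  have c2 := mul_le_mul_of_nonneg_left H3 (by linarith : (0:ℝ) ≤ 1 - θ)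
  have e1 : 1 / (2 * η) = (1 / η) / 2 := by ring
  have e2 : 1 / (2 * L) = (1 / L) / 2 := by ring
  have e3 : (1 - θ) / (2 * L) = (1 - θ) * (1 / L) / 2 := by ring
  rw [e1, e3]
  rw [e2] at c2
  have h3' : 1 / η * ⟪a - x, a - xs⟫
      = 1 / η * ((‖a - x‖ ^ 2 + ‖a - xs‖ ^ 2 - ‖x - xs‖ ^ 2) / 2) := by rw [h3]
  nlinarith [H1, c1, c2, hsplit, hcomb, h3']

end aux

/-- The intermediate inequality (equation (45), step (b)) in the proof of Lemma 2 of
the paper, obtained by summing the one-step inequality of Lemma 1 over the K inner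
steps and all m clients and applying Jensen's inequality. -/
theorem gpdmm_lemma2_intermediate {d m K : ℕ} (hm : 0 < m) (hK : 1 ≤ K)
    (f : Fin m → EuclideanSpace ℝ (Fin d) → ℝ)
    (f' : Fin m → EuclideanSpace ℝ (Fin d) → EuclideanSpace ℝ (Fin d))
    (L μ : ℝ) (hL : 0 < L) (hμ : 0 ≤ μ) (hμL : μ ≤ L)
    (hdiff : ∀ i x, HasGradientAt (f i) (f' i x) x)
    (hdescent : ∀ i x y, f i y ≤ f i x + ⟪f' i x, y - x⟫ + L / 2 * ‖x - y‖ ^ 2)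
    (hcoco : ∀ i x y, f i y ≥ f i x + ⟪f' i x, y - x⟫ + 1 / (2 * L) * ‖f' i x - f' i y‖ ^ 2)
    (hstrong : ∀ i x y, f i y ≥ f i x + ⟪f' i x, y - x⟫ + μ / 2 * ‖x - y‖ ^ 2)
    (η ρ : ℝ) (hη : 0 < η) (hηL : 1 / η ≥ L) (hρ : 0 < ρ)
    -- iterates at outer iteration r
    (xsr : EuclideanSpace ℝ (Fin d))
    (xiR : Fin m → ℕ → EuclideanSpace ℝ (Fin d))
    (xbarR : Fin m → EuclideanSpace ℝ (Fin d))
    (lamsiR lamisR1 : Fin m → EuclideanSpace ℝ (Fin d))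
    (hinnerR : ∀ i, ∀ k < K, xiR i (k + 1) =
      xiR i k - (1 / (1 / η + ρ)) • (f' i (xiR i k) + ρ • (xiR i k - xsr) + lamsiR i))
    (hxbarR : ∀ i, xbarR i = (1 / (K : ℝ)) • ∑ k ∈ Finset.range K, xiR i (k + 1))
    (hlamisR1 : ∀ i, lamisR1 i = ρ • (xsr - xbarR i) - lamsiR i)
    -- reference point and duals
    (xstar : EuclideanSpace ℝ (Fin d)) (lamstar : Fin m → EuclideanSpace ℝ (Fin d))
    (hlamstar : ∀ i, lamstar i = f' i xstar) :
    ∀ θ ∈ Set.Icc (0 : ℝ) 1,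
      ∑ i, (1 / (K : ℝ)) * ∑ k ∈ Finset.range K,
            (1 / η - θ * μ) / 2 * ‖xiR i k - xstar‖ ^ 2
      ≥ ∑ i,
          (f i (xbarR i) - f i xstar - ⟪xbarR i - xstar, lamisR1 i⟫
            + (1 / (K : ℝ)) * ∑ k ∈ Finset.range K,
                (1 / (2 * η) * ‖xstar - xiR i (k + 1)‖ ^ 2
                  + (1 / η - L) / 2 * ‖xiR i (k + 1) - xiR i k‖ ^ 2
                  + (1 - θ) / (2 * L) *
                      ‖ρ • (xsr - xiR i (k + 1)) - lamsiR i - lamstar i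
                        - (1 / η) • (xiR i (k + 1) - xiR i k)‖ ^ 2)) := by
  intro θ hθ
  obtain ⟨hθ0, hθ1⟩ := hθ
  rw [ge_iff_le]
  apply Finset.sum_le_sum
  intro i _
  have hK0 : (0:ℝ) < (K:ℝ) := by exact_mod_cast Nat.lt_of_lt_of_le Nat.zero_lt_one hK
  -- sum of inner iterates
  have hsumA : ∑ k ∈ Finset.range K, xiR i (k + 1) = (K:ℝ) • xbarR i := by
    rw [hxbarR i, smul_smul, mul_one_div, div_self hK0.ne', one_smul]
  -- the gradient identity from the inner update
  have hG : ∀ k, k < K → f' i (xiR i k)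
      = ρ • (xsr - xiR i (k + 1)) - lamsiR i - (1 / η) • (xiR i (k + 1) - xiR i k) := by
    intro k hk
    have h := hinnerR i k hk
    have hs : (1 / η + ρ) ≠ 0 := by positivity
    have h2 : xiR i k - xiR i (k + 1)
        = (1 / (1 / η + ρ)) • (f' i (xiR i k) + ρ • (xiR i k - xsr) + lamsiR i) := by
      rw [h]; abel
    have h3 : (1 / η + ρ) • (xiR i k - xiR i (k + 1))
        = f' i (xiR i k) + ρ • (xiR i k - xsr) + lamsiR i := by
      rw [h2, smul_smul, mul_one_div, div_self hs, one_smul]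
    have h4 : f' i (xiR i k) = (1 / η + ρ) • (xiR i k - xiR i (k + 1))
        - ρ • (xiR i k - xsr) - lamsiR i := by
      rw [h3]; abel
    rw [h4]; module
  -- the per-step inequality
  have hstep : ∀ k ∈ Finset.range K,
      f i (xiR i (k + 1)) - f i xstar
        - ⟪ρ • (xsr - xiR i (k + 1)) - lamsiR i, xiR i (k + 1) - xstar⟫
        + (1 / (2 * η) * ‖xstar - xiR i (k + 1)‖ ^ 2
          + (1 / η - L) / 2 * ‖xiR i (k + 1) - xiR i k‖ ^ 2
          + (1 - θ) / (2 * L) *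
              ‖ρ • (xsr - xiR i (k + 1)) - lamsiR i - lamstar i
                - (1 / η) • (xiR i (k + 1) - xiR i k)‖ ^ 2)
      ≤ (1 / η - θ * μ) / 2 * ‖xiR i k - xstar‖ ^ 2 := by
    intro k hk
    rw [Finset.mem_range] at hk
    have hg := hG k hk
    have H1 := hdescent i (xiR i k) (xiR i (k + 1))
    have H2 := hstrong i (xiR i k) xstar
    have H3 := hcoco i (xiR i k) xstar
    rw [hg] at H1 H2 H3
    rw [← hlamstar i] at H3
    exact gpdmm_step_ineq_s14 L μ η ρ θ hL hμ hη hθ0 hθ1 _ _ _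
      (xiR i k) (xiR i (k + 1)) xstar xsr (lamsiR i) (lamstar i) _ rfl H1 H2 H3
  have hstepsum := Finset.sum_le_sum hstep
  -- Jensen (subgradient at the average): K * f(x̄) ≤ ∑ f(x_{k+1})
  have hD : (K:ℝ) * f i (xbarR i) ≤ ∑ k ∈ Finset.range K, f i (xiR i (k + 1)) := by
    have hsub : ∀ k ∈ Finset.range K,
        f i (xbarR i) + ⟪f' i (xbarR i), xiR i (k + 1) - xbarR i⟫ ≤ f i (xiR i (k + 1)) := by
      intro k _
      have h := hstrong i (xbarR i) (xiR i (k + 1))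
      nlinarith [mul_nonneg hμ (sq_nonneg ‖xbarR i - xiR i (k + 1)‖)]
    have := Finset.sum_le_sum hsub
    have heq : ∑ k ∈ Finset.range K,
        (f i (xbarR i) + ⟪f' i (xbarR i), xiR i (k + 1) - xbarR i⟫)
        = (K:ℝ) * f i (xbarR i) := by
      rw [Finset.sum_add_distrib, Finset.sum_const, Finset.card_range, ← inner_sum,
        Finset.sum_sub_distrib, hsumA, Finset.sum_const, Finset.card_range,
        Nat.cast_smul_eq_nsmul, sub_self, inner_zero_right, add_zero, nsmul_eq_mul]
    linarith [this, heq.ge, heq.le]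
  -- cross-term bound
  have hE : ∑ k ∈ Finset.range K,
      ⟪ρ • (xsr - xiR i (k + 1)) - lamsiR i, xiR i (k + 1) - xstar⟫
      ≤ (K:ℝ) * ⟪lamisR1 i, xbarR i - xstar⟫ := by
    have hP : ∀ k, ρ • (xsr - xiR i (k + 1)) - lamsiR i
        = lamisR1 i - ρ • (xiR i (k + 1) - xbarR i) := by
      intro k; rw [hlamisR1 i]; module
    have hterm : ∀ k, ⟪ρ • (xsr - xiR i (k + 1)) - lamsiR i, xiR i (k + 1) - xstar⟫
        = ⟪lamisR1 i, xiR i (k + 1) - xstar⟫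
          - ρ * ⟪xiR i (k + 1) - xbarR i, xiR i (k + 1) - xstar⟫ := by
      intro k; rw [hP k, inner_sub_left, real_inner_smul_left]
    have hsum0 : ∑ k ∈ Finset.range K, (xiR i (k + 1) - xbarR i) = 0 := by
      rw [Finset.sum_sub_distrib, hsumA, Finset.sum_const, Finset.card_range,
        Nat.cast_smul_eq_nsmul, sub_self]
    have hE1 : ∑ k ∈ Finset.range K, ⟪lamisR1 i, xiR i (k + 1) - xstar⟫
        = (K:ℝ) * ⟪lamisR1 i, xbarR i - xstar⟫ := by
      rw [← inner_sum, Finset.sum_sub_distrib, hsumA, Finset.sum_const, Finset.card_range,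
        ← Nat.cast_smul_eq_nsmul ℝ K xstar, ← smul_sub, real_inner_smul_right]
    have hE2 : 0 ≤ ∑ k ∈ Finset.range K,
        ⟪xiR i (k + 1) - xbarR i, xiR i (k + 1) - xstar⟫ := by
      have hdec : ∀ k ∈ Finset.range K, ⟪xiR i (k + 1) - xbarR i, xiR i (k + 1) - xstar⟫
          = ‖xiR i (k + 1) - xbarR i‖ ^ 2
            + ⟪xiR i (k + 1) - xbarR i, xbarR i - xstar⟫ := by
        intro k _
        rw [show xiR i (k + 1) - xstar
            = (xiR i (k + 1) - xbarR i) + (xbarR i - xstar) by abel, inner_add_right,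
          real_inner_self_eq_norm_sq]
      rw [Finset.sum_congr rfl hdec, Finset.sum_add_distrib, ← sum_inner, hsum0,
        inner_zero_left, add_zero]
      positivity
    calc ∑ k ∈ Finset.range K,
          ⟪ρ • (xsr - xiR i (k + 1)) - lamsiR i, xiR i (k + 1) - xstar⟫
        = ∑ k ∈ Finset.range K, (⟪lamisR1 i, xiR i (k + 1) - xstar⟫
            - ρ * ⟪xiR i (k + 1) - xbarR i, xiR i (k + 1) - xstar⟫) := by
          exact Finset.sum_congr rfl fun k _ => hterm k
      _ = (K:ℝ) * ⟪lamisR1 i, xbarR i - xstar⟫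
            - ρ * ∑ k ∈ Finset.range K,
                ⟪xiR i (k + 1) - xbarR i, xiR i (k + 1) - xstar⟫ := by
          rw [Finset.sum_sub_distrib, hE1, ← Finset.mul_sum]
      _ ≤ (K:ℝ) * ⟪lamisR1 i, xbarR i - xstar⟫ := by nlinarith [mul_nonneg hρ.le hE2]
  -- split the summed per-step inequality
  rw [show (∑ k ∈ Finset.range K,
      (f i (xiR i (k + 1)) - f i xstar
        - ⟪ρ • (xsr - xiR i (k + 1)) - lamsiR i, xiR i (k + 1) - xstar⟫
        + (1 / (2 * η) * ‖xstar - xiR i (k + 1)‖ ^ 2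
          + (1 / η - L) / 2 * ‖xiR i (k + 1) - xiR i k‖ ^ 2
          + (1 - θ) / (2 * L) *
              ‖ρ • (xsr - xiR i (k + 1)) - lamsiR i - lamstar i
                - (1 / η) • (xiR i (k + 1) - xiR i k)‖ ^ 2)))
      = (∑ k ∈ Finset.range K, f i (xiR i (k + 1))) - (K:ℝ) * f i xstar
        - (∑ k ∈ Finset.range K,
            ⟪ρ • (xsr - xiR i (k + 1)) - lamsiR i, xiR i (k + 1) - xstar⟫)
        + ∑ k ∈ Finset.range K,
            (1 / (2 * η) * ‖xstar - xiR i (k + 1)‖ ^ 2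
              + (1 / η - L) / 2 * ‖xiR i (k + 1) - xiR i k‖ ^ 2
              + (1 - θ) / (2 * L) *
                  ‖ρ • (xsr - xiR i (k + 1)) - lamsiR i - lamstar i
                    - (1 / η) • (xiR i (k + 1) - xiR i k)‖ ^ 2) by
    rw [Finset.sum_add_distrib, Finset.sum_sub_distrib, Finset.sum_sub_distrib,
      Finset.sum_const, Finset.card_range, nsmul_eq_mul]] at hstepsum
  have hcommi := real_inner_comm (xbarR i - xstar) (lamisR1 i)
  set Sq := ∑ k ∈ Finset.range K,
      (1 / (2 * η) * ‖xstar - xiR i (k + 1)‖ ^ 2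
        + (1 / η - L) / 2 * ‖xiR i (k + 1) - xiR i k‖ ^ 2
        + (1 - θ) / (2 * L) *
            ‖ρ • (xsr - xiR i (k + 1)) - lamsiR i - lamstar i
              - (1 / η) • (xiR i (k + 1) - xiR i k)‖ ^ 2) with hSq
  set Sl := ∑ k ∈ Finset.range K, (1 / η - θ * μ) / 2 * ‖xiR i k - xstar‖ ^ 2 with hSl
  have key : (K:ℝ) * (f i (xbarR i) - f i xstar - ⟪xbarR i - xstar, lamisR1 i⟫) + Sq ≤ Sl := by
    rw [← hcommi]; linarith [hstepsum, hD, hE]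
  have hfin : (1 / (K:ℝ)) * ((K:ℝ)
        * (f i (xbarR i) - f i xstar - ⟪xbarR i - xstar, lamisR1 i⟫) + Sq)
      = f i (xbarR i) - f i xstar - ⟪xbarR i - xstar, lamisR1 i⟫ + 1 / (K:ℝ) * Sq := by
    field_simp
  calc f i (xbarR i) - f i xstar - ⟪xbarR i - xstar, lamisR1 i⟫ + 1 / (K:ℝ) * Sq
      = (1 / (K:ℝ)) * ((K:ℝ)
          * (f i (xbarR i) - f i xstar - ⟪xbarR i - xstar, lamisR1 i⟫) + Sq) := hfin.symm
    _ ≤ (1 / (K:ℝ)) * Sl := by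
        apply mul_le_mul_of_nonneg_left key (by positivity)
end
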